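/- arXiv:2002.11182 — 5 statements merged into one kernel-verified Lean document; each statement's English description precedes it below -/
import Mathlib

section
/- Let X ⊂ ℝ^d be a finite set and for each x ∈ X let A_x ∈ ℝ^{d×m} be a matrix. Then the following two conditions are equivalent: (i) for every convex set C ⊆ ℝ^d and all x, y ∈ P(C), x − y lies in the span of the columns of the matrices A_z with z ∈ P(C); (ii) for every pair x, y of neighboring Pareto optimal actions, x − y lies in the span of the columns of the matrices A_z with z ∈ N_{xy}. -/
open Matrix Finset

/-- The cell of an action `x`: the set of parameters `θ` for which `x` is optimal in `X`. -/
def cellOf (d : ℕ) (X : Finset (Fin d → ℝ)) (x : Fin d → ℝ) : Set (Fin d → ℝ) :=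
  {θ | ∀ y ∈ X, y ⬝ᵥ θ ≤ x ⬝ᵥ θ}

/-- An action is Pareto optimal if it is an extreme point of the convex hull of `X`. -/
def paretoOpt (d : ℕ) (X : Finset (Fin d → ℝ)) (x : Fin d → ℝ) : Prop :=
  x ∈ Set.extremePoints ℝ (convexHull ℝ (X : Set (Fin d → ℝ)))

/-- The set of plausible maximizers for a set of parameters `C`. -/
def plausibleSet (d : ℕ) (X : Finset (Fin d → ℝ)) (C : Set (Fin d → ℝ)) :
    Set (Fin d → ℝ) :=
  {x | x ∈ X ∧ ∃ θ ∈ C, θ ∈ cellOf d X x}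

/-- Two Pareto optimal actions are neighbors if the span of the intersection of their cells
has dimension `d - 1`. -/
def neighborActs (d : ℕ) (X : Finset (Fin d → ℝ)) (x y : Fin d → ℝ) : Prop :=
  paretoOpt d X x ∧ paretoOpt d X y ∧
    Module.finrank ℝ (Submodule.span ℝ (cellOf d X x ∩ cellOf d X y)) = d - 1

namespace Stmt15

/-- positive coefficients avoiding finitely many nonzero linear conditions -/
lemma exists_coeffs {n : ℕ} (G : Set (Fin n → ℝ)) (hG : G.Finite) (h0 : ∀ g ∈ G, g ≠ 0) :
    ∃ c : Fin n → ℝ, (∀ i, 0 < c i) ∧ ∀ g ∈ G, g ⬝ᵥ c ≠ 0 := by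
  classical
  set p : (Fin n → ℝ) → Polynomial ℝ :=
    fun g => ∑ i : Fin n, Polynomial.C (g i) * Polynomial.X ^ ((i : ℕ) + 1) with hp
  have hpe : ∀ (g : Fin n → ℝ) (t : ℝ), (p g).eval t = ∑ i : Fin n, g i * t ^ ((i : ℕ) + 1) := by
    intro g t
    rw [hp]
    simp [Polynomial.eval_finset_sum]
  have hpne : ∀ g ∈ G, p g ≠ 0 := by
    intro g hg hzero
    obtain ⟨i, hi⟩ := Function.ne_iff.mp (h0 g hg)
    have hc : (p g).coeff ((i : ℕ) + 1) = g i := by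
      rw [hp]
      simp only [Polynomial.finset_sum_coeff, Polynomial.coeff_C_mul, Polynomial.coeff_X_pow]
      rw [Finset.sum_eq_single i]
      · simp
      · intro j _ hj
        have hne : ¬ ((i : ℕ) + 1 = (j : ℕ) + 1) := by
          simp only [add_left_inj]
          exact fun h => hj (Fin.ext h.symm)
        simp [hne]
        intro h; exact absurd (Fin.ext h).symm hj
      · simp
    rw [hzero] at hc
    simp at hc
    exact hi hc.symm
  have hbad : (⋃ g ∈ G, {t : ℝ | (p g).IsRoot t}).Finite :=
    hG.biUnion fun g hg => Polynomial.finite_setOf_isRoot (hpne g hg)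
  have hinf : ((Set.Ioi (0:ℝ)) \ (⋃ g ∈ G, {t : ℝ | (p g).IsRoot t})).Infinite :=
    (Set.Ioi_infinite 0).diff hbad
  obtain ⟨t, ht⟩ := hinf.nonempty
  have ht0 : (0:ℝ) < t := ht.1
  refine ⟨fun i => t ^ ((i : ℕ) + 1), fun i => pow_pos ht0 _, ?_⟩
  intro g hg hdot
  apply ht.2
  refine Set.mem_biUnion hg ?_
  show (p g).IsRoot t
  rw [Polynomial.IsRoot, hpe]
  exact hdot

lemma avoid {d : ℕ} (P : Set ((Fin d → ℝ) × ℝ)) (hP : P.Finite) (hP0 : ∀ p ∈ P, p.1 ≠ 0)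
    (R : ℝ) (hR : 0 < R) :
    ∃ ζ : Fin d → ℝ, ‖ζ‖ < R ∧ ∀ p ∈ P, p.1 ⬝ᵥ ζ ≠ p.2 := by
  obtain ⟨w, -, hw⟩ := exists_coeffs (Prod.fst '' P) (hP.image _)
    (by rintro g ⟨q, hq, rfl⟩; exact hP0 q hq)
  have hwP : ∀ q ∈ P, q.1 ⬝ᵥ w ≠ 0 := fun q hq => hw _ ⟨q, hq, rfl⟩
  have hRw : 0 < R / (‖w‖ + 1) := by positivity
  have hinf : ((Set.Ioo (0:ℝ) (R / (‖w‖ + 1))) \ ((fun q => q.2 / (q.1 ⬝ᵥ w)) '' P)).Infinite :=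
    (Set.Ioo_infinite hRw).diff (hP.image _)
  obtain ⟨t, ⟨ht1, ht2⟩, htP⟩ := hinf.nonempty
  refine ⟨t • w, ?_, ?_⟩
  · rw [norm_smul, Real.norm_eq_abs, abs_of_pos ht1]
    calc t * ‖w‖ ≤ t * (‖w‖ + 1) := by nlinarith [norm_nonneg w]
    _ < (R / (‖w‖ + 1)) * (‖w‖ + 1) := by
        apply mul_lt_mul_of_pos_right ht2; positivity
    _ = R := by field_simp
  · intro q hq h
    apply htP
    refine ⟨q, hq, ?_⟩
    have : q.1 ⬝ᵥ (t • w) = t * (q.1 ⬝ᵥ w) := by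
      simp only [dotProduct, Finset.mul_sum, Pi.smul_apply, smul_eq_mul]
      exact Finset.sum_congr rfl fun i _ => by ring
    rw [this] at h
    show q.2 / (q.1 ⬝ᵥ w) = t
    rw [div_eq_iff (hwP q hq), ← h]

lemma exists_pos_mul_lt {α : Type*} (s : Finset α) (f g : α → ℝ) (hg : ∀ a ∈ s, 0 < g a) :
    ∃ δ : ℝ, 0 < δ ∧ ∀ a ∈ s, δ * f a < g a := by
  classical
  induction s using Finset.induction with
  | empty => exact ⟨1, one_pos, by simp⟩
  | insert a s h ih =>
    obtain ⟨δ, hδ, hδs⟩ := ih (fun b hb => hg b (Finset.mem_insert_of_mem hb))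
    have hga : 0 < g a := hg a (Finset.mem_insert_self a s)
    refine ⟨min δ (g a / (|f a| + 1)), by positivity, ?_⟩
    intro b hb
    rcases Finset.mem_insert.mp hb with rfl | hb
    · have h1 : min δ (g b / (|f b| + 1)) ≤ g b / (|f b| + 1) := min_le_right _ _
      have h2 : (0:ℝ) < min δ (g b / (|f b| + 1)) := by positivity
      have h3 : f b ≤ |f b| := le_abs_self _
      have h4 : (g b / (|f b| + 1)) * (|f b| + 1) = g b := by field_simp
      nlinarith [abs_nonneg (f b)]
    · have h1 : min δ (g a / (|f a| + 1)) ≤ δ := min_le_left _ _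
      have h2 : (0:ℝ) < min δ (g a / (|f a| + 1)) := by positivity
      rcases le_or_gt (f b) 0 with hf | hf
      · nlinarith [hg b (Finset.mem_insert_of_mem hb)]
      · nlinarith [hδs b hb]

lemma abs_dot_le {d : ℕ} (a γ : Fin d → ℝ) : |a ⬝ᵥ γ| ≤ (∑ i, |a i|) * ‖γ‖ := by
  calc |∑ i, a i * γ i| ≤ ∑ i, |a i * γ i| := Finset.abs_sum_le_sum_abs _ _
  _ ≤ ∑ i, |a i| * ‖γ‖ := Finset.sum_le_sum (fun i _ => by
      rw [abs_mul]
      exact mul_le_mul_of_nonneg_left (by rw [← Real.norm_eq_abs]; exact norm_le_pi_norm γ i)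
        (abs_nonneg _))
  _ = _ := by rw [← Finset.sum_mul]

variable {d : ℕ} {X : Finset (Fin d → ℝ)}

lemma exists_cell (hX : X.Nonempty) (θ : Fin d → ℝ) : ∃ z ∈ X, θ ∈ cellOf d X z := by
  obtain ⟨z, hz, hmax⟩ := X.exists_max_image (fun y => y ⬝ᵥ θ) hX
  exact ⟨z, hz, hmax⟩

lemma cell_val_eq {z w θ : Fin d → ℝ} (hz : z ∈ X) (hw : w ∈ X)
    (h1 : θ ∈ cellOf d X z) (h2 : θ ∈ cellOf d X w) : z ⬝ᵥ θ = w ⬝ᵥ θ :=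
  le_antisymm (h2 z hz) (h1 w hw)

lemma cell_zero {x : Fin d → ℝ} : (0 : Fin d → ℝ) ∈ cellOf d X x := by
  intro y _
  simp

lemma cell_add {x θ₁ θ₂ : Fin d → ℝ} (h1 : θ₁ ∈ cellOf d X x) (h2 : θ₂ ∈ cellOf d X x) :
    θ₁ + θ₂ ∈ cellOf d X x := by
  intro y hy
  have := add_le_add (h1 y hy) (h2 y hy)
  simpa [dotProduct_add] using this

lemma cell_smul {x θ : Fin d → ℝ} {c : ℝ} (hc : 0 ≤ c) (h : θ ∈ cellOf d X x) :
    c • θ ∈ cellOf d X x := by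
  intro y hy
  have := mul_le_mul_of_nonneg_left (h y hy) hc
  simpa [dotProduct_smul, smul_eq_mul] using this

lemma dot_sum_smul {ι : Type*} (s : Finset ι) (a : Fin d → ℝ) (c : ι → ℝ) (v : ι → Fin d → ℝ) :
    a ⬝ᵥ (∑ i ∈ s, c i • v i) = ∑ i ∈ s, c i * (a ⬝ᵥ v i) := by
  classical
  induction s using Finset.induction with
  | empty => simp
  | insert i s h ih =>
    rw [Finset.sum_insert h, Finset.sum_insert h, dotProduct_add, ih, dotProduct_smul]
    simp [smul_eq_mul]

theorem forward {m : ℕ} {A : (Fin d → ℝ) → Matrix (Fin d) (Fin m) ℝ}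
    (hL : ∀ C : Set (Fin d → ℝ), Convex ℝ C →
      ∀ x ∈ plausibleSet d X C, ∀ y ∈ plausibleSet d X C,
        x - y ∈ Submodule.span ℝ
          {c : Fin d → ℝ | ∃ z ∈ plausibleSet d X C, ∃ j : Fin m, c = (A z)ᵀ j})
    {x y : Fin d → ℝ} (hx : x ∈ X) (hy : y ∈ X) :
    x - y ∈ Submodule.span ℝ
        {c : Fin d → ℝ | ∃ z ∈ X,
          (cellOf d X x ∩ cellOf d X y ⊆ cellOf d X z) ∧ ∃ j : Fin m, c = (A z)ᵀ j} := by
  classical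
  set F : Set (Fin d → ℝ) := cellOf d X x ∩ cellOf d X y with hF
  set Xbad : Finset (Fin d → ℝ) := X.filter (fun z => ¬ (F ⊆ cellOf d X z)) with hXbad
  have Hwit : ∀ z ∈ Xbad, ∃ θ ∈ F, (z - x) ⬝ᵥ θ ≠ 0 := by
    intro z hz
    rw [hXbad, Finset.mem_filter] at hz
    obtain ⟨hzX, hns⟩ := hz
    rw [Set.not_subset] at hns
    obtain ⟨θ, hθF, hθn⟩ := hns
    refine ⟨θ, hθF, ?_⟩
    intro heq
    apply hθn
    rw [sub_dotProduct, sub_eq_zero] at heq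
    intro y' hy'
    calc y' ⬝ᵥ θ ≤ x ⬝ᵥ θ := hθF.1 y' hy'
    _ = z ⬝ᵥ θ := heq.symm
  set θw : (Fin d → ℝ) → (Fin d → ℝ) :=
    fun z => if h : z ∈ Xbad then (Hwit z h).choose else 0 with hθw
  have hθwF : ∀ z ∈ Xbad, θw z ∈ F := by
    intro z hz
    rw [hθw]
    simp only [dif_pos hz]
    exact (Hwit z hz).choose_spec.1
  have hθwn : ∀ z ∈ Xbad, (z - x) ⬝ᵥ θw z ≠ 0 := by
    intro z hz
    rw [hθw]
    simp only [dif_pos hz]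
    exact (Hwit z hz).choose_spec.2
  set n := Xbad.card with hn
  set e := Xbad.equivFin with he
  set G : Set (Fin n → ℝ) :=
    (fun z : {w // w ∈ Xbad} => fun i : Fin n => ((z : Fin d → ℝ) - x) ⬝ᵥ θw (e.symm i)) ''
      Set.univ with hG
  have hGfin : G.Finite := Set.Finite.image _ (Set.finite_univ)
  have hGne : ∀ g ∈ G, g ≠ 0 := by
    rintro g ⟨z, -, rfl⟩ hg0
    have := congrFun hg0 (e z)
    simp only [Equiv.symm_apply_apply, Pi.zero_apply] at this
    exact hθwn z z.2 this
  obtain ⟨c, hc0, hcG⟩ := exists_coeffs G hGfin hGne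
  set θ0 : Fin d → ℝ := ∑ i : Fin n, c i • θw (e.symm i) with hθ0
  have hθ0F : θ0 ∈ F := by
    rw [hθ0]
    refine Finset.sum_induction _ (fun v => v ∈ F) (fun a b ha hb => ⟨cell_add ha.1 hb.1, cell_add ha.2 hb.2⟩) ⟨cell_zero, cell_zero⟩ ?_
    intro i _
    have hmem := hθwF _ (e.symm i).2
    exact ⟨cell_smul (le_of_lt (hc0 i)) hmem.1, cell_smul (le_of_lt (hc0 i)) hmem.2⟩
  have key : ∀ z ∈ X, θ0 ∈ cellOf d X z → F ⊆ cellOf d X z := by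
    intro z hzX hzc
    by_contra hns
    have hzbad : z ∈ Xbad := by
      rw [hXbad, Finset.mem_filter]; exact ⟨hzX, hns⟩
    have h1 : (z - x) ⬝ᵥ θ0 = 0 := by
      have := cell_val_eq hzX hx hzc hθ0F.1
      rw [sub_dotProduct, this, sub_self]
    have h2 : (z - x) ⬝ᵥ θ0 =
        (fun i : Fin n => (z - x) ⬝ᵥ θw (e.symm i)) ⬝ᵥ c := by
      rw [hθ0, dot_sum_smul]
      simp only [dotProduct]
      exact Finset.sum_congr rfl fun i _ => by ring
    have h3 : (fun i : Fin n => (z - x) ⬝ᵥ θw (e.symm i)) ⬝ᵥ c ≠ 0 := by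
      apply hcG
      exact ⟨⟨z, hzbad⟩, Set.mem_univ _, rfl⟩
    rw [h2] at h1
    exact h3 h1
  have hxP : x ∈ plausibleSet d X {θ0} := ⟨hx, θ0, rfl, hθ0F.1⟩
  have hyP : y ∈ plausibleSet d X {θ0} := ⟨hy, θ0, rfl, hθ0F.2⟩
  have := hL {θ0} (convex_singleton θ0) x hxP y hyP
  refine Submodule.span_mono ?_ this
  rintro cvec ⟨z, ⟨hzX, θ, hθmem, hθcell⟩, j, rfl⟩
  rcases hθmem with rfl
  exact ⟨z, hzX, key z hzX hθcell, j, rfl⟩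

lemma contDot {φ : ℝ → Fin d → ℝ} (hφ : Continuous φ) (z : Fin d → ℝ) :
    Continuous fun t => z ⬝ᵥ φ t := by
  simp only [dotProduct]
  exact continuous_finset_sum _ fun i _ => continuous_const.mul ((continuous_apply i).comp hφ)

lemma chain (hX : X.Nonempty) {φ : ℝ → Fin d → ℝ} (hφ : Continuous φ)
    (W : Submodule ℝ (Fin d → ℝ))
    (hQ : ∀ t ∈ Set.Icc (0:ℝ) 1, ∀ w ∈ X, ∀ w' ∈ X,
      φ t ∈ cellOf d X w → φ t ∈ cellOf d X w' → w - w' ∈ W) :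
    ∀ w0 ∈ X, ∀ w1 ∈ X, φ 0 ∈ cellOf d X w0 → φ 1 ∈ cellOf d X w1 → w0 - w1 ∈ W := by
  classical
  intro w0 hw0 w1 hw1 h0 h1
  set O : ℝ → Set ℝ := fun t0 =>
    ⋂ z ∈ X.filter (fun z => φ t0 ∉ cellOf d X z),
      ⋃ w ∈ X.filter (fun w => φ t0 ∈ cellOf d X w), {t | z ⬝ᵥ φ t < w ⬝ᵥ φ t} with hO
  have hOopen : ∀ t0, IsOpen (O t0) := by
    intro t0
    apply isOpen_biInter_finset
    intro z _
    apply isOpen_biUnion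
    intro w _
    exact isOpen_lt (contDot hφ z) (contDot hφ w)
  have hOself : ∀ t0, t0 ∈ O t0 := by
    intro t0
    rw [hO]
    refine Set.mem_iInter₂.mpr ?_
    intro z hz
    obtain ⟨wm, hwm, hwmc⟩ := exists_cell hX (φ t0)
    refine Set.mem_iUnion₂.mpr ⟨wm, Finset.mem_filter.mpr ⟨hwm, hwmc⟩, ?_⟩
    rw [Finset.mem_filter] at hz
    have hz2 : ¬ ∀ y ∈ X, y ⬝ᵥ φ t0 ≤ z ⬝ᵥ φ t0 := hz.2
    push_neg at hz2
    obtain ⟨y, hyX, hlt⟩ := hz2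
    exact lt_of_lt_of_le hlt (hwmc y hyX)
  have hshrink : ∀ t0 t, t ∈ O t0 → ∀ v ∈ X, φ t ∈ cellOf d X v → φ t0 ∈ cellOf d X v := by
    intro t0 t ht v hv hvc
    by_contra hbad
    have hvb : v ∈ X.filter (fun z => φ t0 ∉ cellOf d X z) := Finset.mem_filter.mpr ⟨hv, hbad⟩
    rw [hO] at ht
    obtain ⟨w, hwmem, hlt⟩ := Set.mem_iUnion₂.mp (Set.mem_iInter₂.mp ht v hvb)
    rw [Finset.mem_filter] at hwmem
    exact absurd (hvc w hwmem.1) (not_le.mpr hlt)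
  set T : ℝ → Prop := fun t => ∀ w ∈ X, φ t ∈ cellOf d X w → w0 - w ∈ W with hT
  set U : Set ℝ := ⋃ (t0 : ℝ) (_ : t0 ∈ Set.Icc (0:ℝ) 1 ∧ T t0), O t0 with hU
  set V : Set ℝ := ⋃ (t0 : ℝ) (_ : t0 ∈ Set.Icc (0:ℝ) 1 ∧ ¬ T t0), O t0 with hV
  have hTr : ∀ t0 r, T t0 → r ∈ O t0 → T r := by
    intro t0 r ht0 hr w hw hwc
    exact ht0 w hw (hshrink t0 r hr w hw hwc)
  have hdisj : Disjoint U V := by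
    rw [Set.disjoint_left]
    intro r hrU hrV
    rw [hU, Set.mem_iUnion] at hrU
    obtain ⟨t0, hmem0⟩ := hrU
    rw [Set.mem_iUnion] at hmem0
    obtain ⟨⟨hI0, hT0⟩, hr0⟩ := hmem0
    rw [hV, Set.mem_iUnion] at hrV
    obtain ⟨t1, hmem1⟩ := hrV
    rw [Set.mem_iUnion] at hmem1
    obtain ⟨⟨hI1, hT1⟩, hr1⟩ := hmem1
    apply hT1
    intro w hw hwc
    obtain ⟨v, hvX, hvc⟩ := exists_cell hX (φ r)
    have hv1 : φ t1 ∈ cellOf d X v := hshrink t1 r hr1 v hvX hvc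
    have h0v : w0 - v ∈ W := hTr t0 r hT0 hr0 v hvX hvc
    have hvw : v - w ∈ W := hQ t1 hI1 v hvX w hw hv1 hwc
    have hsum := W.add_mem h0v hvw
    simpa using hsum
  have hsub : Set.Icc (0:ℝ) 1 ⊆ U ∪ V := by
    intro t htI
    by_cases hTt : T t
    · exact Or.inl (Set.mem_iUnion.mpr ⟨t, Set.mem_iUnion.mpr ⟨⟨htI, hTt⟩, hOself t⟩⟩)
    · exact Or.inr (Set.mem_iUnion.mpr ⟨t, Set.mem_iUnion.mpr ⟨⟨htI, hTt⟩, hOself t⟩⟩)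
  have hI0mem : (0:ℝ) ∈ Set.Icc (0:ℝ) 1 := Set.mem_Icc.mpr ⟨le_refl 0, zero_le_one⟩
  have hI1mem : (1:ℝ) ∈ Set.Icc (0:ℝ) 1 := Set.mem_Icc.mpr ⟨zero_le_one, le_refl 1⟩
  have hT0 : T 0 := fun w hw hwc => hQ 0 hI0mem w0 hw0 w hw h0 hwc
  have hne : (Set.Icc (0:ℝ) 1 ∩ U).Nonempty :=
    ⟨0, hI0mem, Set.mem_iUnion.mpr ⟨0, Set.mem_iUnion.mpr ⟨⟨hI0mem, hT0⟩, hOself 0⟩⟩⟩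
  have hIccU : Set.Icc (0:ℝ) 1 ⊆ U :=
    isPreconnected_Icc.subset_left_of_subset_union
      (isOpen_iUnion fun t0 => isOpen_iUnion fun _ => hOopen t0)
      (isOpen_iUnion fun t0 => isOpen_iUnion fun _ => hOopen t0)
      hdisj hsub hne
  have h1U := hIccU hI1mem
  rw [hU, Set.mem_iUnion] at h1U
  obtain ⟨t0, hmem⟩ := h1U
  rw [Set.mem_iUnion] at hmem
  obtain ⟨⟨hI0', hT0'⟩, hr0⟩ := hmem
  exact hTr t0 1 hT0' hr0 w1 hw1 h1

lemma hull_le {ψ x : Fin d → ℝ} (h : ∀ z ∈ X, z ⬝ᵥ ψ ≤ x ⬝ᵥ ψ) :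
    ∀ a ∈ convexHull ℝ (X : Set (Fin d → ℝ)), a ⬝ᵥ ψ ≤ x ⬝ᵥ ψ := by
  have hcvx : Convex ℝ {a : Fin d → ℝ | a ⬝ᵥ ψ ≤ x ⬝ᵥ ψ} := by
    intro u hu v hv s t hs ht hst
    simp only [Set.mem_setOf_eq] at *
    rw [add_dotProduct, smul_dotProduct, smul_dotProduct, smul_eq_mul, smul_eq_mul]
    have hxx : s * (x ⬝ᵥ ψ) + t * (x ⬝ᵥ ψ) = x ⬝ᵥ ψ := by rw [← add_mul, hst, one_mul]
    nlinarith [mul_le_mul_of_nonneg_left hu hs, mul_le_mul_of_nonneg_left hv ht]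
  exact fun a ha => convexHull_min h hcvx ha

lemma unique_max_eq {ψ x : Fin d → ℝ} (hx : x ∈ X)
    (h : ∀ z ∈ X, z ≠ x → z ⬝ᵥ ψ < x ⬝ᵥ ψ) :
    ∀ a ∈ convexHull ℝ (X : Set (Fin d → ℝ)), a ⬝ᵥ ψ = x ⬝ᵥ ψ → a = x := by
  classical
  intro a ha heq
  obtain ⟨ι, _, w, z, hw0, hw1, hz, hwa⟩ := mem_convexHull_iff_exists_fintype.mp ha
  have hdot : a ⬝ᵥ ψ = ∑ i, w i * (z i ⬝ᵥ ψ) := by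
    rw [← hwa, dotProduct_comm, dot_sum_smul]
    exact Finset.sum_congr rfl fun i _ => by rw [dotProduct_comm]
  have hle : ∀ i, w i * (z i ⬝ᵥ ψ) ≤ w i * (x ⬝ᵥ ψ) := by
    intro i
    apply mul_le_mul_of_nonneg_left _ (hw0 i)
    by_cases hzi : z i = x
    · rw [hzi]
    · exact le_of_lt (h (z i) (hz i) hzi)
  have hkey : ∀ i, w i ≠ 0 → z i = x := by
    intro i hwi
    by_contra hne
    have hstrict : w i * (z i ⬝ᵥ ψ) < w i * (x ⬝ᵥ ψ) :=
      mul_lt_mul_of_pos_left (h (z i) (hz i) hne) (lt_of_le_of_ne (hw0 i) (Ne.symm hwi))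
    have hsum : ∑ j, w j * (z j ⬝ᵥ ψ) < ∑ j, w j * (x ⬝ᵥ ψ) :=
      Finset.sum_lt_sum (fun j _ => hle j) ⟨i, Finset.mem_univ i, hstrict⟩
    rw [← hdot, heq, ← Finset.sum_mul, hw1, one_mul] at hsum
    exact lt_irrefl _ hsum
  calc a = ∑ i, w i • z i := hwa.symm
  _ = ∑ i, w i • x := Finset.sum_congr rfl fun i _ => by
      by_cases hwi : w i = 0
      · rw [hwi, zero_smul, zero_smul]
      · rw [hkey i hwi]
  _ = x := by rw [← Finset.sum_smul, hw1, one_smul]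

lemma exposed_pareto {ψ x : Fin d → ℝ} (hx : x ∈ X)
    (h : ∀ z ∈ X, z ≠ x → z ⬝ᵥ ψ < x ⬝ᵥ ψ) : paretoOpt d X x := by
  rw [paretoOpt, mem_extremePoints]
  refine ⟨subset_convexHull ℝ _ hx, ?_⟩
  intro x1 hx1 x2 hx2 hseg
  obtain ⟨s, t, hs, ht, hst, hsum⟩ := hseg
  have hle : ∀ z ∈ X, z ⬝ᵥ ψ ≤ x ⬝ᵥ ψ := by
    intro z hz
    by_cases hzx : z = x
    · rw [hzx]
    · exact le_of_lt (h z hz hzx)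
  have h1 := hull_le hle x1 hx1
  have h2 := hull_le hle x2 hx2
  have hxv : s * (x1 ⬝ᵥ ψ) + t * (x2 ⬝ᵥ ψ) = x ⬝ᵥ ψ := by
    rw [← hsum, add_dotProduct, smul_dotProduct, smul_dotProduct, smul_eq_mul, smul_eq_mul]
  have hxx : s * (x ⬝ᵥ ψ) + t * (x ⬝ᵥ ψ) = x ⬝ᵥ ψ := by rw [← add_mul, hst, one_mul]
  have he1 : x1 ⬝ᵥ ψ = x ⬝ᵥ ψ := by
    by_contra hne
    have hlt : x1 ⬝ᵥ ψ < x ⬝ᵥ ψ := lt_of_le_of_ne h1 hne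
    nlinarith [mul_lt_mul_of_pos_left hlt hs, mul_le_mul_of_nonneg_left h2 (le_of_lt ht)]
  have he2 : x2 ⬝ᵥ ψ = x ⬝ᵥ ψ := by
    by_contra hne
    have hlt : x2 ⬝ᵥ ψ < x ⬝ᵥ ψ := lt_of_le_of_ne h2 hne
    nlinarith [mul_lt_mul_of_pos_left hlt ht, mul_le_mul_of_nonneg_left h1 (le_of_lt hs)]
  exact ⟨unique_max_eq hx h x1 hx1 he1, unique_max_eq hx h x2 hx2 he2⟩

lemma extreme_not_in_hull_diff {s : Set (Fin d → ℝ)} {p : Fin d → ℝ}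
    (hp : p ∈ Set.extremePoints ℝ (convexHull ℝ s)) :
    p ∉ convexHull ℝ (s \ {p}) := by
  classical
  intro hmem
  obtain ⟨ι, _, w, z, hw0, hw1, hz, hwp⟩ := mem_convexHull_iff_exists_fintype.mp hmem
  obtain ⟨i0, -, hwi0⟩ := Finset.exists_ne_zero_of_sum_ne_zero (by rw [hw1]; exact one_ne_zero)
  have hpos : 0 < w i0 := lt_of_le_of_ne (hw0 i0) (Ne.symm hwi0)
  have hle1 : w i0 ≤ 1 := by
    rw [← hw1]
    exact Finset.single_le_sum (fun i _ => hw0 i) (Finset.mem_univ i0)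
  have hsplit : w i0 • z i0 + ∑ i ∈ Finset.univ.erase i0, w i • z i = p := by
    rw [← hwp]
    exact Finset.add_sum_erase _ (fun i => w i • z i) (Finset.mem_univ i0)
  have hsplitw : w i0 + ∑ i ∈ Finset.univ.erase i0, w i = 1 := by
    rw [← hw1]
    exact Finset.add_sum_erase _ w (Finset.mem_univ i0)
  rcases eq_or_lt_of_le hle1 with heq1 | hlt1
  · have hz0 : ∑ i ∈ Finset.univ.erase i0, w i = 0 := by rw [← heq1] at hsplitw; linarith
    have hallz : ∀ i ∈ Finset.univ.erase i0, w i = 0 :=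
      (Finset.sum_eq_zero_iff_of_nonneg (fun i _ => hw0 i)).mp hz0
    have hzz : ∑ i ∈ Finset.univ.erase i0, w i • z i = 0 :=
      Finset.sum_eq_zero (fun i hi => by rw [hallz i hi, zero_smul])
    have : z i0 = p := by
      rw [← hsplit, hzz, add_zero, heq1, one_smul]
    exact (hz i0).2 (by rw [this]; rfl)
  · set r : Fin d → ℝ := (1 - w i0)⁻¹ • ∑ i ∈ Finset.univ.erase i0, w i • z i with hr
    have hsumer : ∑ i ∈ Finset.univ.erase i0, w i = 1 - w i0 := by linarith
    have hrmem : r ∈ convexHull ℝ s := by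
      have := Finset.centerMass_mem_convexHull (Finset.univ.erase i0)
        (fun i _ => hw0 i) (by rw [hsumer]; linarith)
        (fun i _ => (hz i).1)
      rwa [Finset.centerMass, hsumer] at this
    have hdecomp : w i0 • z i0 + (1 - w i0) • r = p := by
      rw [hr, smul_smul, mul_inv_cancel₀ (by linarith), one_smul]
      exact hsplit
    have hseg : p ∈ openSegment ℝ (z i0) r :=
      ⟨w i0, 1 - w i0, hpos, by linarith, by ring, hdecomp⟩
    have := (mem_extremePoints.mp hp).2 (z i0)
      (subset_convexHull ℝ _ (hz i0).1) r hrmem hseg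
    exact (hz i0).2 (by rw [this.1]; rfl)

lemma exists_sep_vector {s : Set (Fin d → ℝ)} (hs : Convex ℝ s) (hc : IsClosed s)
    {p : Fin d → ℝ} (hp : p ∉ s) :
    ∃ η : Fin d → ℝ, ∀ a ∈ s, a ⬝ᵥ η < p ⬝ᵥ η := by
  obtain ⟨f, u, hfa, hfp⟩ := geometric_hahn_banach_closed_point hs hc hp
  refine ⟨fun i => f (Pi.single i 1), ?_⟩
  have key : ∀ γ : Fin d → ℝ, γ ⬝ᵥ (fun i => f (Pi.single i 1)) = f γ := by
    intro γ
    have hrep : γ = ∑ i : Fin d, (γ i) • (Pi.single i 1 : Fin d → ℝ) := by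
      ext j
      simp [Pi.single_apply]
    conv_rhs => rw [hrep]
    rw [map_sum]
    simp only [_root_.map_smul, smul_eq_mul, dotProduct]
  intro a ha
  rw [key, key]
  exact lt_trans (hfa a ha) hfp

lemma exists_exposing {S : Finset (Fin d → ℝ)} {p : Fin d → ℝ}
    (hp : p ∈ Set.extremePoints ℝ (convexHull ℝ (S : Set (Fin d → ℝ)))) :
    ∃ η, ∀ z ∈ S, z ≠ p → z ⬝ᵥ η < p ⬝ᵥ η := by
  have hnot := extreme_not_in_hull_diff hp
  have hfin : ((S : Set (Fin d → ℝ)) \ {p}).Finite := S.finite_toSet.diff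
  obtain ⟨η, hη⟩ := exists_sep_vector (convex_convexHull ℝ _)
    (hfin.isCompact_convexHull ℝ).isClosed hnot
  exact ⟨η, fun z hz hne => hη z (subset_convexHull ℝ _ ⟨hz, hne⟩)⟩

lemma not_cell_gap {z ψ : Fin d → ℝ} (hz : ψ ∉ cellOf d X z) :
    ∃ y ∈ X, z ⬝ᵥ ψ < y ⬝ᵥ ψ := by
  rw [cellOf, Set.mem_setOf_eq] at hz
  push_neg at hz
  exact hz

lemma exposed_perturb {ψ e v : Fin d → ℝ} (hv : v ∈ X) (hvc : ψ ∈ cellOf d X v)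
    (hstr : ∀ z ∈ X, ψ ∈ cellOf d X z → z ≠ v → z ⬝ᵥ e < v ⬝ᵥ e) :
    ∃ δ : ℝ, 0 < δ ∧ ∀ z ∈ X, z ≠ v → z ⬝ᵥ (ψ + δ • e) < v ⬝ᵥ (ψ + δ • e) := by
  classical
  obtain ⟨δ, hδ0, hδ⟩ := exists_pos_mul_lt (X.filter (fun z => ψ ∉ cellOf d X z))
    (fun z => (z - v) ⬝ᵥ e) (fun z => (v - z) ⬝ᵥ ψ) (by
      intro z hzm
      rw [Finset.mem_filter] at hzm
      obtain ⟨y, hy, hlt⟩ := not_cell_gap hzm.2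
      have := hvc y hy
      show (0:ℝ) < (v - z) ⬝ᵥ ψ
      rw [sub_dotProduct]
      linarith)
  refine ⟨δ, hδ0, ?_⟩
  intro z hzX hzne
  have hzexp : z ⬝ᵥ (ψ + δ • e) = z ⬝ᵥ ψ + δ * (z ⬝ᵥ e) := by
    rw [dotProduct_add, dotProduct_smul, smul_eq_mul]
  have hvexp : v ⬝ᵥ (ψ + δ • e) = v ⬝ᵥ ψ + δ * (v ⬝ᵥ e) := by
    rw [dotProduct_add, dotProduct_smul, smul_eq_mul]
  rw [hzexp, hvexp]
  by_cases hzc : ψ ∈ cellOf d X z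
  · have heq : z ⬝ᵥ ψ = v ⬝ᵥ ψ := cell_val_eq hzX hv hzc hvc
    have := mul_lt_mul_of_pos_left (hstr z hzX hzc hzne) hδ0
    linarith
  · have hmem : z ∈ X.filter (fun z => ψ ∉ cellOf d X z) := Finset.mem_filter.mpr ⟨hzX, hzc⟩
    have h2 := hδ z hmem
    simp only [sub_dotProduct] at h2
    have h3 : δ * (z ⬝ᵥ e - v ⬝ᵥ e) = δ * (z ⬝ᵥ e) - δ * (v ⬝ᵥ e) := by ring
    rw [h3] at h2
    linarith

lemma qline {m : ℕ} {A : (Fin d → ℝ) → Matrix (Fin d) (Fin m) ℝ}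
    (hL : ∀ x ∈ X, ∀ y ∈ X, neighborActs d X x y →
      x - y ∈ Submodule.span ℝ
        {c : Fin d → ℝ | ∃ z ∈ X,
          (cellOf d X x ∩ cellOf d X y ⊆ cellOf d X z) ∧ ∃ j : Fin m, c = (A z)ᵀ j})
    (θ ψ : Fin d → ℝ)
    (hψθ : ∀ z ∈ X, ψ ∈ cellOf d X z → θ ∈ cellOf d X z)
    (hcol : ∀ w ∈ X, ∀ w' ∈ X, ∀ w'' ∈ X,
      ψ ∈ cellOf d X w → ψ ∈ cellOf d X w' → ψ ∈ cellOf d X w'' →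
      ∃ α β : ℝ, (α ≠ 0 ∨ β ≠ 0) ∧ α • (w' - w) + β • (w'' - w) = 0)
    {w w' : Fin d → ℝ} (hw : w ∈ X) (hw' : w' ∈ X)
    (hcw : ψ ∈ cellOf d X w) (hcw' : ψ ∈ cellOf d X w') :
    w - w' ∈ Submodule.span ℝ
      {c : Fin d → ℝ | ∃ z ∈ X, θ ∈ cellOf d X z ∧ ∃ j : Fin m, c = (A z)ᵀ j} := by
  classical
  set W := Submodule.span ℝ
      {c : Fin d → ℝ | ∃ z ∈ X, θ ∈ cellOf d X z ∧ ∃ j : Fin m, c = (A z)ᵀ j} with hWdef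
  by_cases hww : w = w'
  · rw [hww, sub_self]; exact W.zero_mem
  set u : Fin d → ℝ := w' - w with hu
  have hune : u ≠ 0 := sub_ne_zero.mpr (Ne.symm hww)
  have huu0 : (0:ℝ) ≤ u ⬝ᵥ u := Finset.sum_nonneg fun i _ => mul_self_nonneg (u i)
  have huu : (0:ℝ) < u ⬝ᵥ u := by
    rcases lt_or_eq_of_le huu0 with h | h
    · exact h
    · exact absurd (dotProduct_self_eq_zero.mp h.symm) hune
  set S := X.filter (fun z => ψ ∈ cellOf d X z) with hS
  have hwS : w ∈ S := Finset.mem_filter.mpr ⟨hw, hcw⟩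
  have hw'S : w' ∈ S := Finset.mem_filter.mpr ⟨hw', hcw'⟩
  set f : (Fin d → ℝ) → ℝ := fun v => ((v - w) ⬝ᵥ u) / (u ⬝ᵥ u) with hf
  have hrep : ∀ v ∈ S, v - w = f v • u := by
    intro v hvS
    rw [hS, Finset.mem_filter] at hvS
    obtain ⟨α, β, hαβ, heq⟩ := hcol w hw w' hw' v hvS.1 hcw hcw' hvS.2
    have hβ : β ≠ 0 := by
      intro hβ0
      rw [hβ0, zero_smul, add_zero] at heq
      have hα : α ≠ 0 := by
        rcases hαβ with h | h
        · exact h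
        · exact absurd hβ0 h
      exact hune (by
        have := smul_eq_zero.mp heq
        rcases this with h | h
        · exact absurd h hα
        · exact h)
    have hv : v - w = (-α/β) • u := by
      have hβv : β • (v - w) = -(α • (w' - w)) := eq_neg_of_add_eq_zero_right heq
      have h2 : (β⁻¹ * β) • (v - w) = β⁻¹ • -(α • (w' - w)) := by
        rw [← smul_smul, hβv]
      rw [inv_mul_cancel₀ hβ, one_smul] at h2
      rw [h2, hu]
      match_scalars
      field_simp
      ring
    have hfv : f v = -α/β := by
      rw [hf]
      dsimp only
      rw [hv, smul_dotProduct, smul_eq_mul, mul_div_assoc, div_self (ne_of_gt huu), mul_one]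
    rw [hfv]
    exact hv
  have hinj : ∀ v ∈ S, ∀ v' ∈ S, f v = f v' → v = v' := by
    intro v hv v' hv' hfe
    have h1 := hrep v hv
    have h2 := hrep v' hv'
    rw [hfe] at h1
    exact sub_left_injective (h1.trans h2.symm)
  have hfw : f w = 0 := by rw [hf]; dsimp only; rw [sub_self, zero_dotProduct, zero_div]
  have hfw' : f w' = 1 := by
    rw [hf]; dsimp only; rw [← hu, div_self (ne_of_gt huu)]
  obtain ⟨a, haS, hamin⟩ := S.exists_min_image f ⟨w, hwS⟩
  obtain ⟨b, hbS, hbmax⟩ := S.exists_max_image f ⟨w, hwS⟩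
  have haX : a ∈ X := (Finset.mem_filter.mp haS).1
  have hbX : b ∈ X := (Finset.mem_filter.mp hbS).1
  have hac : ψ ∈ cellOf d X a := (Finset.mem_filter.mp haS).2
  have hbc : ψ ∈ cellOf d X b := (Finset.mem_filter.mp hbS).2
  have hfa0 : f a ≤ 0 := hfw ▸ hamin w hwS
  have hfb1 : 1 ≤ f b := hfw' ▸ hbmax w' hw'S
  have hfab : f a < f b := lt_of_le_of_lt hfa0 (lt_of_lt_of_le one_pos hfb1)
  have hdotu : ∀ v ∈ S, v ⬝ᵥ u = w ⬝ᵥ u + f v * (u ⬝ᵥ u) := by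
    intro v hv
    have := congrArg (fun x => x ⬝ᵥ u) (hrep v hv)
    simp only [sub_dotProduct, smul_dotProduct, smul_eq_mul] at this
    linarith
  -- pareto of b
  obtain ⟨δb, hδb0, hδb⟩ := exposed_perturb hbX hbc (e := u) (by
    intro z hzX hzc hzne
    have h1 := hdotu z (Finset.mem_filter.mpr ⟨hzX, hzc⟩)
    have h2 := hdotu b hbS
    have h3 : f z < f b := by
      rcases lt_or_eq_of_le (hbmax z (Finset.mem_filter.mpr ⟨hzX, hzc⟩)) with h | h
      · exact h
      · exact absurd (hinj z (Finset.mem_filter.mpr ⟨hzX, hzc⟩) b hbS h) hzne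
    nlinarith)
  have hparb : paretoOpt d X b := exposed_pareto hbX (hδb · · ·)
  -- pareto of a
  obtain ⟨δa, hδa0, hδa⟩ := exposed_perturb haX hac (e := -u) (by
    intro z hzX hzc hzne
    have h1 := hdotu z (Finset.mem_filter.mpr ⟨hzX, hzc⟩)
    have h2 := hdotu a haS
    have h3 : f a < f z := by
      rcases lt_or_eq_of_le (hamin z (Finset.mem_filter.mpr ⟨hzX, hzc⟩)) with h | h
      · exact h
      · exact absurd (hinj a haS z (Finset.mem_filter.mpr ⟨hzX, hzc⟩) h) (Ne.symm hzne)
    have e1 : z ⬝ᵥ (-u) = -(z ⬝ᵥ u) := by rw [dotProduct_neg]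
    have e2 : a ⬝ᵥ (-u) = -(a ⬝ᵥ u) := by rw [dotProduct_neg]
    rw [e1, e2]
    nlinarith)
  have hpara : paretoOpt d X a := exposed_pareto haX (hδa · · ·)
  -- the kernel
  set l : (Fin d → ℝ) →ₗ[ℝ] ℝ :=
    { toFun := fun γ => u ⬝ᵥ γ
      map_add' := fun γ₁ γ₂ => dotProduct_add u γ₁ γ₂
      map_smul' := fun c γ => by simp [dotProduct_smul] } with hl
  have hba : b - a = (f b - f a) • u := by
    have h1 := hrep b hbS
    have h2 := hrep a haS
    have : b - a = (b - w) - (a - w) := by abel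
    rw [this, h1, h2, ← sub_smul]
  have hspan : Submodule.span ℝ (cellOf d X a ∩ cellOf d X b) = LinearMap.ker l := by
    apply le_antisymm
    · rw [Submodule.span_le]
      rintro θ'' ⟨hca, hcb⟩
      have hval : a ⬝ᵥ θ'' = b ⬝ᵥ θ'' := cell_val_eq haX hbX hca hcb
      have : (f b - f a) * (u ⬝ᵥ θ'') = 0 := by
        have := congrArg (fun x => x ⬝ᵥ θ'') hba
        simp only [sub_dotProduct, smul_dotProduct, smul_eq_mul] at this
        linarith
      have hu0 : u ⬝ᵥ θ'' = 0 := by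
        have hne2 : f b - f a ≠ 0 := sub_ne_zero.mpr (ne_of_gt hfab)
        rcases mul_eq_zero.mp this with h | h
        · exact absurd h hne2
        · exact h
      exact LinearMap.mem_ker.mpr hu0
    · intro h hker
      have hu0 : u ⬝ᵥ h = 0 := hker
      -- δ for a and b
      obtain ⟨δ1, hδ10, hδ1⟩ := exists_pos_mul_lt (X.filter (fun z => ψ ∉ cellOf d X z))
        (fun z => (z - b) ⬝ᵥ h) (fun z => (b - z) ⬝ᵥ ψ) (by
          intro z hzm
          rw [Finset.mem_filter] at hzm
          obtain ⟨y, hy, hlt⟩ := not_cell_gap hzm.2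
          have := hbc y hy
          show (0:ℝ) < (b - z) ⬝ᵥ ψ
          rw [sub_dotProduct]
          linarith)
      have hheq : ∀ v ∈ S, v ⬝ᵥ h = w ⬝ᵥ h + f v * (u ⬝ᵥ h) := by
        intro v hv
        have := congrArg (fun x => x ⬝ᵥ h) (hrep v hv)
        simp only [sub_dotProduct, smul_dotProduct, smul_eq_mul] at this
        linarith
      have hcell : ψ + δ1 • h ∈ cellOf d X a ∩ cellOf d X b := by
        have hmain : ∀ v ∈ S, ψ + δ1 • h ∈ cellOf d X v := by
          intro v hvS
          intro y hyX
          have hvexp : v ⬝ᵥ (ψ + δ1 • h) = v ⬝ᵥ ψ + δ1 * (v ⬝ᵥ h) := by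
            rw [dotProduct_add, dotProduct_smul, smul_eq_mul]
          have hyexp : y ⬝ᵥ (ψ + δ1 • h) = y ⬝ᵥ ψ + δ1 * (y ⬝ᵥ h) := by
            rw [dotProduct_add, dotProduct_smul, smul_eq_mul]
          rw [hvexp, hyexp]
          by_cases hyc : ψ ∈ cellOf d X y
          · have hyS : y ∈ S := Finset.mem_filter.mpr ⟨hyX, hyc⟩
            have e1 := hheq y hyS
            have e2 := hheq v hvS
            have e3 : y ⬝ᵥ ψ = v ⬝ᵥ ψ :=
              cell_val_eq hyX (Finset.mem_filter.mp hvS).1 hyc (Finset.mem_filter.mp hvS).2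
            rw [hu0] at e1 e2
            nlinarith
          · have hmem : y ∈ X.filter (fun z => ψ ∉ cellOf d X z) :=
              Finset.mem_filter.mpr ⟨hyX, hyc⟩
            have h2 := hδ1 y hmem
            simp only [sub_dotProduct] at h2
            have e1 := hheq v hvS
            have e2 := hheq b hbS
            have e3 : v ⬝ᵥ ψ = b ⬝ᵥ ψ :=
              cell_val_eq (Finset.mem_filter.mp hvS).1 hbX (Finset.mem_filter.mp hvS).2 hbc
            rw [hu0] at e1 e2
            nlinarith
        exact ⟨hmain a haS, hmain b hbS⟩
      have hψmem : ψ ∈ cellOf d X a ∩ cellOf d X b := ⟨hac, hbc⟩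
      have h1 : (ψ + δ1 • h) - ψ ∈ Submodule.span ℝ (cellOf d X a ∩ cellOf d X b) :=
        Submodule.sub_mem _ (Submodule.subset_span hcell) (Submodule.subset_span hψmem)
      have h2 : (ψ + δ1 • h) - ψ = δ1 • h := by abel
      rw [h2] at h1
      have := Submodule.smul_mem _ δ1⁻¹ h1
      rwa [smul_smul, inv_mul_cancel₀ (ne_of_gt hδ10), one_smul] at this
  have hfrk : Module.finrank ℝ (Submodule.span ℝ (cellOf d X a ∩ cellOf d X b)) = d - 1 := by
    rw [hspan]
    have hsurj : LinearMap.range l = ⊤ := by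
      rw [LinearMap.range_eq_top]
      intro r
      refine ⟨(r / (u ⬝ᵥ u)) • u, ?_⟩
      show u ⬝ᵥ ((r / (u ⬝ᵥ u)) • u) = r
      rw [dotProduct_smul, smul_eq_mul, div_mul_cancel₀ _ (ne_of_gt huu)]
    have hrn := LinearMap.finrank_range_add_finrank_ker l
    rw [hsurj, finrank_top] at hrn
    have hd : Module.finrank ℝ (Fin d → ℝ) = d := by
      rw [Module.finrank_pi]
      exact Fintype.card_fin d
    have h1 : Module.finrank ℝ ℝ = 1 := Module.finrank_self ℝ
    rw [hd, h1] at hrn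
    omega
  have hnb : neighborActs d X a b := ⟨hpara, hparb, hfrk⟩
  have hmem := hL a haX b hbX hnb
  have hmono : a - b ∈ W := by
    rw [hWdef]
    refine Submodule.span_mono ?_ hmem
    rintro c ⟨z, hzX, hsub, j, rfl⟩
    exact ⟨z, hzX, hψθ z hzX (hsub ⟨hac, hbc⟩), j, rfl⟩
  have hkey : w - w' = (f b - f a)⁻¹ • (a - b) := by
    have hab : a - b = (f b - f a) • (-u) := by
      rw [smul_neg, ← hba, neg_sub]
    rw [hab, smul_smul, inv_mul_cancel₀ (sub_ne_zero.mpr (ne_of_gt hfab)), one_smul, hu, neg_sub]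
  rw [hkey]
  exact W.smul_mem _ hmono

lemma norm_seg_le {R : ℝ} {x y : Fin d → ℝ} (hx : ‖x‖ ≤ R) (hy : ‖y‖ ≤ R)
    {t : ℝ} (ht : t ∈ Set.Icc (0:ℝ) 1) : ‖(1-t) • x + t • y‖ ≤ R := by
  obtain ⟨ht0, ht1⟩ := ht
  calc ‖(1-t) • x + t • y‖ ≤ ‖(1-t) • x‖ + ‖t • y‖ := norm_add_le _ _
  _ = |1-t| * ‖x‖ + |t| * ‖y‖ := by rw [norm_smul, norm_smul, Real.norm_eq_abs, Real.norm_eq_abs]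
  _ = (1-t) * ‖x‖ + t * ‖y‖ := by rw [abs_of_nonneg (by linarith), abs_of_nonneg ht0]
  _ ≤ (1-t) * R + t * R := by
      have h1 := mul_le_mul_of_nonneg_left hx (by linarith : (0:ℝ) ≤ 1 - t)
      have h2 := mul_le_mul_of_nonneg_left hy ht0
      linarith
  _ = R := by ring

lemma cont_seg (θ x y : Fin d → ℝ) (ε : ℝ) :
    Continuous (fun t : ℝ => θ + ε • ((1-t) • x + t • y)) := by
  apply continuous_const.add
  apply Continuous.fun_const_smul
  exact ((continuous_const.sub continuous_id).smul continuous_const).add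
    (continuous_id.smul continuous_const)

lemma dot_aff (z x y : Fin d → ℝ) (s t : ℝ) :
    z ⬝ᵥ (s • x + t • y) = s * (z ⬝ᵥ x) + t * (z ⬝ᵥ y) := by
  rw [dotProduct_add, dotProduct_smul, dotProduct_smul, smul_eq_mul, smul_eq_mul]

lemma exists_exposing' {S : Set (Fin d → ℝ)} (hfin : S.Finite) {p : Fin d → ℝ}
    (hp : p ∈ Set.extremePoints ℝ (convexHull ℝ S)) :
    ∃ η, ∀ z ∈ S, z ≠ p → z ⬝ᵥ η < p ⬝ᵥ η := by
  have hnot := extreme_not_in_hull_diff hp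
  have hfin2 : (S \ {p}).Finite := hfin.diff
  obtain ⟨η, hη⟩ := exists_sep_vector (convex_convexHull ℝ _)
    (hfin2.isCompact_convexHull ℝ).isClosed hnot
  exact ⟨η, fun z hz hne => hη z (subset_convexHull ℝ _ ⟨hz, hne⟩)⟩

lemma claimA_core {m : ℕ} {A : (Fin d → ℝ) → Matrix (Fin d) (Fin m) ℝ}
    (hL : ∀ x ∈ X, ∀ y ∈ X, neighborActs d X x y →
      x - y ∈ Submodule.span ℝ
        {c : Fin d → ℝ | ∃ z ∈ X,
          (cellOf d X x ∩ cellOf d X y ⊆ cellOf d X z) ∧ ∃ j : Fin m, c = (A z)ᵀ j})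
    (θ : Fin d → ℝ) {p q : Fin d → ℝ}
    (hpE : p ∈ Set.extremePoints ℝ (convexHull ℝ {z : Fin d → ℝ | z ∈ X ∧ θ ∈ cellOf d X z}))
    (hqE : q ∈ Set.extremePoints ℝ (convexHull ℝ {z : Fin d → ℝ | z ∈ X ∧ θ ∈ cellOf d X z})) :
    p - q ∈ Submodule.span ℝ
      {c : Fin d → ℝ | ∃ z ∈ X, θ ∈ cellOf d X z ∧ ∃ j : Fin m, c = (A z)ᵀ j} := by
  classical
  set W := Submodule.span ℝ
      {c : Fin d → ℝ | ∃ z ∈ X, θ ∈ cellOf d X z ∧ ∃ j : Fin m, c = (A z)ᵀ j} with hWdef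
  set SS : Set (Fin d → ℝ) := {z : Fin d → ℝ | z ∈ X ∧ θ ∈ cellOf d X z} with hSS
  have hSSfin : SS.Finite := X.finite_toSet.subset (fun z hz => hz.1)
  have hpSS : p ∈ SS := extremePoints_convexHull_subset hpE
  have hqSS : q ∈ SS := extremePoints_convexHull_subset hqE
  have hpX : p ∈ X := hpSS.1
  have hqX : q ∈ X := hqSS.1
  have hXne : X.Nonempty := ⟨p, hpX⟩
  obtain ⟨ηp, hηp⟩ := exists_exposing' hSSfin hpE
  obtain ⟨ηq, hηq⟩ := exists_exposing' hSSfin hqE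
  set R : ℝ := ‖ηp‖ + ‖ηq‖ + 1 with hR
  have hR0 : (0:ℝ) < R := by positivity
  have hRp : ‖ηp‖ ≤ R := by rw [hR]; have := norm_nonneg ηq; linarith
  have hRq : ‖ηq‖ ≤ R := by rw [hR]; have := norm_nonneg ηp; linarith
  have hR1 : (1:ℝ) ≤ R := by rw [hR]; have := norm_nonneg ηp; have := norm_nonneg ηq; linarith
  -- choose ε
  obtain ⟨ε, hε0, hε⟩ := exists_pos_mul_lt
    (X.filter (fun z => θ ∉ cellOf d X z))
    (fun z => (∑ i, |(z - p) i|) * R)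
    (fun z => (p - z) ⬝ᵥ θ)
    (by
      intro z hzm
      rw [Finset.mem_filter] at hzm
      obtain ⟨y, hy, hlt⟩ := not_cell_gap hzm.2
      have := hpSS.2 y hy
      show (0:ℝ) < (p - z) ⬝ᵥ θ
      rw [sub_dotProduct]
      linarith)
  -- strict domination of non-S points by p at perturbed parameters
  have hOUT : ∀ γ : Fin d → ℝ, ‖γ‖ ≤ R → ∀ z ∈ X, z ∉ SS →
      z ⬝ᵥ (θ + ε • γ) < p ⬝ᵥ (θ + ε • γ) := by
    intro γ hγ z hzX hzS
    have hznc : θ ∉ cellOf d X z := fun hc => hzS ⟨hzX, hc⟩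
    have hzm : z ∈ X.filter (fun z => θ ∉ cellOf d X z) := Finset.mem_filter.mpr ⟨hzX, hznc⟩
    have hkey : ε * ((∑ i, |(z - p) i|) * R) < (p - z) ⬝ᵥ θ := hε z hzm
    have f1 : |(z - p) ⬝ᵥ γ| ≤ (∑ i, |(z - p) i|) * ‖γ‖ := abs_dot_le _ _
    have f5 : (0:ℝ) ≤ ∑ i, |(z - p) i| := Finset.sum_nonneg fun i _ => abs_nonneg _
    have ha : ε * ((z - p) ⬝ᵥ γ) ≤ ε * |(z - p) ⬝ᵥ γ| :=
      mul_le_mul_of_nonneg_left (le_abs_self _) hε0.le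
    have hb : ε * |(z - p) ⬝ᵥ γ| ≤ ε * ((∑ i, |(z - p) i|) * ‖γ‖) :=
      mul_le_mul_of_nonneg_left f1 hε0.le
    have hc : ε * ((∑ i, |(z - p) i|) * ‖γ‖) ≤ ε * ((∑ i, |(z - p) i|) * R) :=
      mul_le_mul_of_nonneg_left (mul_le_mul_of_nonneg_left hγ f5) hε0.le
    have e1 : z ⬝ᵥ (θ + ε • γ) = z ⬝ᵥ θ + ε * (z ⬝ᵥ γ) := by
      rw [dotProduct_add, dotProduct_smul, smul_eq_mul]
    have e2 : p ⬝ᵥ (θ + ε • γ) = p ⬝ᵥ θ + ε * (p ⬝ᵥ γ) := by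
      rw [dotProduct_add, dotProduct_smul, smul_eq_mul]
    have e3 : (z - p) ⬝ᵥ γ = z ⬝ᵥ γ - p ⬝ᵥ γ := sub_dotProduct _ _ _
    have e4 : (p - z) ⬝ᵥ θ = p ⬝ᵥ θ - z ⬝ᵥ θ := sub_dotProduct _ _ _
    rw [e1, e2]
    rw [e3] at ha hb
    nlinarith
  have hCONE : ∀ γ : Fin d → ℝ, ‖γ‖ ≤ R → ∀ z ∈ X, (θ + ε • γ) ∈ cellOf d X z → z ∈ SS := by
    intro γ hγ z hzX hzc
    by_contra hzS
    exact absurd (hzc p hpX) (not_le.mpr (hOUT γ hγ z hzX hzS))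
  -- uniqueness of maximizer at exposing directions
  have huniq : ∀ pt η : Fin d → ℝ, pt ∈ SS → (∀ s ∈ SS, s ≠ pt → s ⬝ᵥ η < pt ⬝ᵥ η) → ‖η‖ ≤ R →
      ∀ s ∈ X, (θ + ε • η) ∈ cellOf d X s → s = pt := by
    intro pt η hptS hsep hηR s hsX hsc
    by_contra hne
    have hsS : s ∈ SS := hCONE η hηR s hsX hsc
    have h1 : s ⬝ᵥ η < pt ⬝ᵥ η := hsep s hsS hne
    have h2 : s ⬝ᵥ θ = pt ⬝ᵥ θ := cell_val_eq hsX hptS.1 hsS.2 hptS.2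
    have h3 := hsc pt hptS.1
    have e1 : s ⬝ᵥ (θ + ε • η) = s ⬝ᵥ θ + ε * (s ⬝ᵥ η) := by
      rw [dotProduct_add, dotProduct_smul, smul_eq_mul]
    have e2 : pt ⬝ᵥ (θ + ε • η) = pt ⬝ᵥ θ + ε * (pt ⬝ᵥ η) := by
      rw [dotProduct_add, dotProduct_smul, smul_eq_mul]
    rw [e1, e2] at h3
    nlinarith
  -- optimality of p at θ + ε ηp, q at θ + ε ηq
  have hopt : ∀ pt η : Fin d → ℝ, pt ∈ SS → (∀ s ∈ SS, s ≠ pt → s ⬝ᵥ η < pt ⬝ᵥ η) → ‖η‖ ≤ R →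
      (θ + ε • η) ∈ cellOf d X pt := by
    intro pt η hptS hsep hηR
    intro y hyX
    by_cases hyS : y ∈ SS
    · have h2 : y ⬝ᵥ θ = pt ⬝ᵥ θ := cell_val_eq hyX hptS.1 hyS.2 hptS.2
      have h1 : y ⬝ᵥ η ≤ pt ⬝ᵥ η := by
        by_cases hy : y = pt
        · rw [hy]
        · exact (hsep y hyS hy).le
      have e1 : y ⬝ᵥ (θ + ε • η) = y ⬝ᵥ θ + ε * (y ⬝ᵥ η) := by
        rw [dotProduct_add, dotProduct_smul, smul_eq_mul]
      have e2 : pt ⬝ᵥ (θ + ε • η) = pt ⬝ᵥ θ + ε * (pt ⬝ᵥ η) := by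
        rw [dotProduct_add, dotProduct_smul, smul_eq_mul]
      rw [e1, e2]
      nlinarith
    · have hlt := hOUT η hηR y hyX hyS
      have hple : p ⬝ᵥ (θ + ε • η) ≤ pt ⬝ᵥ (θ + ε • η) := by
        by_cases hp' : p = pt
        · rw [hp']
        · have h1 : p ⬝ᵥ η < pt ⬝ᵥ η := hsep p hpSS hp'
          have h2 : p ⬝ᵥ θ = pt ⬝ᵥ θ := cell_val_eq hpX hptS.1 hpSS.2 hptS.2
          have e1 : p ⬝ᵥ (θ + ε • η) = p ⬝ᵥ θ + ε * (p ⬝ᵥ η) := by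
            rw [dotProduct_add, dotProduct_smul, smul_eq_mul]
          have e2 : pt ⬝ᵥ (θ + ε • η) = pt ⬝ᵥ θ + ε * (pt ⬝ᵥ η) := by
            rw [dotProduct_add, dotProduct_smul, smul_eq_mul]
          rw [e1, e2]
          nlinarith
      linarith
  have hpopt : (θ + ε • ηp) ∈ cellOf d X p := hopt p ηp hpSS hηp hRp
  have hqopt : (θ + ε • ηq) ∈ cellOf d X q := hopt q ηq hqSS hηq hRq
  -- choose ζ avoiding degeneracies
  set u1 : (Fin d → ℝ) × (Fin d → ℝ) × (Fin d → ℝ) → (Fin d → ℝ) := fun t => t.2.1 - t.1 with hu1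
  set u2 : (Fin d → ℝ) × (Fin d → ℝ) × (Fin d → ℝ) → (Fin d → ℝ) := fun t => t.2.2 - t.1 with hu2
  set Dp : (Fin d → ℝ) × (Fin d → ℝ) × (Fin d → ℝ) → (Fin d → ℝ) := fun t =>
    (u1 t ⬝ᵥ (θ + ε • ηp)) • u2 t - (u2 t ⬝ᵥ (θ + ε • ηp)) • u1 t with hDp
  set Dq : (Fin d → ℝ) × (Fin d → ℝ) × (Fin d → ℝ) → (Fin d → ℝ) := fun t =>
    (u1 t ⬝ᵥ (θ + ε • ηq)) • u2 t - (u2 t ⬝ᵥ (θ + ε • ηq)) • u1 t with hDq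
  set base3 : Set ((Fin d → ℝ) × (Fin d → ℝ) × (Fin d → ℝ)) :=
    {t | t.1 ∈ X ∧ t.2.1 ∈ X ∧ t.2.2 ∈ X} with hbase3
  have hbase3fin : base3.Finite := by
    apply Set.Finite.subset (X.finite_toSet.prod (X.finite_toSet.prod X.finite_toSet))
    intro t ht
    exact ⟨ht.1, ht.2.1, ht.2.2⟩
  set P1 : Set ((Fin d → ℝ) × ℝ) :=
    (fun zw : (Fin d → ℝ) × (Fin d → ℝ) => (ε • (zw.1 - zw.2), -((zw.1 - zw.2) ⬝ᵥ θ))) ''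
      {zw | zw.1 ∈ X ∧ zw.2 ∈ X ∧ zw.1 ≠ zw.2} with hP1
  set P2 : Set ((Fin d → ℝ) × ℝ) :=
    (fun t => (ε • Dp t, -(Dp t ⬝ᵥ θ))) '' (base3 ∩ {t | Dp t ≠ 0}) with hP2
  set P3 : Set ((Fin d → ℝ) × ℝ) :=
    (fun t => (ε • Dq t, -(Dq t ⬝ᵥ θ))) '' (base3 ∩ {t | Dq t ≠ 0}) with hP3
  have hP1fin : P1.Finite := by
    apply Set.Finite.image
    apply Set.Finite.subset (X.finite_toSet.prod X.finite_toSet)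
    intro zw hzw
    exact ⟨hzw.1, hzw.2.1⟩
  have hP2fin : P2.Finite := (hbase3fin.inter_of_left _).image _
  have hP3fin : P3.Finite := (hbase3fin.inter_of_left _).image _
  obtain ⟨ζ, hζnorm, hζ⟩ := avoid (P1 ∪ P2 ∪ P3) ((hP1fin.union hP2fin).union hP3fin)
    (by
      rintro pr hpr
      rcases hpr with (h | h) | h
      · obtain ⟨zw, hzw, rfl⟩ := h
        exact smul_ne_zero (ne_of_gt hε0) (sub_ne_zero.mpr hzw.2.2)
      · obtain ⟨t, ht, rfl⟩ := h
        exact smul_ne_zero (ne_of_gt hε0) ht.2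
      · obtain ⟨t, ht, rfl⟩ := h
        exact smul_ne_zero (ne_of_gt hε0) ht.2)
    1 one_pos
  have hζR : ‖ζ‖ ≤ R := le_trans hζnorm.le hR1
  -- derived conditions on ζ
  have hC1 : ∀ w ∈ X, ∀ w' ∈ X, w ≠ w' → (w - w') ⬝ᵥ (θ + ε • ζ) ≠ 0 := by
    intro w hw w' hw' hne h0
    apply hζ (ε • (w - w'), -((w - w') ⬝ᵥ θ)) (Or.inl (Or.inl ⟨(w, w'), ⟨hw, hw', hne⟩, rfl⟩))
    show (ε • (w - w')) ⬝ᵥ ζ = -((w - w') ⬝ᵥ θ)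
    rw [dotProduct_add, dotProduct_smul, smul_eq_mul] at h0
    rw [smul_dotProduct, smul_eq_mul]
    linarith
  have hC2 : ∀ t, t ∈ base3 → Dp t ≠ 0 → Dp t ⬝ᵥ (θ + ε • ζ) ≠ 0 := by
    intro t ht hD h0
    apply hζ (ε • Dp t, -(Dp t ⬝ᵥ θ)) (Or.inl (Or.inr ⟨t, ⟨ht, hD⟩, rfl⟩))
    show (ε • Dp t) ⬝ᵥ ζ = -(Dp t ⬝ᵥ θ)
    rw [dotProduct_add, dotProduct_smul, smul_eq_mul] at h0
    rw [smul_dotProduct, smul_eq_mul]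
    linarith
  have hC3 : ∀ t, t ∈ base3 → Dq t ≠ 0 → Dq t ⬝ᵥ (θ + ε • ζ) ≠ 0 := by
    intro t ht hD h0
    apply hζ (ε • Dq t, -(Dq t ⬝ᵥ θ)) (Or.inr ⟨t, ⟨ht, hD⟩, rfl⟩)
    show (ε • Dq t) ⬝ᵥ ζ = -(Dq t ⬝ᵥ θ)
    rw [dotProduct_add, dotProduct_smul, smul_eq_mul] at h0
    rw [smul_dotProduct, smul_eq_mul]
    linarith
  -- the maximizer at ζ
  obtain ⟨r, hrX, hrc⟩ := exists_cell hXne (θ + ε • ζ)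
  -- the two segments
  have hseg : ∀ η1 η2 : Fin d → ℝ, ‖η1‖ ≤ R → ‖η2‖ ≤ R →
      (∀ t ∈ Set.Icc (0:ℝ) 1, ∀ w ∈ X, ∀ w' ∈ X, ∀ w'' ∈ X,
        (θ + ε • ((1-t) • η1 + t • η2)) ∈ cellOf d X w →
        (θ + ε • ((1-t) • η1 + t • η2)) ∈ cellOf d X w' →
        (θ + ε • ((1-t) • η1 + t • η2)) ∈ cellOf d X w'' →
        ∃ α β : ℝ, (α ≠ 0 ∨ β ≠ 0) ∧ α • (w' - w) + β • (w'' - w) = 0) →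
      ∀ w0 ∈ X, ∀ w1 ∈ X, (θ + ε • η1) ∈ cellOf d X w0 → (θ + ε • η2) ∈ cellOf d X w1 →
        w0 - w1 ∈ W := by
    intro η1 η2 hη1R hη2R hcolseg w0 hw0 w1 hw1 hc0 hc1
    have haff : ∀ t : ℝ, (θ + ε • ((1-t) • η1 + t • η2)) =
        (fun t : ℝ => θ + ε • ((1-t) • η1 + t • η2)) t := fun t => rfl
    refine chain hXne (cont_seg θ η1 η2 ε) W ?_ w0 hw0 w1 hw1 (by simpa using hc0)
      (by simpa using hc1)
    intro t ht w hw w' hw' hcw hcw'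
    refine qline hL θ (θ + ε • ((1-t) • η1 + t • η2)) ?_ ?_ hw hw' hcw hcw'
    · intro z hz hc
      exact (hCONE ((1-t) • η1 + t • η2) (norm_seg_le hη1R hη2R ht) z hz hc).2
    · intro a ha b hb c hc hca hcb hcc
      exact hcolseg t ht a ha b hb c hc hca hcb hcc
  -- collinearity along segment 1 (ηp to ζ)
  have hcol1 : ∀ t ∈ Set.Icc (0:ℝ) 1, ∀ w ∈ X, ∀ w' ∈ X, ∀ w'' ∈ X,
      (θ + ε • ((1-t) • ηp + t • ζ)) ∈ cellOf d X w →
      (θ + ε • ((1-t) • ηp + t • ζ)) ∈ cellOf d X w' →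
      (θ + ε • ((1-t) • ηp + t • ζ)) ∈ cellOf d X w'' →
      ∃ α β : ℝ, (α ≠ 0 ∨ β ≠ 0) ∧ α • (w' - w) + β • (w'' - w) = 0 := by
    intro t ht w hw w' hw' w'' hw'' hcw hcw' hcw''
    set ψ : Fin d → ℝ := θ + ε • ((1-t) • ηp + t • ζ) with hψ
    by_cases he1 : w' = w
    · exact ⟨1, 0, Or.inl one_ne_zero, by rw [he1]; simp⟩
    by_cases he2 : w'' = w
    · exact ⟨0, 1, Or.inr one_ne_zero, by rw [he2]; simp⟩
    -- tie equations
    have hψaff : ψ = (1-t) • (θ + ε • ηp) + t • (θ + ε • ζ) := by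
      rw [hψ]
      match_scalars <;> ring
    have tie : ∀ a b : Fin d → ℝ, a ∈ X → b ∈ X → ψ ∈ cellOf d X a → ψ ∈ cellOf d X b →
        (1-t) * ((a - b) ⬝ᵥ (θ + ε • ηp)) + t * ((a - b) ⬝ᵥ (θ + ε • ζ)) = 0 := by
      intro a b haX hbX hca hcb
      have hv : a ⬝ᵥ ψ = b ⬝ᵥ ψ := cell_val_eq haX hbX hca hcb
      have : (a - b) ⬝ᵥ ψ = 0 := by rw [sub_dotProduct, hv, sub_self]
      rw [hψaff, dot_aff] at this
      exact this
    have tie1 := tie w' w hw' hw hcw' hcw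
    have tie2 := tie w'' w hw'' hw hcw'' hcw
    set a1 : ℝ := (w' - w) ⬝ᵥ (θ + ε • ηp) with ha1
    set a2 : ℝ := (w'' - w) ⬝ᵥ (θ + ε • ηp) with ha2
    set c1 : ℝ := (w' - w) ⬝ᵥ (θ + ε • ζ) with hc1'
    set c2 : ℝ := (w'' - w) ⬝ᵥ (θ + ε • ζ) with hc2'
    have hc1ne : c1 ≠ 0 := hC1 w' hw' w hw he1 
    have hc2ne : c2 ≠ 0 := hC1 w'' hw'' w hw he2
    rcases eq_or_lt_of_le ht.1 with ht0 | ht0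
    · -- t = 0 : unique maximizer p
      exfalso
      have hψ0 : ψ = θ + ε • ηp := by rw [hψ, ← ht0]; norm_num
      have hwp : w = p := huniq p ηp hpSS hηp hRp w hw (by rw [← hψ0]; exact hcw)
      have hw'p : w' = p := huniq p ηp hpSS hηp hRp w' hw' (by rw [← hψ0]; exact hcw')
      exact he1 (hw'p.trans hwp.symm)
    rcases eq_or_lt_of_le ht.2 with ht1 | ht1
    · -- t = 1 : c1 = 0, contradiction
      exfalso
      apply hc1ne
      rw [ht1] at tie1
      simpa using tie1
    -- 0 < t < 1
    have ha1ne : a1 ≠ 0 := by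
      intro h0
      rw [h0, mul_zero, zero_add] at tie1
      rcases mul_eq_zero.mp tie1 with h | h
      · exact (ne_of_gt ht0) h
      · exact hc1ne h
    have ha2ne : a2 ≠ 0 := by
      intro h0
      rw [h0, mul_zero, zero_add] at tie2
      rcases mul_eq_zero.mp tie2 with h | h
      · exact (ne_of_gt ht0) h
      · exact hc2ne h
    set tr : (Fin d → ℝ) × (Fin d → ℝ) × (Fin d → ℝ) := (w, w', w'') with htr
    by_cases hD : Dp tr = 0
    · refine ⟨-a2, a1, Or.inr ha1ne, ?_⟩
      have : Dp tr = a1 • (w'' - w) - a2 • (w' - w) := rfl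
      rw [this] at hD
      rw [sub_eq_zero] at hD
      rw [neg_smul, ← hD]
      abel
    · have hDne := hC2 tr ⟨hw, hw', hw''⟩ hD
      exfalso
      apply hDne
      have hexp : Dp tr ⬝ᵥ (θ + ε • ζ) = a1 * c2 - a2 * c1 := by
        show ((a1 • (w'' - w)) - (a2 • (w' - w))) ⬝ᵥ (θ + ε • ζ) = a1 * c2 - a2 * c1
        rw [sub_dotProduct, smul_dotProduct, smul_dotProduct, smul_eq_mul, smul_eq_mul]
      rw [hexp]
      have h1t : (1:ℝ) - t ≠ 0 := by linarith
      have hcomb : (1-t) * (a1 * c2 - a2 * c1) = 0 := by linear_combination c2 * tie1 - c1 * tie2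
      rcases mul_eq_zero.mp hcomb with h | h
      · exact absurd h h1t
      · exact h
  -- collinearity along segment 2 (ζ to ηq)
  have hcol2 : ∀ t ∈ Set.Icc (0:ℝ) 1, ∀ w ∈ X, ∀ w' ∈ X, ∀ w'' ∈ X,
      (θ + ε • ((1-t) • ζ + t • ηq)) ∈ cellOf d X w →
      (θ + ε • ((1-t) • ζ + t • ηq)) ∈ cellOf d X w' →
      (θ + ε • ((1-t) • ζ + t • ηq)) ∈ cellOf d X w'' →
      ∃ α β : ℝ, (α ≠ 0 ∨ β ≠ 0) ∧ α • (w' - w) + β • (w'' - w) = 0 := by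
    intro t ht w hw w' hw' w'' hw'' hcw hcw' hcw''
    set ψ : Fin d → ℝ := θ + ε • ((1-t) • ζ + t • ηq) with hψ
    by_cases he1 : w' = w
    · exact ⟨1, 0, Or.inl one_ne_zero, by rw [he1]; simp⟩
    by_cases he2 : w'' = w
    · exact ⟨0, 1, Or.inr one_ne_zero, by rw [he2]; simp⟩
    have hψaff : ψ = (1-t) • (θ + ε • ζ) + t • (θ + ε • ηq) := by
      rw [hψ]
      match_scalars <;> ring
    have tie : ∀ a b : Fin d → ℝ, a ∈ X → b ∈ X → ψ ∈ cellOf d X a → ψ ∈ cellOf d X b →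
        (1-t) * ((a - b) ⬝ᵥ (θ + ε • ζ)) + t * ((a - b) ⬝ᵥ (θ + ε • ηq)) = 0 := by
      intro a b haX hbX hca hcb
      have hv : a ⬝ᵥ ψ = b ⬝ᵥ ψ := cell_val_eq haX hbX hca hcb
      have : (a - b) ⬝ᵥ ψ = 0 := by rw [sub_dotProduct, hv, sub_self]
      rw [hψaff, dot_aff] at this
      exact this
    have tie1 := tie w' w hw' hw hcw' hcw
    have tie2 := tie w'' w hw'' hw hcw'' hcw
    set b1 : ℝ := (w' - w) ⬝ᵥ (θ + ε • ηq) with hb1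
    set b2 : ℝ := (w'' - w) ⬝ᵥ (θ + ε • ηq) with hb2
    set c1 : ℝ := (w' - w) ⬝ᵥ (θ + ε • ζ) with hc1'
    set c2 : ℝ := (w'' - w) ⬝ᵥ (θ + ε • ζ) with hc2'
    have hc1ne : c1 ≠ 0 := hC1 w' hw' w hw he1
    have hc2ne : c2 ≠ 0 := hC1 w'' hw'' w hw he2
    rcases eq_or_lt_of_le ht.1 with ht0 | ht0
    · exfalso
      apply hc1ne
      rw [← ht0] at tie1
      simpa using tie1
    rcases eq_or_lt_of_le ht.2 with ht1 | ht1
    · exfalso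
      have hψ1 : ψ = θ + ε • ηq := by rw [hψ, ht1]; norm_num
      have hwp : w = q := huniq q ηq hqSS hηq hRq w hw (by rw [← hψ1]; exact hcw)
      have hw'p : w' = q := huniq q ηq hqSS hηq hRq w' hw' (by rw [← hψ1]; exact hcw')
      exact he1 (hw'p.trans hwp.symm)
    have hb1ne : b1 ≠ 0 := by
      intro h0
      rw [h0, mul_zero, add_zero] at tie1
      rcases mul_eq_zero.mp tie1 with h | h
      · have : (1:ℝ) - t ≠ 0 := by linarith
        exact this h
      · exact hc1ne h
    set tr : (Fin d → ℝ) × (Fin d → ℝ) × (Fin d → ℝ) := (w, w', w'') with htr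
    by_cases hD : Dq tr = 0
    · refine ⟨-b2, b1, Or.inr hb1ne, ?_⟩
      have : Dq tr = b1 • (w'' - w) - b2 • (w' - w) := rfl
      rw [this] at hD
      rw [sub_eq_zero] at hD
      rw [neg_smul, ← hD]
      abel
    · have hDne := hC3 tr ⟨hw, hw', hw''⟩ hD
      exfalso
      apply hDne
      have hexp : Dq tr ⬝ᵥ (θ + ε • ζ) = b1 * c2 - b2 * c1 := by
        show ((b1 • (w'' - w)) - (b2 • (w' - w))) ⬝ᵥ (θ + ε • ζ) = b1 * c2 - b2 * c1
        rw [sub_dotProduct, smul_dotProduct, smul_dotProduct, smul_eq_mul, smul_eq_mul]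
      rw [hexp]
      have h1t : (1:ℝ) - t ≠ 0 := by linarith
      have hcomb : (1-t) * (b1 * c2 - b2 * c1) = 0 := by linear_combination b1 * tie2 - b2 * tie1
      rcases mul_eq_zero.mp hcomb with h | h
      · exact absurd h h1t
      · exact h
  have h1 : p - r ∈ W := hseg ηp ζ hRp hζR hcol1 p hpX r hrX hpopt hrc
  have h2 : r - q ∈ W := hseg ζ ηq hζR hRq hcol2 r hrX q hqX hrc hqopt
  have := W.add_mem h1 h2
  simpa using this

lemma claimA {m : ℕ} {A : (Fin d → ℝ) → Matrix (Fin d) (Fin m) ℝ}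
    (hL : ∀ x ∈ X, ∀ y ∈ X, neighborActs d X x y →
      x - y ∈ Submodule.span ℝ
        {c : Fin d → ℝ | ∃ z ∈ X,
          (cellOf d X x ∩ cellOf d X y ⊆ cellOf d X z) ∧ ∃ j : Fin m, c = (A z)ᵀ j})
    (θ : Fin d → ℝ) {u v : Fin d → ℝ} (huX : u ∈ X) (hvX : v ∈ X)
    (huc : θ ∈ cellOf d X u) (hvc : θ ∈ cellOf d X v) :
    u - v ∈ Submodule.span ℝ
      {c : Fin d → ℝ | ∃ z ∈ X, θ ∈ cellOf d X z ∧ ∃ j : Fin m, c = (A z)ᵀ j} := by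
  classical
  set SS : Set (Fin d → ℝ) := {z : Fin d → ℝ | z ∈ X ∧ θ ∈ cellOf d X z} with hSS
  have hSSfin : SS.Finite := X.finite_toSet.subset fun z hz => hz.1
  set E := Set.extremePoints ℝ (convexHull ℝ SS) with hE
  have hEsub : E ⊆ SS := extremePoints_convexHull_subset
  have hEfin : E.Finite := hSSfin.subset hEsub
  have hKM : convexHull ℝ SS = convexHull ℝ E := by
    have h1 := closure_convexHull_extremePoints (hSSfin.isCompact_convexHull ℝ)
      (convex_convexHull ℝ SS)
    rw [← h1, (hEfin.isCompact_convexHull ℝ).isClosed.closure_eq]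
  have huE : u ∈ convexHull ℝ E := by rw [← hKM]; exact subset_convexHull ℝ _ ⟨huX, huc⟩
  have hvE : v ∈ convexHull ℝ E := by rw [← hKM]; exact subset_convexHull ℝ _ ⟨hvX, hvc⟩
  obtain ⟨ι1, _, w1, z1, hw10, hw11, hz1, hu⟩ := mem_convexHull_iff_exists_fintype.mp huE
  obtain ⟨ι2, _, w2, z2, hw20, hw21, hz2, hv⟩ := mem_convexHull_iff_exists_fintype.mp hvE
  have step : ∀ i : ι1, ∑ j, (w1 i * w2 j) • (z1 i - z2 j) = w1 i • z1 i - w1 i • v := by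
    intro i
    have e : ∀ j : ι2, (w1 i * w2 j) • (z1 i - z2 j)
        = (w1 i * w2 j) • z1 i - w1 i • (w2 j • z2 j) := by
      intro j; rw [smul_sub, mul_smul, mul_smul]
    rw [Finset.sum_congr rfl fun j _ => e j, Finset.sum_sub_distrib, ← Finset.sum_smul,
      ← Finset.mul_sum, hw21, mul_one, ← Finset.smul_sum, hv]
  have hsplit : u - v = ∑ i, ∑ j, (w1 i * w2 j) • (z1 i - z2 j) := by
    calc u - v = ∑ i, w1 i • z1 i - (∑ i, w1 i) • v := by rw [hu, hw11, one_smul]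
    _ = ∑ i, (w1 i • z1 i - w1 i • v) := by rw [Finset.sum_sub_distrib, Finset.sum_smul]
    _ = ∑ i, ∑ j, (w1 i * w2 j) • (z1 i - z2 j) :=
        (Finset.sum_congr rfl fun i _ => (step i).symm)
  rw [hsplit]
  apply Submodule.sum_mem
  intro i _
  apply Submodule.sum_mem
  intro j _
  apply Submodule.smul_mem
  exact claimA_core hL θ (hz1 i) (hz2 j)

end Stmt15

/-- **Lemma lem:local-equivalence.** Local observability: for every convex
`C` and all `x, y ∈ P(C)`, `x - y` lies in the column span of `(A_z : z ∈ P(C))`, if and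
only if for every pair of neighboring Pareto optimal actions `x, y`, `x - y` lies in the
column span of `(A_z : z ∈ N_{xy})`. -/
theorem stmt15 (d m : ℕ) (X : Finset (Fin d → ℝ))
    (A : (Fin d → ℝ) → Matrix (Fin d) (Fin m) ℝ) :
    (∀ C : Set (Fin d → ℝ), Convex ℝ C →
      ∀ x ∈ plausibleSet d X C, ∀ y ∈ plausibleSet d X C,
        x - y ∈ Submodule.span ℝ
          {c : Fin d → ℝ | ∃ z ∈ plausibleSet d X C, ∃ j : Fin m, c = (A z)ᵀ j}) ↔
    (∀ x ∈ X, ∀ y ∈ X, neighborActs d X x y →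
      x - y ∈ Submodule.span ℝ
        {c : Fin d → ℝ | ∃ z ∈ X,
          (cellOf d X x ∩ cellOf d X y ⊆ cellOf d X z) ∧ ∃ j : Fin m, c = (A z)ᵀ j}) := by
  constructor
  · intro hLHS x hx y hy _
    exact Stmt15.forward hLHS hx hy
  · intro hL C hC x hxP y hyP
    obtain ⟨hxX, θx, hθxC, hθxcell⟩ := hxP
    obtain ⟨hyX, θy, hθyC, hθycell⟩ := hyP
    have hXne : X.Nonempty := ⟨x, hxX⟩
    set W := Submodule.span ℝ
      {c : Fin d → ℝ | ∃ z ∈ plausibleSet d X C, ∃ j : Fin m, c = (A z)ᵀ j} with hWdef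
    set φ : ℝ → Fin d → ℝ := fun s => (1-s) • θx + s • θy with hφ
    have hφc : Continuous φ :=
      ((continuous_const.sub continuous_id).smul continuous_const).add
        (continuous_id.smul continuous_const)
    have hQ : ∀ s ∈ Set.Icc (0:ℝ) 1, ∀ w ∈ X, ∀ w' ∈ X,
        φ s ∈ cellOf d X w → φ s ∈ cellOf d X w' → w - w' ∈ W := by
      intro s hs w hw w' hw' hcw hcw'
      have hmem := Stmt15.claimA hL (φ s) hw hw' hcw hcw'
      have hφsC : φ s ∈ C := hC hθxC hθyC (by linarith [hs.2] : (0:ℝ) ≤ 1 - s) hs.1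
        (by ring)
      refine Submodule.span_mono ?_ hmem
      rintro c ⟨z, hzX, hzc, j, rfl⟩
      exact ⟨z, ⟨hzX, φ s, hφsC, hzc⟩, j, rfl⟩
    have h0 : φ 0 ∈ cellOf d X x := by
      have he : φ 0 = θx := by rw [hφ]; simp
      rw [he]; exact hθxcell
    have h1 : φ 1 ∈ cellOf d X y := by
      have he : φ 1 = θy := by rw [hφ]; simp
      rw [he]; exact hθycell
    exact Stmt15.chain hXne hφc W hQ x hxX y hyX h0 h1
end

section
/- Let X ⊂ ℝ^d be a finite set and C ⊆ ℝ^d a convex set. Then for any two Pareto optimal actions x, y ∈ P(C) there exists a finite sequence x = x_1, x_2, …, x_m = y of Pareto optimal actions, all belonging to P(C), such that x_i and x_{i+1} are neighbors for every 1 ≤ i < m. -/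
open Matrix Finset

namespace Stmt16

open Filter Set

variable {d : ℕ} (X : Finset (Fin d → ℝ))

/-- maximizers of `⟨·, θ⟩` within `X` -/
noncomputable def amax (θ : Fin d → ℝ) : Finset (Fin d → ℝ) :=
  X.filter fun z => ∀ y ∈ X, y ⬝ᵥ θ ≤ z ⬝ᵥ θ

lemma mem_amax {θ z : Fin d → ℝ} :
    z ∈ amax X θ ↔ z ∈ X ∧ ∀ y ∈ X, y ⬝ᵥ θ ≤ z ⬝ᵥ θ := by
  classical simp [amax]

lemma amax_subset {θ : Fin d → ℝ} : amax X θ ⊆ X := fun z hz => (mem_amax X |>.1 hz).1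

lemma amax_nonempty (hX : X.Nonempty) (θ : Fin d → ℝ) : (amax X θ).Nonempty := by
  obtain ⟨z, hz, hmax⟩ := X.exists_max_image (fun z => z ⬝ᵥ θ) hX
  exact ⟨z, (mem_amax X).2 ⟨hz, hmax⟩⟩

/-- step relation for paths within `Q` -/
def RQ (Q : (Fin d → ℝ) → Prop) (p q : Fin d → ℝ) : Prop :=
  (Q p ∧ paretoOpt d X p) ∧ (Q q ∧ paretoOpt d X q) ∧ neighborActs d X p q

def Conn (Q : (Fin d → ℝ) → Prop) : (Fin d → ℝ) → (Fin d → ℝ) → Prop :=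
  Relation.ReflTransGen (RQ X Q)

lemma Conn.mono {Q Q' : (Fin d → ℝ) → Prop} (h : ∀ z, Q z → Q' z) {p q : Fin d → ℝ}
    (hpq : Conn X Q p q) : Conn X Q' p q := by
  refine Relation.ReflTransGen.mono ?_ _ _ hpq
  rintro a b ⟨⟨h1, h2⟩, ⟨h3, h4⟩, h5⟩
  exact ⟨⟨h a h1, h2⟩, ⟨h b h3, h4⟩, h5⟩

/-- dot product with fixed left argument, as a linear map -/
noncomputable def dLin (v : Fin d → ℝ) : (Fin d → ℝ) →ₗ[ℝ] ℝ where
  toFun θ := v ⬝ᵥ θ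
  map_add' θ₁ θ₂ := by simp [dotProduct_add]
  map_smul' c θ := by simp [dotProduct_smul, smul_eq_mul]

lemma cont_dot (v : Fin d → ℝ) : Continuous fun θ : Fin d → ℝ => v ⬝ᵥ θ := by
  unfold dotProduct
  exact continuous_finset_sum _ fun i _ => (continuous_const.mul (continuous_apply i))

noncomputable def dCLM (v : Fin d → ℝ) : (Fin d → ℝ) →L[ℝ] ℝ :=
  ⟨dLin v, cont_dot v⟩

@[simp] lemma dCLM_apply (v θ : Fin d → ℝ) : dCLM v θ = v ⬝ᵥ θ := rfl

lemma pareto_not_mem_hull_diff {a : Fin d → ℝ} (ha : paretoOpt d X a) :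
    a ∉ convexHull ℝ ((X : Set (Fin d → ℝ)) \ {a}) := by
  have h := ((convex_convexHull ℝ
    (X : Set (Fin d → ℝ))).mem_extremePoints_iff_mem_diff_convexHull_diff).1 ha
  intro hmem
  exact h.2 (convexHull_mono (Set.diff_subset_diff_left (subset_convexHull ℝ _)) hmem)

lemma exposing {a : Fin d → ℝ} (ha : paretoOpt d X a) (haX : a ∈ X) :
    ∃ η : Fin d → ℝ, ∀ z ∈ X, z ≠ a → z ⬝ᵥ η < a ⬝ᵥ η := by
  have hKconv : Convex ℝ (convexHull ℝ ((X : Set (Fin d → ℝ)) \ {a})) := convex_convexHull _ _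
  have hKcl : IsClosed (convexHull ℝ ((X : Set (Fin d → ℝ)) \ {a})) :=
    (X.finite_toSet.diff (t := {a})).isClosed_convexHull (𝕜 := ℝ)
  obtain ⟨f, u, hfa, hK⟩ :=
    geometric_hahn_banach_point_closed hKconv hKcl (pareto_not_mem_hull_diff X ha)
  refine ⟨fun i => -(f (Pi.single i 1)), fun z hz hza => ?_⟩
  have key : ∀ θ : Fin d → ℝ, θ ⬝ᵥ (fun i => -(f (Pi.single i 1))) = -(f θ) := by
    intro θ
    have hθ : θ = ∑ i : Fin d, θ i • (Pi.single i (1:ℝ) : Fin d → ℝ) := by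
      ext j
      simp [Pi.single_apply, Finset.sum_apply]
    conv_rhs => rw [hθ]
    rw [map_sum]
    unfold dotProduct
    rw [← Finset.sum_neg_distrib]
    refine Finset.sum_congr rfl fun i _ => ?_
    rw [_root_.map_smul, smul_eq_mul]
    ring
  rw [key z, key a, neg_lt_neg_iff]
  have hzK : z ∈ convexHull ℝ ((X : Set (Fin d → ℝ)) \ {a}) :=
    subset_convexHull ℝ _ ⟨hz, hza⟩
  exact hfa.trans (hK z hzK)

lemma faceHull (S : Finset (Fin d → ℝ)) (l : (Fin d → ℝ) →L[ℝ] ℝ) :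
    (convexHull ℝ ((S.filter fun z => ∀ y ∈ S, l y ≤ l z : Finset (Fin d → ℝ)) :
        Set (Fin d → ℝ))) =
      {p ∈ convexHull ℝ (S : Set (Fin d → ℝ)) |
        ∀ q ∈ convexHull ℝ (S : Set (Fin d → ℝ)), l q ≤ l p} := by
  classical
  rcases S.eq_empty_or_nonempty with rfl | hS
  · simp
  obtain ⟨z₀, hz₀S, hz₀max⟩ := S.exists_max_image (fun z => l z) hS
  set m := l z₀ with hm
  set F := S.filter fun z => ∀ y ∈ S, l y ≤ l z with hF
  have hFS : F ⊆ S := Finset.filter_subset _ _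
  have hub : ∀ p ∈ convexHull ℝ (S : Set (Fin d → ℝ)), l p ≤ m := by
    intro p hp
    have : convexHull ℝ (S : Set (Fin d → ℝ)) ⊆ {w | l w ≤ m} :=
      convexHull_min (fun z hz => hz₀max z hz) (convex_halfSpace_le (f := l) l.toLinearMap.isLinear m)
    exact this hp
  have hz₀A : z₀ ∈ convexHull ℝ (S : Set (Fin d → ℝ)) := subset_convexHull ℝ _ hz₀S
  have hFval : ∀ z ∈ F, l z = m := by
    intro z hz
    rw [Finset.mem_filter] at hz
    exact le_antisymm (hz₀max z hz.1) (hz.2 z₀ hz₀S)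
  apply Set.Subset.antisymm
  · intro p hp
    have hpA : p ∈ convexHull ℝ (S : Set (Fin d → ℝ)) :=
      convexHull_mono (Finset.coe_subset.2 hFS) hp
    have hge : m ≤ l p := by
      have : convexHull ℝ (F : Set (Fin d → ℝ)) ⊆ {w | m ≤ l w} :=
        convexHull_min (fun z hz => (hFval z hz).ge) (convex_halfSpace_ge (f := l) l.toLinearMap.isLinear m)
      exact this hp
    exact ⟨hpA, fun q hq => (hub q hq).trans hge⟩
  · rintro p ⟨hpA, hpmax⟩
    have hlp : l p = m := le_antisymm (hub p hpA) (hpmax z₀ hz₀A)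
    rw [Finset.convexHull_eq, Set.mem_setOf_eq] at hpA
    obtain ⟨w, hw0, hw1, hwc⟩ := hpA
    have hcm : l p = ∑ z ∈ S, w z * l z := by
      rw [← hwc, Finset.centerMass_eq_of_sum_1 _ _ hw1, map_sum]
      exact Finset.sum_congr rfl fun z _ => by rw [_root_.map_smul, smul_eq_mul, id]
    have hsum0 : ∑ z ∈ S, w z * (m - l z) = 0 := by
      have : ∑ z ∈ S, w z * (m - l z) = (∑ z ∈ S, w z) * m - ∑ z ∈ S, w z * l z := by
        rw [Finset.sum_mul, ← Finset.sum_sub_distrib]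
        exact Finset.sum_congr rfl fun z _ => by ring
      rw [this, hw1, one_mul, ← hcm, hlp, sub_self]
    have hkey : ∀ z ∈ S, z ∉ F → w z = 0 := by
      intro z hzS hzF
      have hnn : ∀ z ∈ S, 0 ≤ w z * (m - l z) := fun z hz =>
        mul_nonneg (hw0 z hz) (sub_nonneg.2 (hz₀max z hz))
      have h0 : w z * (m - l z) = 0 :=
        (Finset.sum_eq_zero_iff_of_nonneg hnn).1 hsum0 z hzS
      have hlt : l z < m := by
        have : ¬ ∀ y ∈ S, l y ≤ l z := by
          intro hall; exact hzF (Finset.mem_filter.2 ⟨hzS, hall⟩)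
        push_neg at this
        obtain ⟨y, hyS, hy⟩ := this
        exact lt_of_lt_of_le hy (hz₀max y hyS)
      rcases mul_eq_zero.1 h0 with h | h
      · exact h
      · exfalso; linarith [sub_eq_zero.1 h]
    have hsumF : ∑ z ∈ F, w z = 1 := by
      rw [← hw1]
      exact (Finset.sum_subset hFS fun z hzS hzF => hkey z hzS hzF).symm ▸ rfl
    have hpF : p = F.centerMass w id := by
      rw [← hwc, Finset.centerMass_eq_of_sum_1 _ _ hw1, Finset.centerMass_eq_of_sum_1 _ _ hsumF]
      exact (Finset.sum_subset hFS fun z hzS hzF => by rw [hkey z hzS hzF, zero_smul]).symm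
    rw [hpF]
    exact F.centerMass_mem_convexHull (fun z hz => hw0 z (hFS hz)) (by rw [hsumF]; norm_num)
      (fun z hz => Finset.mem_coe.2 hz)

lemma extractExtreme : ∀ (n : ℕ) (S : Finset (Fin d → ℝ)), S.card ≤ n → S.Nonempty →
    (S : Set (Fin d → ℝ)) ⊆ (X : Set (Fin d → ℝ)) →
    IsExtreme ℝ (convexHull ℝ (X : Set (Fin d → ℝ)))
      (convexHull ℝ (S : Set (Fin d → ℝ))) →
    ∃ e ∈ S, paretoOpt d X e := by
  intro n
  induction n with
  | zero =>
    intro S hcard hS _ _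
    exact absurd (Finset.card_pos.2 hS) (by omega)
  | succ n ih =>
    intro S hcard hS hSX hext
    classical
    by_cases hall : ∀ z ∈ S, ∀ w ∈ S, z = w
    · obtain ⟨e, he⟩ := hS
      have hsing : (S : Set (Fin d → ℝ)) = {e} := by
        ext z
        constructor
        · intro hz; exact hall z (Finset.mem_coe.1 hz) e he
        · rintro rfl; exact Finset.mem_coe.2 he
      rw [hsing, convexHull_singleton] at hext
      exact ⟨e, he, hext.mem_extremePoints⟩
    · push_neg at hall
      obtain ⟨z, hzS, w, hwS, hzw⟩ := hall
      obtain ⟨i, hi⟩ := Function.ne_iff.1 hzw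
      set l : (Fin d → ℝ) →L[ℝ] ℝ := ContinuousLinearMap.proj i with hl
      set F := S.filter fun v => ∀ y ∈ S, l y ≤ l v with hF
      have hFS : F ⊆ S := Finset.filter_subset _ _
      have hFne : F.Nonempty := by
        obtain ⟨v, hv, hvmax⟩ := S.exists_max_image (fun v => l v) ⟨z, hzS⟩
        exact ⟨v, Finset.mem_filter.2 ⟨hv, hvmax⟩⟩
      have hFneq : F ≠ S := by
        intro heq
        rcases lt_trichotomy (z i) (w i) with h | h | h
        · have hzF : z ∈ F := heq ▸ hzS
          have := (Finset.mem_filter.1 hzF).2 w hwS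
          simp only [hl, ContinuousLinearMap.proj_apply] at this
          linarith
        · exact hi h
        · have hwF : w ∈ F := heq ▸ hwS
          have := (Finset.mem_filter.1 hwF).2 z hzS
          simp only [hl, ContinuousLinearMap.proj_apply] at this
          linarith
      have hcardF : F.card ≤ n := by
        have := Finset.card_lt_card (ssubset_of_ne_of_subset hFneq hFS)
        omega
      have hexp : IsExposed ℝ (convexHull ℝ (S : Set (Fin d → ℝ)))
          (convexHull ℝ (F : Set (Fin d → ℝ))) := fun _ => ⟨l, faceHull S l⟩
      obtain ⟨e, heF, hp⟩ := ih F hcardF hFne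
        ((Finset.coe_subset.2 hFS).trans hSX) (hext.trans hexp.isExtreme)
      exact ⟨e, hFS heF, hp⟩

lemma existsParetoInAmax (hX : X.Nonempty) (θ : Fin d → ℝ) :
    ∃ e ∈ amax X θ, paretoOpt d X e := by
  classical
  have hamax : amax X θ = X.filter fun z => ∀ y ∈ X, dCLM θ y ≤ dCLM θ z := by
    unfold amax
    apply Finset.filter_congr
    intro z _
    simp only [dCLM_apply]
    constructor
    · intro h y hy; rw [dotProduct_comm θ y, dotProduct_comm θ z]; exact h y hy
    · intro h y hy; rw [dotProduct_comm y θ, dotProduct_comm z θ]; exact h y hy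
  have hexp : IsExposed ℝ (convexHull ℝ (X : Set (Fin d → ℝ)))
      (convexHull ℝ (amax X θ : Set (Fin d → ℝ))) := fun _ => by
    rw [hamax]; exact ⟨dCLM θ, faceHull X (dCLM θ)⟩
  exact extractExtreme X (amax X θ).card (amax X θ) le_rfl (amax_nonempty X hX θ)
    (Finset.coe_subset.2 (amax_subset X)) hexp.isExtreme

lemma neighbor_of_collinear {θ : Fin d → ℝ} {a b : Fin d → ℝ}
    (ha : paretoOpt d X a) (hb : paretoOpt d X b)
    (haF : a ∈ amax X θ) (hbF : b ∈ amax X θ) (hab : a ≠ b)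
    (hline : ∀ z ∈ amax X θ, ∃ t : ℝ, z = a + t • (b - a)) :
    neighborActs d X a b := by
  classical
  refine ⟨ha, hb, ?_⟩
  set f := dLin (d := d) (a - b) with hfdef
  have haX : a ∈ X := amax_subset X haF
  have hbX : b ∈ X := amax_subset X hbF
  have hamem := (mem_amax X).1 haF
  have hbmem := (mem_amax X).1 hbF
  have hθab : b ⬝ᵥ θ = a ⬝ᵥ θ := le_antisymm (hamem.2 b hbX) (hbmem.2 a haX)
  have hθmem : θ ∈ cellOf d X a ∩ cellOf d X b := ⟨hamem.2, hbmem.2⟩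
  have hspan : Submodule.span ℝ (cellOf d X a ∩ cellOf d X b) = LinearMap.ker f := by
    apply le_antisymm
    · rw [Submodule.span_le]
      rintro φ ⟨hφa, hφb⟩
      have h1 : b ⬝ᵥ φ ≤ a ⬝ᵥ φ := hφa b hbX
      have h2 : a ⬝ᵥ φ ≤ b ⬝ᵥ φ := hφb a haX
      show φ ∈ LinearMap.ker f
      rw [LinearMap.mem_ker]
      show (a - b) ⬝ᵥ φ = 0
      rw [sub_dotProduct]; linarith
    · intro h hh
      have hfh : (a - b) ⬝ᵥ h = 0 := LinearMap.mem_ker.1 hh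
      have hbh : b ⬝ᵥ h = a ⬝ᵥ h := by rw [sub_dotProduct] at hfh; linarith
      set T := X.filter (fun z => z ∉ amax X θ) with hT
      set g : (Fin d → ℝ) → ℝ := fun z =>
        (a ⬝ᵥ θ - z ⬝ᵥ θ) / (|z ⬝ᵥ h| + |a ⬝ᵥ h| + 1) with hg
      have hgap : ∀ z ∈ T, z ⬝ᵥ θ < a ⬝ᵥ θ := by
        intro z hz
        rw [hT, Finset.mem_filter] at hz
        have : ¬ ∀ y ∈ X, y ⬝ᵥ θ ≤ z ⬝ᵥ θ := fun hall => hz.2 ((mem_amax X).2 ⟨hz.1, hall⟩)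
        push_neg at this
        obtain ⟨y, hyX, hy⟩ := this
        exact lt_of_lt_of_le hy (hamem.2 y hyX)
      have hgpos : ∀ z ∈ T, 0 < g z := by
        intro z hz
        apply div_pos (by linarith [hgap z hz])
        positivity
      set c : ℝ := if hTne : T.Nonempty then min 1 (T.inf' hTne g) else 1 with hc
      have hcpos : 0 < c := by
        rw [hc]
        split_ifs with hTne
        · exact lt_min one_pos ((Finset.lt_inf'_iff hTne).2 fun z hz => hgpos z hz)
        · exact one_pos
      have hcle : ∀ z ∈ T, c ≤ g z := by
        intro z hz
        rw [hc, dif_pos ⟨z, hz⟩]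
        exact (min_le_right _ _).trans (Finset.inf'_le _ hz)
      have hmaxeq : ∀ y ∈ amax X θ, y ⬝ᵥ (θ + c • h) = a ⬝ᵥ (θ + c • h) := by
        intro y hy
        obtain ⟨t, rfl⟩ := hline y hy
        simp only [add_dotProduct, sub_dotProduct, smul_dotProduct, dotProduct_add,
          dotProduct_sub, dotProduct_smul, smul_eq_mul]
        linear_combination t * hθab + (t * c) * hbh
      have hineq : ∀ y ∈ T, y ⬝ᵥ (θ + c • h) ≤ a ⬝ᵥ (θ + c • h) := by
        intro y hy
        have hgy : g y * (|y ⬝ᵥ h| + |a ⬝ᵥ h| + 1) = a ⬝ᵥ θ - y ⬝ᵥ θ := by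
          rw [hg]
          field_simp
        have hden : (0:ℝ) < |y ⬝ᵥ h| + |a ⬝ᵥ h| + 1 := by positivity
        have hmul : c * (|y ⬝ᵥ h| + |a ⬝ᵥ h| + 1) ≤ a ⬝ᵥ θ - y ⬝ᵥ θ := by
          calc c * (|y ⬝ᵥ h| + |a ⬝ᵥ h| + 1)
              ≤ g y * (|y ⬝ᵥ h| + |a ⬝ᵥ h| + 1) :=
                mul_le_mul_of_nonneg_right (hcle y hy) hden.le
            _ = a ⬝ᵥ θ - y ⬝ᵥ θ := hgy
        have hexp : c * (|y ⬝ᵥ h| + |a ⬝ᵥ h| + 1) = c * |y ⬝ᵥ h| + c * |a ⬝ᵥ h| + c := by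
          ring
        have h1 : c * (y ⬝ᵥ h) ≤ c * |y ⬝ᵥ h| :=
          mul_le_mul_of_nonneg_left (le_abs_self _) hcpos.le
        have h2 : c * (-|a ⬝ᵥ h|) ≤ c * (a ⬝ᵥ h) :=
          mul_le_mul_of_nonneg_left (neg_abs_le _) hcpos.le
        have h2' : c * (-|a ⬝ᵥ h|) = -(c * |a ⬝ᵥ h|) := by ring
        simp only [dotProduct_add, dotProduct_smul, smul_eq_mul]
        linarith
      have hmem : (θ + c • h) ∈ cellOf d X a ∩ cellOf d X b := by
        constructor
        · intro y hyX
          by_cases hy : y ∈ amax X θ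
          · exact (hmaxeq y hy).le
          · exact hineq y (Finset.mem_filter.2 ⟨hyX, hy⟩)
        · intro y hyX
          have hbeq : b ⬝ᵥ (θ + c • h) = a ⬝ᵥ (θ + c • h) := hmaxeq b hbF
          rw [hbeq]
          by_cases hy : y ∈ amax X θ
          · exact (hmaxeq y hy).le
          · exact hineq y (Finset.mem_filter.2 ⟨hyX, hy⟩)
      have h1 : θ ∈ Submodule.span ℝ (cellOf d X a ∩ cellOf d X b) :=
        Submodule.subset_span hθmem
      have h2 : θ + c • h ∈ Submodule.span ℝ (cellOf d X a ∩ cellOf d X b) :=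
        Submodule.subset_span hmem
      have h3 : c • h ∈ Submodule.span ℝ (cellOf d X a ∩ cellOf d X b) := by
        have := Submodule.sub_mem _ h2 h1
        rwa [add_sub_cancel_left] at this
      have : h = c⁻¹ • (c • h) := by
        rw [smul_smul, inv_mul_cancel₀ hcpos.ne', one_smul]
      rw [this]
      exact Submodule.smul_mem _ _ h3
  rw [hspan]
  have hab' : a - b ≠ 0 := sub_ne_zero.2 hab
  have hself : (a - b) ⬝ᵥ (a - b) ≠ 0 := by
    rw [Ne, dotProduct_self_eq_zero]; exact hab'
  have hsurj : Function.Surjective f := by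
    intro r
    refine ⟨(r * ((a - b) ⬝ᵥ (a - b))⁻¹) • (a - b), ?_⟩
    show (a - b) ⬝ᵥ ((r * ((a - b) ⬝ᵥ (a - b))⁻¹) • (a - b)) = r
    rw [dotProduct_smul, smul_eq_mul, mul_assoc, inv_mul_cancel₀ hself, mul_one]
  have hrange : LinearMap.range f = ⊤ := LinearMap.range_eq_top.2 hsurj
  have hsum := LinearMap.finrank_range_add_finrank_ker f
  rw [hrange, finrank_top] at hsum
  have hd : Module.finrank ℝ (Fin d → ℝ) = d := Module.finrank_fin_fun ℝ
  have h1 : Module.finrank ℝ ℝ = 1 := Module.finrank_self ℝ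
  omega

lemma nbhd (θ0 θ1 : Fin d → ℝ) (s : ℝ) :
    ∀ᶠ s' in nhds s, amax X (θ0 + s' • (θ1 - θ0)) ⊆ amax X (θ0 + s • (θ1 - θ0)) := by
  classical
  set u := θ1 - θ0 with hu
  have hcont : ∀ z y : Fin d → ℝ,
      Continuous fun t : ℝ => y ⬝ᵥ (θ0 + t • u) - z ⬝ᵥ (θ0 + t • u) := by
    intro z y
    have hline : Continuous fun t : ℝ => θ0 + t • u :=
      continuous_const.add (continuous_id.smul continuous_const)
    exact ((cont_dot y).comp hline).sub ((cont_dot z).comp hline)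
  have main : ∀ z ∈ X, z ∉ amax X (θ0 + s • u) →
      ∀ᶠ s' in nhds s, z ∉ amax X (θ0 + s' • u) := by
    intro z hz hzn
    have : ¬ (∀ y ∈ X, y ⬝ᵥ (θ0 + s • u) ≤ z ⬝ᵥ (θ0 + s • u)) := by
      intro hall; exact hzn ((mem_amax X).2 ⟨hz, hall⟩)
    push_neg at this
    obtain ⟨y, hy, hlt⟩ := this
    have hpos : (0:ℝ) < y ⬝ᵥ (θ0 + s • u) - z ⬝ᵥ (θ0 + s • u) := by linarith
    have hev : ∀ᶠ s' in nhds s,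
        0 < y ⬝ᵥ (θ0 + s' • u) - z ⬝ᵥ (θ0 + s' • u) :=
      ((hcont z y).tendsto s).eventually (eventually_gt_nhds hpos)
    filter_upwards [hev] with s' h' hmem
    have := (mem_amax X).1 hmem |>.2 y hy
    linarith
  have hfin : ∀ᶠ s' in nhds s, ∀ z ∈ ((X.filter (fun z => z ∉ amax X (θ0 + s • u))) :
      Set (Fin d → ℝ)), z ∉ amax X (θ0 + s' • u) := by
    rw [Filter.eventually_all_finite (Finset.finite_toSet _)]
    intro z hz
    rw [Finset.mem_coe, Finset.mem_filter] at hz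
    exact main z hz.1 hz.2
  filter_upwards [hfin] with s' H z hzmem
  by_contra hzn
  exact H z (Finset.mem_coe.2 (Finset.mem_filter.2 ⟨amax_subset X hzmem, hzn⟩)) hzmem

lemma sweep (hX : X.Nonempty) (θ0 θ1 : Fin d → ℝ) (a b : Fin d → ℝ)
    (ha : paretoOpt d X a) (hb : paretoOpt d X b)
    (ha0 : a ∈ amax X (θ0 + (0:ℝ) • (θ1 - θ0))) (hb1 : b ∈ amax X (θ0 + (1:ℝ) • (θ1 - θ0)))
    (IH : ∀ s ∈ Icc (0:ℝ) 1, ∀ p q : Fin d → ℝ, paretoOpt d X p → paretoOpt d X q →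
      p ∈ amax X (θ0 + s • (θ1 - θ0)) → q ∈ amax X (θ0 + s • (θ1 - θ0)) →
      Conn X (· ∈ amax X (θ0 + s • (θ1 - θ0))) p q) :
    Conn X (fun z => ∃ s ∈ Icc (0:ℝ) 1, z ∈ amax X (θ0 + s • (θ1 - θ0))) a b := by
  classical
  let θf : ℝ → (Fin d → ℝ) := fun s => θ0 + s • (θ1 - θ0)
  let Q : (Fin d → ℝ) → Prop := fun z => ∃ s ∈ Icc (0:ℝ) 1, z ∈ amax X (θf s)
  let S : Set ℝ :=
    {s | s ∈ Icc (0:ℝ) 1 ∧ ∀ e, paretoOpt d X e → e ∈ amax X (θf s) → Conn X Q a e}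
  have hmono : ∀ s ∈ Icc (0:ℝ) 1, ∀ p q, Conn X (· ∈ amax X (θf s)) p q → Conn X Q p q :=
    fun s hs p q hpq => Conn.mono X (fun z hz => ⟨s, hs, hz⟩) hpq
  have hIcc0 : (0:ℝ) ∈ Icc (0:ℝ) 1 := left_mem_Icc.2 zero_le_one
  have h0 : (0:ℝ) ∈ S :=
    ⟨hIcc0, fun e hep hem => hmono 0 hIcc0 a e (IH 0 hIcc0 a e ha hep ha0 hem)⟩
  have hne : S.Nonempty := ⟨0, h0⟩
  have hbdd : BddAbove S := ⟨1, fun s hs => hs.1.2⟩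
  have hstarIcc : sSup S ∈ Icc (0:ℝ) 1 :=
    ⟨le_csSup hbdd h0, csSup_le hne fun s hs => hs.1.2⟩
  have hev := nbhd X θ0 θ1 (sSup S)
  have hstarS : sSup S ∈ S := by
    obtain ⟨U, hU, hUsub⟩ := hev.exists_mem
    obtain ⟨s', hs'U, hs'S⟩ := mem_closure_iff_nhds.1 (csSup_mem_closure hne hbdd) U hU
    refine ⟨hstarIcc, fun e hep hem => ?_⟩
    obtain ⟨e', he'm, he'p⟩ := existsParetoInAmax X hX (θf s')
    have c1 : Conn X Q a e' := hs'S.2 e' he'p he'm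
    have he'star : e' ∈ amax X (θf (sSup S)) := hUsub s' hs'U he'm
    exact Relation.ReflTransGen.trans c1
      (hmono (sSup S) hstarIcc e' e (IH (sSup S) hstarIcc e' e he'p hep he'star hem))
  have hstar1 : sSup S = 1 := by
    by_contra hne1
    have hlt : sSup S < 1 := lt_of_le_of_ne hstarIcc.2 hne1
    obtain ⟨ε, hε, hball⟩ := Metric.eventually_nhds_iff.1 hev
    have h1 : sSup S < min 1 (sSup S + ε/2) := lt_min hlt (by linarith)
    have h2 : min 1 (sSup S + ε/2) ∈ Icc (0:ℝ) 1 := ⟨hstarIcc.1.trans h1.le, min_le_left _ _⟩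
    have h3 : dist (min 1 (sSup S + ε/2)) (sSup S) < ε := by
      rw [Real.dist_eq, abs_of_nonneg (by linarith)]
      have := min_le_right (1:ℝ) (sSup S + ε/2)
      linarith
    have hs''S : min 1 (sSup S + ε/2) ∈ S :=
      ⟨h2, fun e hep hem => hstarS.2 e hep (hball h3 hem)⟩
    exact absurd (le_csSup hbdd hs''S) (not_le.2 h1)
  have h1S : (1:ℝ) ∈ S := hstar1 ▸ hstarS
  exact h1S.2 b hb hb1

set_option maxHeartbeats 1000000 in
lemma connectL : ∀ (n : ℕ) (θ : Fin d → ℝ) (a b : Fin d → ℝ),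
    paretoOpt d X a → paretoOpt d X b → a ∈ amax X θ → b ∈ amax X θ →
    (amax X θ).card ≤ n → Conn X (· ∈ amax X θ) a b := by
  intro n
  induction n with
  | zero =>
    intro θ a b _ _ haF _ hcard
    exact absurd (Finset.card_pos.2 ⟨a, haF⟩) (by omega)
  | succ n ih =>
    intro θ a b ha hb haF hbF hcard
    classical
    rcases eq_or_ne a b with rfl | hab
    · exact Relation.ReflTransGen.refl
    by_cases hline : ∀ z ∈ amax X θ, ∃ t : ℝ, z = a + t • (b - a)
    · exact Relation.ReflTransGen.single
        ⟨⟨haF, ha⟩, ⟨hbF, hb⟩, neighbor_of_collinear X ha hb haF hbF hab hline⟩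
    push_neg at hline
    obtain ⟨c, hcF, hcnl⟩ := hline
    have haX : a ∈ X := amax_subset X haF
    have hbX : b ∈ X := amax_subset X hbF
    have hcX : c ∈ X := amax_subset X hcF
    have hamem := (mem_amax X).1 haF
    have hbmem := (mem_amax X).1 hbF
    have hcmem := (mem_amax X).1 hcF
    have hbaθ : b ⬝ᵥ θ = a ⬝ᵥ θ := le_antisymm (hamem.2 b hbX) (hbmem.2 a haX)
    have hcaθ : c ⬝ᵥ θ = a ⬝ᵥ θ := le_antisymm (hamem.2 c hcX) (hcmem.2 a haX)
    obtain ⟨ηa, hηa⟩ := exposing X ha haX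
    -- the subspace W
    set K : Submodule ℝ (Fin d → ℝ) :=
      LinearMap.ker (dLin (d := d) (b - a)) ⊓ LinearMap.ker (dLin (d := d) (c - a)) with hK
    set W : Submodule ℝ (Fin d → ℝ) := K ⊔ Submodule.span ℝ {ηa} with hW
    have hu1ne : b - a ≠ 0 := sub_ne_zero.2 (Ne.symm hab)
    have hu1self : (b - a) ⬝ᵥ (b - a) ≠ 0 := by
      rw [Ne, dotProduct_self_eq_zero]; exact hu1ne
    set t0 : ℝ := ((b - a) ⬝ᵥ (c - a)) / ((b - a) ⬝ᵥ (b - a)) with ht0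
    set w : Fin d → ℝ := (c - a) - t0 • (b - a) with hw
    have hwu1 : (b - a) ⬝ᵥ w = 0 := by
      rw [hw, dotProduct_sub, dotProduct_smul, smul_eq_mul, ht0,
        div_mul_cancel₀ _ hu1self, sub_self]
    have hwne : w ≠ 0 := by
      intro h0
      apply hcnl t0
      have h1 : c - a = t0 • (b - a) := by
        rw [hw, sub_eq_zero] at h0; exact h0
      have := sub_eq_iff_eq_add.1 h1
      rw [this]; abel
    have hwself : w ⬝ᵥ w ≠ 0 := by rw [Ne, dotProduct_self_eq_zero]; exact hwne
    have hηa1 : (b - a) ⬝ᵥ ηa < 0 := by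
      rw [sub_dotProduct]
      have := hηa b hbX (Ne.symm hab)
      linarith
    have hwW : w ∉ W := by
      intro hmem
      rw [hW, Submodule.mem_sup] at hmem
      obtain ⟨k, hk, e, he, hke⟩ := hmem
      obtain ⟨γ, rfl⟩ := Submodule.mem_span_singleton.1 he
      have hku1 : (b - a) ⬝ᵥ k = 0 := LinearMap.mem_ker.1 (Submodule.mem_inf.1 hk).1
      have hku2 : (c - a) ⬝ᵥ k = 0 := LinearMap.mem_ker.1 (Submodule.mem_inf.1 hk).2
      have hγ : γ = 0 := by
        have hdot : (b - a) ⬝ᵥ (k + γ • ηa) = 0 := by rw [hke]; exact hwu1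
        rw [dotProduct_add, dotProduct_smul, smul_eq_mul, hku1, zero_add] at hdot
        rcases mul_eq_zero.1 hdot with h | h
        · exact h
        · exact absurd h hηa1.ne
      rw [hγ, zero_smul, add_zero] at hke
      -- now w = k, so (c - a) ⬝ᵥ w = 0, but (c-a) ⬝ᵥ w = w ⬝ᵥ w ≠ 0
      have h1 : (c - a) ⬝ᵥ w = 0 := by rw [← hke]; exact hku2
      have h2 : (c - a) ⬝ᵥ w = w ⬝ᵥ w + t0 * ((b - a) ⬝ᵥ w) := by
        have : (c - a) = w + t0 • (b - a) := by rw [hw]; abel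
        rw [this, add_dotProduct, smul_dotProduct, smul_eq_mul]
      rw [h2, hwu1, mul_zero, add_zero] at h1
      exact hwself h1
    -- pick ηb exposing b and outside W
    have hUopen : IsOpen {η : Fin d → ℝ | ∀ z ∈ X, z ≠ b → z ⬝ᵥ η < b ⬝ᵥ η} := by
      have heq : {η : Fin d → ℝ | ∀ z ∈ X, z ≠ b → z ⬝ᵥ η < b ⬝ᵥ η} =
          ⋂ z ∈ X.erase b, {η : Fin d → ℝ | z ⬝ᵥ η < b ⬝ᵥ η} := by
        ext η
        simp only [Set.mem_setOf_eq, Set.mem_iInter, Finset.mem_erase]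
        constructor
        · rintro h z ⟨hzb, hzX⟩; exact h z hzX hzb
        · intro h z hzX hzb; exact h z ⟨hzb, hzX⟩
      rw [heq]
      exact isOpen_biInter_finset fun z _ => isOpen_lt (cont_dot z) (cont_dot b)
    obtain ⟨ηb0, hηb0⟩ := exposing X hb hbX
    have hnotsub : ¬ ({η : Fin d → ℝ | ∀ z ∈ X, z ≠ b → z ⬝ᵥ η < b ⬝ᵥ η} ⊆ (W : Set (Fin d → ℝ))) := by
      intro hsubW
      have hint : ηb0 ∈ interior (W : Set (Fin d → ℝ)) :=
        (hUopen.subset_interior_iff.2 hsubW) hηb0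
      have : W = ⊤ := Submodule.eq_top_of_nonempty_interior' W ⟨ηb0, hint⟩
      rw [this] at hwW
      exact hwW Submodule.mem_top
    obtain ⟨ηb, hηbU, hηbW⟩ := Set.not_subset.1 hnotsub
    have hηb : ∀ z ∈ X, z ≠ b → z ⬝ᵥ ηb < b ⬝ᵥ ηb := hηbU
    have hηaW : ηa ∈ W := by
      rw [hW]
      exact Submodule.mem_sup_right (Submodule.mem_span_singleton_self ηa)
    -- bounds
    set B : ℝ := ∑ z ∈ X, (|z ⬝ᵥ ηa| + |z ⬝ᵥ ηb|) with hB
    have hBz : ∀ z ∈ X, |z ⬝ᵥ ηa| + |z ⬝ᵥ ηb| ≤ B := by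
      intro z hz
      rw [hB]
      exact Finset.single_le_sum (f := fun y => |y ⬝ᵥ ηa| + |y ⬝ᵥ ηb|)
        (fun y _ => by positivity) hz
    have hBnn : (0:ℝ) ≤ B := by
      rw [hB]; exact Finset.sum_nonneg fun y _ => by positivity
    have hBs : ∀ s ∈ Icc (0:ℝ) 1, ∀ z ∈ X, |z ⬝ᵥ (ηa + s • (ηb - ηa))| ≤ B := by
      intro s hs z hz
      have hexp : z ⬝ᵥ (ηa + s • (ηb - ηa)) = (1 - s) * (z ⬝ᵥ ηa) + s * (z ⬝ᵥ ηb) := by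
        rw [dotProduct_add, dotProduct_smul, dotProduct_sub, smul_eq_mul]
        ring
      rw [hexp]
      calc |(1 - s) * (z ⬝ᵥ ηa) + s * (z ⬝ᵥ ηb)|
          ≤ |(1 - s) * (z ⬝ᵥ ηa)| + |s * (z ⬝ᵥ ηb)| := abs_add_le _ _
        _ = (1 - s) * |z ⬝ᵥ ηa| + s * |z ⬝ᵥ ηb| := by
            rw [abs_mul, abs_mul, abs_of_nonneg (by linarith [hs.2] : (0:ℝ) ≤ 1 - s),
              abs_of_nonneg hs.1]
        _ ≤ |z ⬝ᵥ ηa| + |z ⬝ᵥ ηb| := by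
            nlinarith [abs_nonneg (z ⬝ᵥ ηa), abs_nonneg (z ⬝ᵥ ηb), hs.1, hs.2]
        _ ≤ B := hBz z hz
    -- the gap
    set T := X.filter (fun z => z ∉ amax X θ) with hT
    have hgap : ∀ z ∈ T, z ⬝ᵥ θ < a ⬝ᵥ θ := by
      intro z hz
      rw [hT, Finset.mem_filter] at hz
      have : ¬ ∀ y ∈ X, y ⬝ᵥ θ ≤ z ⬝ᵥ θ := fun hall => hz.2 ((mem_amax X).2 ⟨hz.1, hall⟩)
      push_neg at this
      obtain ⟨y, hyX, hy⟩ := this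
      exact lt_of_lt_of_le hy (hamem.2 y hyX)
    set δ : ℝ := if hTne : T.Nonempty then T.inf' hTne (fun z => a ⬝ᵥ θ - z ⬝ᵥ θ) else 1 with hδ
    have hδpos : 0 < δ := by
      rw [hδ]
      split_ifs with hTne
      · exact (Finset.lt_inf'_iff hTne).2 fun z hz => by linarith [hgap z hz]
      · exact one_pos
    have hδle : ∀ z ∈ T, δ ≤ a ⬝ᵥ θ - z ⬝ᵥ θ := by
      intro z hz
      rw [hδ, dif_pos ⟨z, hz⟩]
      exact Finset.inf'_le _ hz
    set ε : ℝ := δ / (2 * B + 2) with hε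
    have hεpos : 0 < ε := by rw [hε]; exact div_pos hδpos (by linarith)
    have hεB : 2 * (ε * B) < δ := by
      have h2B : (0:ℝ) < 2 * B + 2 := by linarith
      have hre : 2 * (ε * B) = δ * (2 * B) / (2 * B + 2) := by rw [hε]; ring
      rw [hre, div_lt_iff₀ h2B]
      nlinarith [hδpos]
    -- the perturbed segment
    have hθs : ∀ s : ℝ, (θ + ε • ηa) + s • ((θ + ε • ηb) - (θ + ε • ηa)) =
        θ + ε • (ηa + s • (ηb - ηa)) := by
      intro s
      ext i
      simp only [Pi.add_apply, Pi.smul_apply, Pi.sub_apply, smul_eq_mul]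
      ring
    -- values at perturbed points
    have hval : ∀ (s : ℝ) (z : Fin d → ℝ),
        z ⬝ᵥ (θ + ε • (ηa + s • (ηb - ηa))) =
          z ⬝ᵥ θ + ε * (z ⬝ᵥ (ηa + s • (ηb - ηa))) := by
      intro s z
      rw [dotProduct_add, dotProduct_smul, smul_eq_mul]
    -- (ii) the perturbed maximizers are among the original ones
    have hsub : ∀ s ∈ Icc (0:ℝ) 1,
        amax X (θ + ε • (ηa + s • (ηb - ηa))) ⊆ amax X θ := by
      intro s hs z hzm
      have hzmem := (mem_amax X).1 hzm
      have hzX : z ∈ X := hzmem.1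
      rw [mem_amax]
      refine ⟨hzX, ?_⟩
      by_contra hnot
      have hzT : z ∈ T := by rw [hT, Finset.mem_filter]; exact ⟨hzX, fun hm => hnot ((mem_amax X).1 hm).2⟩
      have hgapz := hδle z hzT
      have hble := hzmem.2 a haX
      rw [hval s a, hval s z] at hble
      have hza := hBs s hs z hzX
      have haa := hBs s hs a haX
      have h1 : ε * (z ⬝ᵥ (ηa + s • (ηb - ηa))) ≤ ε * B :=
        mul_le_mul_of_nonneg_left (le_trans (le_abs_self _) hza) hεpos.le
      have h2 : -(ε * B) ≤ ε * (a ⬝ᵥ (ηa + s • (ηb - ηa))) := by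
        have := mul_le_mul_of_nonneg_left (neg_le_of_abs_le haa) hεpos.le
        linarith [this]
      linarith
    -- (iii) the perturbed maximizer sets are strictly smaller
    have hproper : ∀ s ∈ Icc (0:ℝ) 1,
        (amax X (θ + ε • (ηa + s • (ηb - ηa)))).card ≤ n := by
      intro s hs
      have hzdiff : ∃ z, z ∈ amax X θ ∧
          z ⬝ᵥ (θ + ε • (ηa + s • (ηb - ηa))) ≠ a ⬝ᵥ (θ + ε • (ηa + s • (ηb - ηa))) := by
        by_cases hbs : (b - a) ⬝ᵥ (ηa + s • (ηb - ηa)) ≠ 0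
        · refine ⟨b, hbF, ?_⟩
          rw [hval s b, hval s a]
          intro heq
          apply hbs
          rw [sub_dotProduct]
          have h1 : ε * (b ⬝ᵥ (ηa + s • (ηb - ηa))) = ε * (a ⬝ᵥ (ηa + s • (ηb - ηa))) := by
            linarith [heq, hbaθ]
          have h2 := mul_left_cancel₀ hεpos.ne' h1
          linarith
        · by_cases hcs : (c - a) ⬝ᵥ (ηa + s • (ηb - ηa)) ≠ 0
          · refine ⟨c, hcF, ?_⟩
            rw [hval s c, hval s a]
            intro heq
            apply hcs
            rw [sub_dotProduct]
            have h1 : ε * (c ⬝ᵥ (ηa + s • (ηb - ηa))) = ε * (a ⬝ᵥ (ηa + s • (ηb - ηa))) := by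
              linarith [heq, hcaθ]
            have h2 := mul_left_cancel₀ hεpos.ne' h1
            linarith
          · exfalso
            push_neg at hbs hcs
            have hηsK : (ηa + s • (ηb - ηa)) ∈ K := by
              rw [hK, Submodule.mem_inf]
              constructor
              · rw [LinearMap.mem_ker]; exact hbs
              · rw [LinearMap.mem_ker]; exact hcs
            have hηsW : (ηa + s • (ηb - ηa)) ∈ W := by
              rw [hW]; exact Submodule.mem_sup_left hηsK
            rcases eq_or_ne s 0 with rfl | hs0
            · rw [zero_smul, add_zero] at hbs
              rw [sub_dotProduct] at hbs
              have := hηa b hbX (Ne.symm hab)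
              linarith
            · apply hηbW
              have h1 : s • (ηb - ηa) ∈ W := by
                have := Submodule.sub_mem W hηsW hηaW
                rwa [add_sub_cancel_left] at this
              have h2 : ηb - ηa ∈ W := by
                have := Submodule.smul_mem W s⁻¹ h1
                rwa [smul_smul, inv_mul_cancel₀ hs0, one_smul] at this
              have := Submodule.add_mem W h2 hηaW
              rwa [sub_add_cancel] at this
      obtain ⟨z, hzF, hzne⟩ := hzdiff
      have hss : amax X (θ + ε • (ηa + s • (ηb - ηa))) ⊂ amax X θ := by
        refine (HasSubset.Subset.ssubset_of_ne (hsub s hs)) ?_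
        intro heq
        have hz' : z ∈ amax X (θ + ε • (ηa + s • (ηb - ηa))) := by rw [heq]; exact hzF
        have ha' : a ∈ amax X (θ + ε • (ηa + s • (ηb - ηa))) := by rw [heq]; exact haF
        have h1 := ((mem_amax X).1 hz').2 a haX
        have h2 := ((mem_amax X).1 ha').2 z (amax_subset X hzF)
        exact hzne (le_antisymm h2 h1)
      have := Finset.card_lt_card hss
      omega
    -- endpoints
    have hend : ∀ (η : Fin d → ℝ), (∀ z ∈ X, ∀ e : Fin d → ℝ, e ∈ amax X θ → False) → True := fun _ _ => trivial
    have hηabound : ∀ z ∈ X, |z ⬝ᵥ ηa| ≤ B := fun z hz => by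
      have := hBz z hz; have := abs_nonneg (z ⬝ᵥ ηb); linarith
    have hηbbound : ∀ z ∈ X, |z ⬝ᵥ ηb| ≤ B := fun z hz => by
      have := hBz z hz; have := abs_nonneg (z ⬝ᵥ ηa); linarith
    have hmaxpt : ∀ (p : Fin d → ℝ) (ηp : Fin d → ℝ), p ∈ amax X θ →
        (∀ z ∈ X, z ≠ p → z ⬝ᵥ ηp < p ⬝ᵥ ηp) → (∀ z ∈ X, |z ⬝ᵥ ηp| ≤ B) →
        p ∈ amax X (θ + ε • ηp) := by
      intro p ηp hpF hηp hbnd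
      have hpX : p ∈ X := amax_subset X hpF
      have hpmem := (mem_amax X).1 hpF
      rw [mem_amax]
      refine ⟨hpX, fun y hyX => ?_⟩
      have hvy : y ⬝ᵥ (θ + ε • ηp) = y ⬝ᵥ θ + ε * (y ⬝ᵥ ηp) := by
        rw [dotProduct_add, dotProduct_smul, smul_eq_mul]
      have hvp : p ⬝ᵥ (θ + ε • ηp) = p ⬝ᵥ θ + ε * (p ⬝ᵥ ηp) := by
        rw [dotProduct_add, dotProduct_smul, smul_eq_mul]
      rw [hvy, hvp]
      by_cases hy : y ∈ amax X θ
      · have hyθ : y ⬝ᵥ θ = p ⬝ᵥ θ :=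
          le_antisymm (hpmem.2 y hyX) (((mem_amax X).1 hy).2 p hpX)
        rcases eq_or_ne y p with rfl | hyp
        · linarith
        · have := hηp y hyX hyp
          nlinarith [hεpos]
      · have hyT : y ∈ T := by
          rw [hT, Finset.mem_filter]; exact ⟨hyX, hy⟩
        have hgapy := hδle y hyT
        have hpθ : p ⬝ᵥ θ = a ⬝ᵥ θ :=
          le_antisymm (hamem.2 p hpX) (hpmem.2 a haX)
        have h1 : ε * (y ⬝ᵥ ηp) ≤ ε * B :=
          mul_le_mul_of_nonneg_left (le_trans (le_abs_self _) (hbnd y hyX)) hεpos.le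
        have h2 : -(ε * B) ≤ ε * (p ⬝ᵥ ηp) := by
          have := mul_le_mul_of_nonneg_left (neg_le_of_abs_le (hbnd p hpX)) hεpos.le
          linarith [this]
        linarith
    have hpt0 : (θ + ε • ηa) + (0:ℝ) • ((θ + ε • ηb) - (θ + ε • ηa)) = θ + ε • ηa := by
      ext i
      simp only [Pi.add_apply, Pi.smul_apply, Pi.sub_apply, smul_eq_mul]
      ring
    have hpt1 : (θ + ε • ηa) + (1:ℝ) • ((θ + ε • ηb) - (θ + ε • ηa)) = θ + ε • ηb := by
      ext i
      simp only [Pi.add_apply, Pi.smul_apply, Pi.sub_apply, smul_eq_mul]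
      ring
    have ha0 : a ∈ amax X ((θ + ε • ηa) + (0:ℝ) • ((θ + ε • ηb) - (θ + ε • ηa))) := by
      rw [hpt0]
      exact hmaxpt a ηa haF hηa hηabound
    have hb1 : b ∈ amax X ((θ + ε • ηa) + (1:ℝ) • ((θ + ε • ηb) - (θ + ε • ηa))) := by
      rw [hpt1]
      exact hmaxpt b ηb hbF hηb hηbbound
    have hXne : X.Nonempty := ⟨a, haX⟩
    have hsweep := sweep X hXne (θ + ε • ηa) (θ + ε • ηb) a b ha hb ha0 hb1
      (fun s hs p q hp hq hpm hqm => by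
        rw [hθs s] at hpm hqm ⊢
        exact ih (θ + ε • (ηa + s • (ηb - ηa))) p q hp hq hpm hqm (hproper s hs))
    refine Conn.mono X ?_ hsweep
    rintro z ⟨s, hs, hzm⟩
    rw [hθs s] at hzm
    exact hsub s hs hzm

lemma conn_to_path (Q : (Fin d → ℝ) → Prop) (x y : Fin d → ℝ)
    (hx : Q x ∧ paretoOpt d X x) (h : Conn X Q x y) :
    ∃ (k : ℕ) (f : Fin (k + 1) → (Fin d → ℝ)),
      f 0 = x ∧ f (Fin.last k) = y ∧
      (∀ i, Q (f i) ∧ paretoOpt d X (f i)) ∧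
      (∀ i : Fin k, neighborActs d X (f i.castSucc) (f i.succ)) := by
  induction h with
  | refl => exact ⟨0, fun _ => x, rfl, rfl, fun _ => hx, fun i => i.elim0⟩
  | @tail p q hxp hstep ih =>
    obtain ⟨k, f, hf0, hfl, hQ, hsteps⟩ := ih
    refine ⟨k + 1, Fin.snoc f q, ?_, ?_, ?_, ?_⟩
    · have : (0 : Fin (k + 2)) = Fin.castSucc 0 := by simp
      rw [this, Fin.snoc_castSucc]; exact hf0
    · rw [Fin.snoc_last]
    · refine Fin.lastCases ?_ ?_
      · rw [Fin.snoc_last]; exact hstep.2.1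
      · intro j; rw [Fin.snoc_castSucc]; exact hQ j
    · refine Fin.lastCases ?_ ?_
      · rw [Fin.succ_last, Fin.snoc_last, Fin.snoc_castSucc, hfl]
        exact hstep.2.2
      · intro j
        rw [Fin.succ_castSucc, Fin.snoc_castSucc, Fin.snoc_castSucc]
        exact hsteps j

end Stmt16

/-- **Lemma lem:neighbors (i).** The Pareto optimal actions within the
plausible maximizer set `P(C)` of a convex set `C` are connected in the neighborhood
graph: any two of them are joined by a finite path of neighboring Pareto optimal actions,
all lying in `P(C)`. -/
theorem stmt16 (d : ℕ) (X : Finset (Fin d → ℝ)) (C : Set (Fin d → ℝ)) (hC : Convex ℝ C)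
    (x y : Fin d → ℝ) (hx : x ∈ plausibleSet d X C) (hxp : paretoOpt d X x)
    (hy : y ∈ plausibleSet d X C) (hyp : paretoOpt d X y) :
    ∃ (k : ℕ) (f : Fin (k + 1) → (Fin d → ℝ)),
      f 0 = x ∧ f (Fin.last k) = y ∧
      (∀ i, f i ∈ plausibleSet d X C ∧ paretoOpt d X (f i)) ∧
      (∀ i : Fin k, neighborActs d X (f i.castSucc) (f i.succ)) := by
  classical
  obtain ⟨hxX, θx, hθxC, hθx⟩ := hx
  obtain ⟨hyX, θy, hθyC, hθy⟩ := hy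
  have hXne : X.Nonempty := ⟨x, hxX⟩
  have hxm : x ∈ Stmt16.amax X (θx + (0:ℝ) • (θy - θx)) := by
    have h0 : θx + (0:ℝ) • (θy - θx) = θx := by
      ext i; simp
    rw [h0, Stmt16.mem_amax]
    exact ⟨hxX, hθx⟩
  have hym : y ∈ Stmt16.amax X (θx + (1:ℝ) • (θy - θx)) := by
    have h1 : θx + (1:ℝ) • (θy - θx) = θy := by
      ext i
      simp only [Pi.add_apply, Pi.smul_apply, Pi.sub_apply, smul_eq_mul]
      ring
    rw [h1, Stmt16.mem_amax]
    exact ⟨hyX, hθy⟩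
  have hsweep := Stmt16.sweep X hXne θx θy x y hxp hyp hxm hym
    (fun s hs p q hp hq hpm hqm =>
      Stmt16.connectL X (Stmt16.amax X (θx + s • (θy - θx))).card _ p q hp hq hpm hqm le_rfl)
  have hconn : Stmt16.Conn X (· ∈ plausibleSet d X C) x y := by
    refine Stmt16.Conn.mono X ?_ hsweep
    rintro z ⟨s, hs, hzm⟩
    obtain ⟨hzX, hzmax⟩ := (Stmt16.mem_amax X).1 hzm
    refine ⟨hzX, θx + s • (θy - θx), ?_, hzmax⟩
    have hcomb : θx + s • (θy - θx) = (1 - s) • θx + s • θy := by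
      ext i
      simp only [Pi.add_apply, Pi.smul_apply, Pi.sub_apply, smul_eq_mul]
      ring
    rw [hcomb]
    exact hC hθxC hθyC (by linarith [hs.2] : (0:ℝ) ≤ 1 - s) hs.1 (by ring)
  exact Stmt16.conn_to_path X _ x y ⟨⟨hxX, θx, hθxC, hθx⟩, hxp⟩ hconn
end

section
/- Let X ⊂ ℝ^d be a finite set and C ⊆ ℝ^d a convex set. Then every x ∈ P(C) lies in the convex hull of the set of Pareto optimal actions belonging to P(C); that is, P(C) ⊆ conv(P(C) ∩ ext(conv X)), where ext(conv X) denotes the extreme points of the convex hull of X. -/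
open Matrix Finset

section aux

variable {d : ℕ}

private lemma dot_linear (θ : Fin d → ℝ) : IsLinearMap ℝ (fun z : Fin d → ℝ => z ⬝ᵥ θ) :=
  ⟨fun a b => add_dotProduct a b θ, fun c a => smul_dotProduct c a θ⟩

/-- Any maximizer in the convex hull lies in the hull of the maximizers. -/
private lemma mem_hull_filter (X : Finset (Fin d → ℝ)) (θ : Fin d → ℝ) (M : ℝ)
    (hmax : ∀ y ∈ X, y ⬝ᵥ θ ≤ M) {a : Fin d → ℝ}
    (ha : a ∈ convexHull ℝ (X : Set (Fin d → ℝ))) (haM : M ≤ a ⬝ᵥ θ) :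
    a ∈ convexHull ℝ ((X.filter fun y => M ≤ y ⬝ᵥ θ : Finset (Fin d → ℝ)) :
      Set (Fin d → ℝ)) := by
  classical
  obtain ⟨w, hw0, hw1, hwa⟩ := Finset.mem_convexHull'.1 ha
  have hdot : a ⬝ᵥ θ = ∑ y ∈ X, w y * (y ⬝ᵥ θ) := by
    rw [← hwa]
    have := map_sum (IsLinearMap.mk' _ (dot_linear θ)) (fun y => w y • y) X
    simp only [IsLinearMap.mk'_apply] at this
    rw [this]
    exact Finset.sum_congr rfl fun y _ => smul_dotProduct (w y) y θ
  -- all weight is on maximizers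
  have hkey : ∀ y ∈ X, w y ≠ 0 → M ≤ y ⬝ᵥ θ := by
    by_contra h
    push_neg at h
    obtain ⟨y0, hy0X, hy0, hy0lt⟩ := h
    have hlt : ∑ y ∈ X, w y * (y ⬝ᵥ θ) < ∑ y ∈ X, w y * M := by
      refine Finset.sum_lt_sum (fun i hi => ?_) ⟨y0, hy0X, ?_⟩
      · exact mul_le_mul_of_nonneg_left (hmax i hi) (hw0 i hi)
      · exact mul_lt_mul_of_pos_left hy0lt (lt_of_le_of_ne (hw0 _ hy0X) (Ne.symm hy0))
    rw [← Finset.sum_mul, hw1, one_mul] at hlt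
    rw [hdot] at haM
    exact absurd (lt_of_le_of_lt haM hlt) (lt_irrefl M)
  set F := X.filter fun y => M ≤ y ⬝ᵥ θ with hF
  have hsumF : ∑ y ∈ F, w y = 1 := by
    rw [← hw1]
    refine Finset.sum_subset (Finset.filter_subset _ _) (fun y hyX hyF => ?_)
    by_contra hne
    exact hyF (Finset.mem_filter.2 ⟨hyX, hkey y hyX hne⟩)
  have hsumFa : ∑ y ∈ F, w y • y = a := by
    rw [← hwa]
    refine Finset.sum_subset (Finset.filter_subset _ _) (fun y hyX hyF => ?_)
    by_contra hne
    exact hyF (Finset.mem_filter.2 ⟨hyX, hkey y hyX (fun h => hne (by rw [h, zero_smul]))⟩)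
  exact Finset.mem_convexHull'.2 ⟨w, fun y hy => hw0 y (Finset.filter_subset _ _ hy),
    hsumF, hsumFa⟩

end aux

/-- **Lemma lem:neighbors (iii).** Every plausible maximizer lies in the
convex hull of the Pareto optimal (extreme) plausible maximizers. -/
theorem stmt17 (d : ℕ) (X : Finset (Fin d → ℝ)) (C : Set (Fin d → ℝ)) (hC : Convex ℝ C) :
    plausibleSet d X C ⊆ convexHull ℝ
      (plausibleSet d X C ∩
        Set.extremePoints ℝ (convexHull ℝ (X : Set (Fin d → ℝ)))) := by
  classical
  rintro x ⟨hxX, θ, hθC, hθcell⟩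
  set M := x ⬝ᵥ θ with hM
  set F := X.filter (fun y => M ≤ y ⬝ᵥ θ) with hF
  have hFX : F ⊆ X := Finset.filter_subset _ _
  have hxF : x ∈ F := Finset.mem_filter.2 ⟨hxX, le_refl _⟩
  have hmax : ∀ y ∈ X, y ⬝ᵥ θ ≤ M := fun y hy => hθcell y hy
  -- every element of F is a plausible maximizer
  have hFP : (F : Set (Fin d → ℝ)) ⊆ plausibleSet d X C := by
    intro y hy
    have hy' := Finset.mem_filter.1 hy
    exact ⟨hy'.1, θ, hθC, fun z hz => le_trans (hmax z hz) hy'.2⟩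
  -- the max over conv X is still M
  have hhullmax : ∀ z ∈ convexHull ℝ (X : Set (Fin d → ℝ)), z ⬝ᵥ θ ≤ M := by
    intro z hz
    exact convexHull_min (fun y hy => hmax y hy) (convex_halfSpace_le (dot_linear θ) M) hz
  -- extreme points of conv F are extreme points of conv X
  have hsub : Set.extremePoints ℝ (convexHull ℝ (F : Set (Fin d → ℝ))) ⊆
      Set.extremePoints ℝ (convexHull ℝ (X : Set (Fin d → ℝ))) := by
    intro e he
    have heF : e ∈ (F : Set (Fin d → ℝ)) := extremePoints_convexHull_subset he
    have heF' := Finset.mem_filter.1 heF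
    have heM : M ≤ e ⬝ᵥ θ := heF'.2
    refine ⟨subset_convexHull ℝ _ (by exact_mod_cast heF'.1 : e ∈ (X : Set (Fin d → ℝ))), ?_⟩
    rintro a ha b hb hab
    obtain ⟨u, v, hu, hv, huv, heq⟩ := hab
    have haθ : a ⬝ᵥ θ ≤ M := hhullmax a ha
    have hbθ : b ⬝ᵥ θ ≤ M := hhullmax b hb
    have heθ : e ⬝ᵥ θ = u * (a ⬝ᵥ θ) + v * (b ⬝ᵥ θ) := by
      rw [← heq, add_dotProduct, smul_dotProduct, smul_dotProduct]
      rfl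
    have haM : M ≤ a ⬝ᵥ θ := by
      by_contra h
      push_neg at h
      have : e ⬝ᵥ θ < M := by
        rw [heθ]
        calc u * (a ⬝ᵥ θ) + v * (b ⬝ᵥ θ) < u * M + v * M := by
              exact add_lt_add_of_lt_of_le (mul_lt_mul_of_pos_left h hu)
                (mul_le_mul_of_nonneg_left hbθ hv.le)
          _ = M := by rw [← add_mul, huv, one_mul]
      exact absurd (lt_of_le_of_lt heM this) (lt_irrefl M)
    have hbM : M ≤ b ⬝ᵥ θ := by
      by_contra h
      push_neg at h
      have : e ⬝ᵥ θ < M := by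
        rw [heθ]
        calc u * (a ⬝ᵥ θ) + v * (b ⬝ᵥ θ) < u * M + v * M := by
              exact add_lt_add_of_le_of_lt (mul_le_mul_of_nonneg_left haθ hu.le)
                (mul_lt_mul_of_pos_left h hv)
          _ = M := by rw [← add_mul, huv, one_mul]
      exact absurd (lt_of_le_of_lt heM this) (lt_irrefl M)
    have haF : a ∈ convexHull ℝ (F : Set (Fin d → ℝ)) := mem_hull_filter X θ M hmax ha haM
    have hbF : b ∈ convexHull ℝ (F : Set (Fin d → ℝ)) := mem_hull_filter X θ M hmax hb hbM
    exact he.2 haF hbF ⟨u, v, hu, hv, huv, heq⟩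
  -- x lies in the convex hull of the extreme points of conv F
  have hfin : (F : Set (Fin d → ℝ)).Finite := F.finite_toSet
  have hcomp : IsCompact (convexHull ℝ (F : Set (Fin d → ℝ))) := hfin.isCompact_convexHull ℝ
  have hclosed : IsClosed (convexHull ℝ
      (Set.extremePoints ℝ (convexHull ℝ (F : Set (Fin d → ℝ))))) := by
    refine Set.Finite.isClosed_convexHull ℝ ?_
    exact hfin.subset extremePoints_convexHull_subset
  have hKM : closure (convexHull ℝ
      (Set.extremePoints ℝ (convexHull ℝ (F : Set (Fin d → ℝ))))) =
      convexHull ℝ (F : Set (Fin d → ℝ)) :=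
    closure_convexHull_extremePoints hcomp (convex_convexHull ℝ _)
  have hxhull : x ∈ convexHull ℝ
      (Set.extremePoints ℝ (convexHull ℝ (F : Set (Fin d → ℝ)))) := by
    rw [← hclosed.closure_eq, hKM]
    exact subset_convexHull ℝ _ hxF
  refine convexHull_mono ?_ hxhull
  intro e he
  exact ⟨hFP (extremePoints_convexHull_subset he), hsub he⟩
end

section
/- Let X ⊂ ℝ^d be a finite nonempty set, V ∈ ℝ^{d×d} symmetric positive definite, θ̂ ∈ ℝ^d, and β > 0. Define the upper confidence bound UCB(x) = ⟨x, θ̂⟩ + √β·‖x‖_{V^{-1}}, the relaxed gap estimate Δ̃(x) = max_{y∈X} UCB(y) − (⟨x, θ̂⟩ − √β·‖x‖_{V^{-1}}), and the information gain Ĩ(x) = ‖x‖²_{V^{-1}}. Then for every x ∈ X, Δ̃(x)² ≥ 4·β·Ĩ(x), and any x* ∈ X maximizing UCB over X satisfies Δ̃(x*)² = 4·β·Ĩ(x*). Consequently, the UCB action minimizes the deterministic information ratio Δ̃(·)²/Ĩ(·) over all x ∈ X with Ĩ(x) > 0. -/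
open Matrix Finset

/-- The upper confidence bound of an action. -/
noncomputable def ucb (d : ℕ) (V : Matrix (Fin d) (Fin d) ℝ) (θh : Fin d → ℝ) (β : ℝ)
    (x : Fin d → ℝ) : ℝ :=
  x ⬝ᵥ θh + Real.sqrt β * Real.sqrt (x ⬝ᵥ (V⁻¹ *ᵥ x))

/-- The relaxed gap estimate `Δ̃(x) = max_{y ∈ X} UCB(y) − (⟨x, θ̂⟩ − √β ‖x‖_{V⁻¹})`. -/
noncomputable def relaxedGap (d : ℕ) (X : Finset (Fin d → ℝ)) (hX : X.Nonempty)
    (V : Matrix (Fin d) (Fin d) ℝ) (θh : Fin d → ℝ) (β : ℝ) (x : Fin d → ℝ) : ℝ :=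
  X.sup' hX (ucb d V θh β) - (x ⬝ᵥ θh - Real.sqrt β * Real.sqrt (x ⬝ᵥ (V⁻¹ *ᵥ x)))

/-- The information gain `Ĩ(x) = ‖x‖²_{V⁻¹}`. -/
noncomputable def infoTilde (d : ℕ) (V : Matrix (Fin d) (Fin d) ℝ) (x : Fin d → ℝ) : ℝ :=
  x ⬝ᵥ (V⁻¹ *ᵥ x)

/-- **UCB and deterministic IDS.** For every `x ∈ X` we have
`Δ̃(x)² ≥ 4 β Ĩ(x)`; any UCB maximizer `x*` satisfies `Δ̃(x*)² = 4 β Ĩ(x*)`; consequently a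
UCB maximizer minimizes the deterministic information ratio `Δ̃(·)²/Ĩ(·)` over all actions
with positive information gain. -/
theorem stmt18 (d : ℕ) (X : Finset (Fin d → ℝ)) (hX : X.Nonempty)
    (V : Matrix (Fin d) (Fin d) ℝ) (hV : V.PosDef) (θh : Fin d → ℝ) (β : ℝ) (hβ : 0 < β) :
    (∀ x ∈ X, 4 * β * infoTilde d V x ≤ (relaxedGap d X hX V θh β x) ^ 2) ∧
    (∀ x ∈ X, (∀ y ∈ X, ucb d V θh β y ≤ ucb d V θh β x) →
      (relaxedGap d X hX V θh β x) ^ 2 = 4 * β * infoTilde d V x) ∧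
    (∀ x ∈ X, (∀ y ∈ X, ucb d V θh β y ≤ ucb d V θh β x) →
      ∀ z ∈ X, 0 < infoTilde d V z →
        (relaxedGap d X hX V θh β x) ^ 2 / infoTilde d V x ≤
          (relaxedGap d X hX V θh β z) ^ 2 / infoTilde d V z) := by
  have hq : ∀ x : Fin d → ℝ, 0 ≤ x ⬝ᵥ (V⁻¹ *ᵥ x) := fun x => by
    simpa using hV.inv.posSemidef.dotProduct_mulVec_nonneg x
  -- key lower bound on the gap
  have key : ∀ x ∈ X, 2 * (Real.sqrt β * Real.sqrt (x ⬝ᵥ (V⁻¹ *ᵥ x))) ≤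
      relaxedGap d X hX V θh β x := by
    intro x hx
    have h1 : ucb d V θh β x ≤ X.sup' hX (ucb d V θh β) := le_sup' _ hx
    unfold relaxedGap
    unfold ucb at h1 ⊢
    linarith
  have hs : ∀ x : Fin d → ℝ, 0 ≤ Real.sqrt β * Real.sqrt (x ⬝ᵥ (V⁻¹ *ᵥ x)) :=
    fun x => mul_nonneg (Real.sqrt_nonneg _) (Real.sqrt_nonneg _)
  have hsq : ∀ x : Fin d → ℝ,
      (2 * (Real.sqrt β * Real.sqrt (x ⬝ᵥ (V⁻¹ *ᵥ x)))) ^ 2 = 4 * β * infoTilde d V x := by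
    intro x
    unfold infoTilde
    rw [mul_pow, mul_pow, Real.sq_sqrt hβ.le, Real.sq_sqrt (hq x)]
    ring
  have part1 : ∀ x ∈ X, 4 * β * infoTilde d V x ≤ (relaxedGap d X hX V θh β x) ^ 2 := by
    intro x hx
    calc 4 * β * infoTilde d V x = (2 * (Real.sqrt β * Real.sqrt (x ⬝ᵥ (V⁻¹ *ᵥ x)))) ^ 2 :=
          (hsq x).symm
      _ ≤ (relaxedGap d X hX V θh β x) ^ 2 := by
          apply pow_le_pow_left₀ (by positivity) (key x hx)
  have part2 : ∀ x ∈ X, (∀ y ∈ X, ucb d V θh β y ≤ ucb d V θh β x) →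
      (relaxedGap d X hX V θh β x) ^ 2 = 4 * β * infoTilde d V x := by
    intro x hx hmax
    have hsup : X.sup' hX (ucb d V θh β) = ucb d V θh β x :=
      le_antisymm (sup'_le _ _ hmax) (le_sup' _ hx)
    have : relaxedGap d X hX V θh β x = 2 * (Real.sqrt β * Real.sqrt (x ⬝ᵥ (V⁻¹ *ᵥ x))) := by
      unfold relaxedGap; rw [hsup]; unfold ucb; ring
    rw [this, hsq]
  refine ⟨part1, part2, ?_⟩
  intro x hx hmax z hz hzI
  have hxeq := part2 x hx hmax
  rcases eq_or_lt_of_le (hq x) with h0 | hpos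
  · rw [hxeq]
    have : infoTilde d V x = 0 := h0.symm
    rw [this, mul_zero, zero_div]
    exact div_nonneg (sq_nonneg _) hzI.le
  · rw [hxeq]
    have hIx : infoTilde d V x = x ⬝ᵥ (V⁻¹ *ᵥ x) := rfl
    rw [hIx, mul_div_assoc, div_self (ne_of_gt hpos), mul_one]
    rw [le_div_iff₀ hzI]
    have := part1 z hz
    linarith
end

section
/- Let 𝒰 be a countable collection of pairwise disjoint open subsets of ℝ^d (with the Euclidean metric) such that: (1) K = ⋃_{U∈𝒰} cl(U) is convex; (2) for every U ∈ 𝒰, every y ∈ U and every ε > 0, the Hausdorff dimension of K ∩ {x : ‖x−y‖ ≤ ε} equals the Hausdorff dimension of K; (3) the set A = ⋃ cl(U) ∩ cl(V) ∩ cl(W), the union taken over all triples of pairwise distinct U, V, W ∈ 𝒰, satisfies dim_H(A) + 1 < dim_H(K); (4) every compact subset of ℝ^d has nonempty intersection with only finitely many elements of 𝒰. Call U₁, U₂ ∈ 𝒰 connected if (cl(U₁) ∩ cl(U₂)) \ A ≠ ∅. Then for every U, V ∈ 𝒰, every x ∈ cl(U) and every y ∈ cl(V), there exists a finite sequence U =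 U_1, U_2, …, U_m = V of elements of 𝒰 such that U_i and U_{i+1} are connected for every 1 ≤ i < m and cl(U_i) ∩ [x, y] ≠ ∅ for every i, where [x, y] = {t·x + (1−t)·y : t ∈ [0,1]} is the segment from x to y. -/
open Set MeasureTheory Metric ENNReal NNReal Filter


lemma exists_cover_of_hausdorffMeasure_zero {X : Type*} [EMetricSpace X]
    [MeasurableSpace X] [BorelSpace X]
    {σ : ℝ} (hσ : 0 < σ) {S : Set X} (hS : μH[σ] S = 0)
    {r : ℝ≥0∞} (hr : 0 < r) {η : ℝ≥0∞} (hη : 0 < η) :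
    ∃ t : ℕ → Set X, (S ⊆ ⋃ n, t n) ∧ (∀ n, EMetric.diam (t n) ≤ r) ∧
      ∑' n, EMetric.diam (t n) ^ σ ≤ η := by
  rw [MeasureTheory.Measure.hausdorffMeasure_apply] at hS
  have h1 : (⨅ (t : ℕ → Set X) (_ : S ⊆ ⋃ n, t n) (_ : ∀ n, EMetric.diam (t n) ≤ r),
      ∑' n, ⨆ _ : (t n).Nonempty, EMetric.diam (t n) ^ σ) < η := by
    refine lt_of_le_of_lt ?_ hη
    rw [← hS]
    exact le_iSup₂ (f := fun (r' : ℝ≥0∞) (_ : 0 < r') =>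
      ⨅ (t : ℕ → Set X) (_ : S ⊆ ⋃ n, t n) (_ : ∀ n, EMetric.diam (t n) ≤ r'),
        ∑' n, ⨆ _ : (t n).Nonempty, EMetric.diam (t n) ^ σ) r hr
  rw [iInf_lt_iff] at h1
  obtain ⟨t, ht⟩ := h1
  rw [iInf_lt_iff] at ht
  obtain ⟨hcov, ht⟩ := ht
  rw [iInf_lt_iff] at ht
  obtain ⟨hdiam, ht⟩ := ht
  refine ⟨t, hcov, hdiam, ?_⟩
  have he : ∀ n, EMetric.diam (t n) ^ σ
      = ⨆ _ : (t n).Nonempty, EMetric.diam (t n) ^ σ := by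
    intro n
    rcases (t n).eq_empty_or_nonempty with h | h
    · simp [h, EMetric.diam, ENNReal.zero_rpow_of_pos hσ]
    · simp [h]
  rw [tsum_congr he]
  exact ht.le

lemma ediam_prod_le' {X Y : Type*} [PseudoEMetricSpace X] [PseudoEMetricSpace Y]
    (s : Set X) (t : Set Y) :
    EMetric.diam (s ×ˢ t) ≤ max (EMetric.diam s) (EMetric.diam t) := by
  apply EMetric.diam_le
  rintro ⟨a, b⟩ ⟨ha, hb⟩ ⟨a', b'⟩ ⟨ha', hb'⟩
  rw [Prod.edist_eq]
  exact max_le_max (EMetric.edist_le_diam_of_mem ha ha')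
    (EMetric.edist_le_diam_of_mem hb hb')

lemma hausdorffMeasure_prod_Icc_zero {X : Type*} [MetricSpace X]
    [MeasurableSpace X] [BorelSpace X] [SecondCountableTopology X]
    (σ : ℝ≥0) (hσ : 0 < σ) (S : Set X) (hS : μH[(σ : ℝ)] S = 0) (c e : ℝ) :
    μH[(σ : ℝ) + 1] ((Icc c e) ×ˢ S : Set (ℝ × X)) = 0 := by
  rcases le_or_gt c e with hce | hce
  swap
  · rw [Set.Icc_eq_empty (not_le.mpr hce), Set.empty_prod, measure_empty]
  have hσR : (0 : ℝ) < (σ : ℝ) := hσ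
  refine le_antisymm ?_ zero_le
  refine ENNReal.le_of_forall_pos_le_add fun ε hε _ => ?_
  rw [zero_add]
  -- constants
  set B : ℝ≥0∞ := ENNReal.ofReal (e - c) with hBdef
  set M : ℝ≥0∞ := B + 1 with hMdef
  have hM0 : M ≠ 0 := by simp [hMdef]
  have hMt : M ≠ ∞ := by simp [hMdef, hBdef]
  set η : ℝ≥0∞ := (ε : ℝ≥0∞) / 2 / M with hηdef
  have hηt : η ≠ ∞ :=
    (ENNReal.div_lt_top (ENNReal.div_lt_top ENNReal.coe_ne_top two_ne_zero).ne hM0).ne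
  have hη : 0 < η := by
    refine ENNReal.div_pos (ne_of_gt (ENNReal.div_pos ?_ ?_)) hMt <;>
      simp [hε.ne', ENNReal.coe_ne_zero]
  set η' : ℝ := η.toReal / 4 with hη'def
  have hη'pos : 0 < η' := by
    have : 0 < η.toReal := ENNReal.toReal_pos hη.ne' hηt
    positivity
  -- covers for each scale
  have H : ∀ m : ℕ, ∃ t : ℕ → Set X, (S ⊆ ⋃ n, t n) ∧
      (∀ n, EMetric.diam (t n) ≤ ENNReal.ofReal (1 / (m + 1))) ∧
      ∑' n, EMetric.diam (t n) ^ (σ : ℝ) ≤ η := by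
    intro m
    refine exists_cover_of_hausdorffMeasure_zero hσR hS ?_ hη
    rw [ENNReal.ofReal_pos]
    positivity
  choose T hTcov hTdiam hTsum using H
  -- δ's
  have hρpos : ∀ m : ℕ, (0:ℝ) < 1 / (m + 1) := by intro m; positivity
  have hρle1 : ∀ m : ℕ, (1:ℝ) / (m + 1) ≤ 1 := by
    intro m
    rw [div_le_one (by positivity)]
    simp
  set D : ℕ → ℕ → ℝ := fun m n => (EMetric.diam (T m n)).toReal with hDdef
  have hDnt : ∀ m n, EMetric.diam (T m n) ≠ ∞ := fun m n =>
    ((hTdiam m n).trans_lt ENNReal.ofReal_lt_top).ne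
  have hD0 : ∀ m n, 0 ≤ D m n := fun m n => ENNReal.toReal_nonneg
  have hDρ : ∀ m n, D m n ≤ 1 / (m + 1) := fun m n =>
    ENNReal.toReal_le_of_le_ofReal (hρpos m).le (hTdiam m n)
  have hDof : ∀ m n, ENNReal.ofReal (D m n) = EMetric.diam (T m n) := fun m n =>
    ENNReal.ofReal_toReal (hDnt m n)
  set ν : ℕ → ℝ := fun n => (η' * (2⁻¹ : ℝ) ^ n) ^ (1 / (σ:ℝ)) with hνdef
  have hνpos : ∀ n, 0 < ν n := by
    intro n
    apply Real.rpow_pos_of_pos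
    positivity
  set δ : ℕ → ℕ → ℝ := fun m n => max (D m n) (min (ν n) (1 / (m+1))) with hδdef
  have hδpos : ∀ m n, 0 < δ m n :=
    fun m n => lt_max_of_lt_right (lt_min (hνpos n) (hρpos m))
  have hδρ : ∀ m n, δ m n ≤ 1 / (m+1) :=
    fun m n => max_le (hDρ m n) (min_le_right _ _)
  have hδ1 : ∀ m n, δ m n ≤ 1 := fun m n => (hδρ m n).trans (hρle1 m)
  -- the product covers
  set t' : ℕ → ℕ × ℕ → Set (ℝ × X) := fun m p =>
    (Icc (c + p.2 * δ m p.1) (c + (p.2 + 1) * δ m p.1) ∩ Icc c e) ×ˢ T m p.1 with ht'def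
  -- apply the liminf bound
  have key := MeasureTheory.Measure.hausdorffMeasure_le_liminf_tsum ((σ : ℝ) + 1)
    ((Icc c e) ×ˢ S : Set (ℝ × X)) (l := (atTop : Filter ℕ))
    (fun m : ℕ => ENNReal.ofReal (1 / (m + 1 : ℝ))) ?_ t' ?_ ?_
  · refine key.trans ?_
    have hbound : ∀ m : ℕ, (∑' (p : ℕ × ℕ), EMetric.diam (t' m p) ^ ((σ:ℝ) + 1)) ≤ ε := by
      intro m
      set N : ℕ → ℕ := fun n => ⌊(e - c) / δ m n⌋₊ + 1 with hNdef
      set P : ℕ → ℝ≥0∞ := fun n => ENNReal.ofReal (δ m n) with hPdef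
      have hP0 : ∀ n, P n ≠ 0 := fun n => by
        simp [hPdef, ENNReal.ofReal_pos, hδpos m n]
      have hPt : ∀ n, P n ≠ ∞ := fun n => ENNReal.ofReal_ne_top
      have hP1 : ∀ n, P n ≤ 1 := fun n => ENNReal.ofReal_le_one.mpr (hδ1 m n)
      rw [ENNReal.tsum_prod']
      have hinner : ∀ n, (∑' k : ℕ, EMetric.diam (t' m (n, k)) ^ ((σ:ℝ) + 1))
          ≤ (N n : ℝ≥0∞) * P n ^ ((σ:ℝ) + 1) := by
        intro n
        have hterm : ∀ k : ℕ, EMetric.diam (t' m (n, k)) ^ ((σ:ℝ) + 1)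
            ≤ if k < N n then P n ^ ((σ:ℝ) + 1) else 0 := by
          intro k
          by_cases hk : k < N n
          · rw [if_pos hk]
            refine ENNReal.rpow_le_rpow ?_ (by positivity)
            refine (ediam_prod_le' _ _).trans (max_le ?_ ?_)
            · refine le_trans (EMetric.diam_mono inter_subset_left) ?_
              rw [Real.ediam_Icc]
              apply ENNReal.ofReal_le_ofReal
              nlinarith [hδpos m n]
            · rw [← hDof m n]
              exact ENNReal.ofReal_le_ofReal (le_max_left _ _)
          · rw [if_neg hk]
            have hJ : Icc (c + (k:ℝ) * δ m n) (c + ((k:ℝ) + 1) * δ m n) ∩ Icc c e = ∅ := by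
              rw [eq_empty_iff_forall_notMem]
              rintro z ⟨⟨hz1, _⟩, _, hz2⟩
              have hkk : (k : ℝ) ≤ (e - c) / δ m n := by
                rw [le_div_iff₀ (hδpos m n)]
                nlinarith
              exact hk (Nat.lt_succ_of_le (Nat.le_floor hkk))
            have ht'e : t' m (n, k) = ∅ := by
              simp only [ht'def]
              norm_num [hJ]
            rw [ht'e, EMetric.diam, EMetric.diam_empty, ENNReal.zero_rpow_of_pos (by positivity)]
        calc (∑' k : ℕ, EMetric.diam (t' m (n, k)) ^ ((σ:ℝ) + 1))
            ≤ ∑' k : ℕ, (if k < N n then P n ^ ((σ:ℝ) + 1) else 0) :=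
              ENNReal.tsum_le_tsum hterm
          _ = ∑ k ∈ Finset.range (N n), (if k < N n then P n ^ ((σ:ℝ) + 1) else 0) := by
              refine tsum_eq_sum ?_
              intro k hk
              rw [if_neg (by simpa using hk)]
          _ = ∑ k ∈ Finset.range (N n), P n ^ ((σ:ℝ) + 1) :=
              Finset.sum_congr rfl fun k hk => if_pos (Finset.mem_range.mp hk)
          _ = (N n : ℝ≥0∞) * P n ^ ((σ:ℝ) + 1) := by
              rw [Finset.sum_const, Finset.card_range, nsmul_eq_mul]
      have hstep : ∀ n, (N n : ℝ≥0∞) * P n ^ ((σ:ℝ) + 1) ≤ M * P n ^ (σ:ℝ) := by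
        intro n
        have hrw : P n ^ ((σ:ℝ) + 1) = P n ^ (σ:ℝ) * P n := by
          rw [ENNReal.rpow_add _ _ (hP0 n) (hPt n), ENNReal.rpow_one]
        have hNle : (N n : ℝ≥0∞) ≤ ENNReal.ofReal ((e - c) / δ m n) + 1 := by
          have : ((⌊(e - c) / δ m n⌋₊ : ℕ) : ℝ≥0∞)
              = ENNReal.ofReal ((⌊(e - c) / δ m n⌋₊ : ℕ) : ℝ) :=
            (ENNReal.ofReal_natCast _).symm
          simp only [hNdef]
          push_cast
          rw [this]
          exact add_le_add_left (ENNReal.ofReal_le_ofReal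
            (Nat.floor_le (div_nonneg (by linarith) (hδpos m n).le))) 1
        calc (N n : ℝ≥0∞) * P n ^ ((σ:ℝ) + 1)
            ≤ (ENNReal.ofReal ((e - c) / δ m n) + 1) * (P n ^ (σ:ℝ) * P n) := by
              rw [← hrw]; exact mul_le_mul_left hNle _
          _ = ENNReal.ofReal ((e - c) / δ m n) * P n * P n ^ (σ:ℝ)
              + P n * P n ^ (σ:ℝ) := by ring
          _ ≤ B * P n ^ (σ:ℝ) + 1 * P n ^ (σ:ℝ) := by
              gcongr
              · rw [hPdef]
                simp only []
                rw [← ENNReal.ofReal_mul (div_nonneg (by linarith) (hδpos m n).le),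
                  div_mul_cancel₀ _ (hδpos m n).ne']
              · exact hP1 n
          _ = M * P n ^ (σ:ℝ) := by rw [hMdef]; ring
      have hPsum : (∑' n : ℕ, P n ^ (σ:ℝ)) ≤ η + η := by
        have hsplit : ∀ n : ℕ, P n ^ (σ:ℝ)
            ≤ EMetric.diam (T m n) ^ (σ:ℝ) + ENNReal.ofReal (η' * (2⁻¹:ℝ) ^ n) := by
          intro n
          rcases max_cases (D m n) (min (ν n) (1 / (m+1:ℝ))) with ⟨hmax, _⟩ | ⟨hmax, _⟩
          · have : P n = EMetric.diam (T m n) := by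
              rw [hPdef]; simp only [hδdef]; rw [hmax]; exact hDof m n
            rw [this]
            exact le_add_right le_rfl
          · have hPν : P n ≤ ENNReal.ofReal (ν n) := by
              rw [hPdef]; simp only [hδdef]; rw [hmax]
              exact ENNReal.ofReal_le_ofReal (min_le_left _ _)
            have hν : (ENNReal.ofReal (ν n)) ^ (σ:ℝ)
                = ENNReal.ofReal (η' * (2⁻¹:ℝ) ^ n) := by
              rw [ENNReal.ofReal_rpow_of_pos (hνpos n)]
              congr 1
              rw [hνdef]
              simp only []
              rw [← Real.rpow_mul (by positivity), one_div_mul_cancel hσR.ne',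
                Real.rpow_one]
            calc P n ^ (σ:ℝ) ≤ (ENNReal.ofReal (ν n)) ^ (σ:ℝ) :=
                  ENNReal.rpow_le_rpow hPν hσR.le
              _ = ENNReal.ofReal (η' * (2⁻¹:ℝ) ^ n) := hν
              _ ≤ EMetric.diam (T m n) ^ (σ:ℝ) + ENNReal.ofReal (η' * (2⁻¹:ℝ) ^ n) :=
                  le_add_left le_rfl
        calc (∑' n : ℕ, P n ^ (σ:ℝ))
            ≤ ∑' n : ℕ, (EMetric.diam (T m n) ^ (σ:ℝ)
                + ENNReal.ofReal (η' * (2⁻¹:ℝ) ^ n)) := ENNReal.tsum_le_tsum hsplit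
          _ = (∑' n : ℕ, EMetric.diam (T m n) ^ (σ:ℝ))
              + ∑' n : ℕ, ENNReal.ofReal (η' * (2⁻¹:ℝ) ^ n) := ENNReal.tsum_add
          _ ≤ η + η := by
              refine add_le_add (hTsum m) ?_
              have hgeo : (∑' n : ℕ, ENNReal.ofReal (η' * (2⁻¹:ℝ) ^ n))
                  = ENNReal.ofReal η' * 2 := by
                have : ∀ n : ℕ, ENNReal.ofReal (η' * (2⁻¹:ℝ) ^ n)
                    = ENNReal.ofReal η' * (2 : ℝ≥0∞)⁻¹ ^ n := by
                  intro n
                  rw [ENNReal.ofReal_mul hη'pos.le, ENNReal.ofReal_pow (by norm_num),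
                    ENNReal.ofReal_inv_of_pos (by norm_num), ENNReal.ofReal_ofNat]
                rw [tsum_congr this, ENNReal.tsum_mul_left, ENNReal.tsum_geometric,
                  ENNReal.one_sub_inv_two, inv_inv]
              rw [hgeo, hη'def]
              have h2 : ENNReal.ofReal (η.toReal / 4) * 2 ≤ ENNReal.ofReal η.toReal := by
                rw [← ENNReal.ofReal_ofNat 2,
                  ← ENNReal.ofReal_mul (by positivity : (0:ℝ) ≤ η.toReal / 4)]
                exact ENNReal.ofReal_le_ofReal
                  (by linarith [ENNReal.toReal_nonneg (a := η)])
              exact h2.trans_eq (ENNReal.ofReal_toReal hηt)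
      calc (∑' (n : ℕ) (k : ℕ), EMetric.diam (t' m (n, k)) ^ ((σ:ℝ) + 1))
          ≤ ∑' n : ℕ, (N n : ℝ≥0∞) * P n ^ ((σ:ℝ) + 1) := ENNReal.tsum_le_tsum hinner
        _ ≤ ∑' n : ℕ, M * P n ^ (σ:ℝ) := ENNReal.tsum_le_tsum hstep
        _ = M * ∑' n : ℕ, P n ^ (σ:ℝ) := ENNReal.tsum_mul_left
        _ ≤ M * (η + η) := mul_le_mul_right hPsum M
        _ = M * η + M * η := by ring
        _ = (ε : ℝ≥0∞) / 2 + (ε : ℝ≥0∞) / 2 := by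
            rw [hηdef, ENNReal.mul_div_cancel hM0 hMt]
        _ = (ε : ℝ≥0∞) := ENNReal.add_halves _
    calc Filter.liminf (fun m : ℕ => ∑' (p : ℕ × ℕ), EMetric.diam (t' m p) ^ ((σ:ℝ) + 1)) atTop
        ≤ Filter.liminf (fun _ : ℕ => (ε : ℝ≥0∞)) atTop :=
          Filter.liminf_le_liminf (Eventually.of_forall hbound)
      _ = (ε : ℝ≥0∞) := Filter.liminf_const _
  · -- r tends to 0
    have h0 : Tendsto (fun m : ℕ => (1 : ℝ) / (m + 1)) atTop (nhds 0) :=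
      tendsto_one_div_add_atTop_nhds_zero_nat
    have := (ENNReal.tendsto_ofReal h0)
    simpa using this
  · -- diameters
    refine Eventually.of_forall fun m => ?_
    rintro ⟨n, k⟩
    refine (ediam_prod_le' _ _).trans (max_le ?_ ?_)
    · refine le_trans (EMetric.diam_mono inter_subset_left) ?_
      rw [Real.ediam_Icc]
      apply ENNReal.ofReal_le_ofReal
      nlinarith [hδρ m n, hδpos m n]
    · exact hTdiam m n
  · -- covering
    refine Eventually.of_forall fun m => ?_
    rintro ⟨u, v⟩ ⟨huI, hvS⟩
    obtain ⟨n, hn⟩ : ∃ n, v ∈ T m n := by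
      have := hTcov m hvS
      simpa using this
    set k : ℕ := ⌊(u - c) / δ m n⌋₊ with hkdef
    have huc : 0 ≤ u - c := by linarith [huI.1]
    have hk1 : (k : ℝ) ≤ (u - c) / δ m n := Nat.floor_le (by positivity)
    have hk2 : (u - c) / δ m n < k + 1 := Nat.lt_floor_add_one _
    refine mem_iUnion.mpr ⟨(n, k), ⟨⟨?_, ?_⟩, huI⟩, hn⟩
    · have := (le_div_iff₀ (hδpos m n)).mp hk1
      simp only []
      linarith
    · have := (div_lt_iff₀ (hδpos m n)).mp hk2
      simp only []
      linarith

section Cone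

variable {d : ℕ}

local notation "E" => EuclideanSpace ℝ (Fin d)

lemma isCompact_segment' (x y : E) : IsCompact (segment ℝ x y) := by
  rw [segment_eq_image ℝ x y]
  exact isCompact_Icc.image (by fun_prop)

/-- The cone of segments from a point `a ∉ A` hitting `A` has dimension at most `dimH A + 1`. -/
lemma dimH_cone_le (A : Set E) (σ : ℝ≥0) (hσA : dimH A < σ)
    (a : E) (ha : a ∉ A) :
    dimH {b : E | (segment ℝ a b ∩ A).Nonempty} ≤ (σ : ℝ≥0∞) + 1 := by
  have hσ : 0 < σ := by
    by_contra h
    push_neg at h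
    simp only [le_zero_iff] at h
    subst h
    simp at hσA
  have hA0 : μH[(σ : ℝ)] A = 0 := by
    have := hausdorffMeasure_of_dimH_lt (s := A) (d := σ) hσA
    exact this
  set Φ : ℝ × E → E := fun p => a + p.1 • (p.2 - a) with hΦdef
  have hsub : {b : E | (segment ℝ a b ∩ A).Nonempty} ⊆
      ⋃ n : ℕ, Φ '' ((Icc (1:ℝ) (n+1)) ×ˢ (A ∩ closedBall a (n+1))) := by
    rintro b ⟨z, hzseg, hzA⟩
    obtain ⟨u, v, hu, hv, huv, hz⟩ := hzseg
    have hvpos : 0 < v := by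
      rcases hv.lt_or_eq with h | h
      · exact h
      · exfalso
        apply ha
        have hu1 : u = 1 := by linarith
        have : z = a := by rw [← hz, ← h, hu1]; simp
        rwa [← this]
    have hb : b = Φ (1 / v, z) := by
      simp only [hΦdef]
      have hza : z - a = v • (b - a) := by
        rw [← hz]
        have : u = 1 - v := by linarith
        rw [this]
        module
      rw [hza, smul_smul, one_div, inv_mul_cancel₀ hvpos.ne']
      module
    set n : ℕ := ⌈max (1 / v) (dist z a)⌉₊ with hndef
    refine mem_iUnion.mpr ⟨n, ⟨(1 / v, z), ⟨⟨?_, ?_⟩, hzA, ?_⟩, hb.symm⟩⟩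
    · rw [le_div_iff₀ hvpos]; linarith
    · calc (1 / v) ≤ max (1 / v) (dist z a) := le_max_left _ _
        _ ≤ ⌈max (1 / v) (dist z a)⌉₊ := Nat.le_ceil _
        _ ≤ (n : ℝ) + 1 := by rw [hndef]; linarith
    · rw [mem_closedBall]
      calc dist z a ≤ max (1 / v) (dist z a) := le_max_right _ _
        _ ≤ ⌈max (1 / v) (dist z a)⌉₊ := Nat.le_ceil _
        _ ≤ (n : ℝ) + 1 := by linarith
  refine (dimH_mono hsub).trans ?_
  rw [dimH_iUnion]
  refine iSup_le fun n => ?_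
  -- Lipschitz bound on the restricted cone map
  have hLip : LipschitzOnWith (⟨2 * (n+1), by positivity⟩ : ℝ≥0) Φ
      ((Icc (1:ℝ) (n+1)) ×ˢ (closedBall a (n+1))) := by
    apply LipschitzOnWith.of_dist_le_mul
    rintro ⟨s, z⟩ ⟨hs, hz⟩ ⟨s', z'⟩ ⟨hs', hz'⟩
    have hdist : dist (Φ (s, z)) (Φ (s', z'))
        = ‖(s - s') • (z - a) + s' • (z - z')‖ := by
      rw [dist_eq_norm]
      congr 1
      simp only [hΦdef]
      module
    rw [hdist]
    have h1 : ‖(s - s') • (z - a) + s' • (z - z')‖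
        ≤ |s - s'| * ‖z - a‖ + |s'| * ‖z - z'‖ := by
      refine (norm_add_le _ _).trans ?_
      rw [norm_smul, norm_smul]
      simp [Real.norm_eq_abs]
    have hza : ‖z - a‖ ≤ (n : ℝ) + 1 := by
      rw [← dist_eq_norm]; exact hz
    have hs'b : |s'| ≤ (n : ℝ) + 1 := by
      rw [abs_of_nonneg (by linarith [hs'.1] : (0:ℝ) ≤ s')]
      exact hs'.2
    have hd1 : |s - s'| ≤ dist (s, z) ((s', z') : ℝ × E) := by
      rw [Prod.dist_eq]
      exact le_max_of_le_left (by rw [Real.dist_eq])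
    have hd2 : ‖z - z'‖ ≤ dist (s, z) ((s', z') : ℝ × E) := by
      rw [Prod.dist_eq]
      exact le_max_of_le_right (by rw [dist_eq_norm])
    calc ‖(s - s') • (z - a) + s' • (z - z')‖
        ≤ |s - s'| * ‖z - a‖ + |s'| * ‖z - z'‖ := h1
      _ ≤ dist (s, z) ((s', z') : ℝ × E) * ((n:ℝ)+1)
          + ((n:ℝ)+1) * dist (s, z) ((s', z') : ℝ × E) := by
          refine add_le_add ?_ ?_
          · exact mul_le_mul hd1 hza (norm_nonneg _) dist_nonneg
          · exact mul_le_mul hs'b hd2 (norm_nonneg _) (by positivity)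
      _ = (⟨2 * (n+1), by positivity⟩ : ℝ≥0) * dist (s, z) ((s', z') : ℝ × E) := by
          push_cast
          ring
  have hLip' : LipschitzOnWith (⟨2 * (n+1), by positivity⟩ : ℝ≥0) Φ
      ((Icc (1:ℝ) (n+1)) ×ˢ (A ∩ closedBall a (n+1))) :=
    hLip.mono (prod_mono_right inter_subset_right)
  refine (hLip'.dimH_image_le).trans ?_
  -- dimension of the product
  have hprod : μH[(σ : ℝ) + 1]
      (((Icc (1:ℝ) (n+1)) ×ˢ (A ∩ closedBall a (n+1))) : Set (ℝ × E)) = 0 := by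
    refine hausdorffMeasure_prod_Icc_zero σ hσ _ ?_ 1 (n+1)
    exact measure_mono_null inter_subset_left hA0
  have : dimH (((Icc (1:ℝ) (n+1)) ×ˢ (A ∩ closedBall a (n+1))) : Set (ℝ × E))
      ≤ ((σ + 1 : ℝ≥0) : ℝ≥0∞) := by
    refine dimH_le_of_hausdorffMeasure_ne_top ?_
    have hcast : ((σ + 1 : ℝ≥0) : ℝ) = (σ : ℝ) + 1 := by push_cast; ring
    rw [hcast, hprod]
    exact ENNReal.zero_ne_top
  refine this.trans ?_
  rw [ENNReal.coe_add]
  simp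

end Cone


section Seg

variable {E' : Type*} [NormedAddCommGroup E'] [NormedSpace ℝ E']

lemma segment_approx {a b x y : E'} {δ : ℝ} (hδ : 0 ≤ δ)
    (hax : dist a x ≤ δ) (hby : dist b y ≤ δ) :
    ∀ z ∈ segment ℝ a b, ∃ w ∈ segment ℝ x y, dist z w ≤ δ := by
  rintro z ⟨u, v, hu, hv, huv, rfl⟩
  refine ⟨u • x + v • y, ⟨u, v, hu, hv, huv, rfl⟩, ?_⟩
  calc dist (u • a + v • b) (u • x + v • y)
      ≤ dist (u • a) (u • x) + dist (v • b) (v • y) := dist_add_add_le _ _ _ _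
    _ = |u| * dist a x + |v| * dist b y := by
        rw [dist_smul₀, dist_smul₀, Real.norm_eq_abs, Real.norm_eq_abs]
    _ ≤ u * δ + v * δ := by
        rw [abs_of_nonneg hu, abs_of_nonneg hv]
        refine add_le_add ?_ ?_ <;>
          exact mul_le_mul le_rfl (by assumption) dist_nonneg (by assumption)
    _ = δ := by rw [← add_mul, huv, one_mul]

end Seg

section Lim

variable {d : ℕ}

local notation "E" => EuclideanSpace ℝ (Fin d)

lemma isCompact_segment'' (x y : E) : IsCompact (segment ℝ x y) := by
  rw [segment_eq_image ℝ x y]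
  exact isCompact_Icc.image (by fun_prop)

lemma closure_meets_segment_of_approx (W : Set E) (x y : E)
    (h : ∀ δ : ℝ, 0 < δ →
      ∃ a b, dist a x ≤ δ ∧ dist b y ≤ δ ∧ (closure W ∩ segment ℝ a b).Nonempty) :
    (closure W ∩ segment ℝ x y).Nonempty := by
  set t : ℕ → Set E := fun n =>
    closure W ∩ cthickening (1 / (n + 1)) (segment ℝ x y) with htdef
  have hne : ∀ n, (t n).Nonempty := by
    intro n
    obtain ⟨a, b, hax, hby, q, hqW, hqseg⟩ := h (1 / (n + 1 : ℝ)) (by positivity)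
    obtain ⟨w, hw, hqw⟩ := segment_approx (by positivity) hax hby q hqseg
    exact ⟨q, hqW, mem_cthickening_of_dist_le q w _ _ hw hqw⟩
  have hdec : ∀ n, t (n + 1) ⊆ t n := by
    intro n
    refine inter_subset_inter le_rfl (cthickening_mono ?_ _)
    have h1 : (0:ℝ) < n + 1 := by positivity
    rw [div_le_div_iff₀ (by positivity) h1]
    push_cast
    linarith
  have hclosed : ∀ n, IsClosed (t n) :=
    fun n => isClosed_closure.inter isClosed_cthickening
  have hcpt : IsCompact (t 0) := by
    refine (isCompact_of_isClosed_isBounded isClosed_cthickening ?_).inter_left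
      isClosed_closure
    exact (isCompact_segment'' x y).isBounded.cthickening
  obtain ⟨q, hq⟩ := IsCompact.nonempty_iInter_of_sequence_nonempty_isCompact_isClosed
    t hdec hne hcpt hclosed
  simp only [mem_iInter, htdef, mem_inter_iff] at hq
  refine ⟨q, (hq 0).1, ?_⟩
  have hclseg : IsClosed (segment ℝ x y) := (isCompact_segment'' x y).isClosed
  have hinf : EMetric.infEdist q (segment ℝ x y) = 0 := by
    by_contra h0
    have hpos : 0 < EMetric.infEdist q (segment ℝ x y) := pos_iff_ne_zero.mpr h0
    obtain ⟨ε, hε0, hεlt⟩ := ENNReal.lt_iff_exists_nnreal_btwn.mp hpos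
    obtain ⟨n, hn⟩ := exists_nat_one_div_lt (ε := (ε : ℝ)) (by exact_mod_cast hε0)
    have := (hq n).2
    rw [mem_cthickening_iff] at this
    have hle : ENNReal.ofReal (1 / (n + 1 : ℝ)) < (ε : ℝ≥0∞) := by
      rw [← ENNReal.ofReal_coe_nnreal]
      exact ENNReal.ofReal_lt_ofReal_iff_of_nonneg (by positivity) |>.mpr hn
    exact absurd (this.trans_lt (hle.trans hεlt)) (lt_irrefl _)
  have : q ∈ closure (segment ℝ x y) := EMetric.mem_closure_iff_infEdist_zero.mpr hinf
  rwa [hclseg.closure_eq] at this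

end Lim

/-- **Lemma lem:connect.** Let `𝒰` be a countable collection of pairwise
disjoint open subsets of `ℝ^d` whose union of closures `K` is convex, such that `K` has full
Hausdorff dimension locally around every point of every `U ∈ 𝒰`, the union `A` of all triple
intersections of closures has Hausdorff dimension satisfying `dim_H A + 1 < dim_H K`, and
every compact set meets only finitely many members of `𝒰`. Calling `U₁, U₂` connected when
`(cl U₁ ∩ cl U₂) \ A ≠ ∅`, any `x ∈ cl U` and `y ∈ cl V` (for `U, V ∈ 𝒰`) are joined by a
finite sequence of pairwise connected members of `𝒰` whose closures all meet the segment
`[x, y]`. -/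
theorem stmt19 (d : ℕ) (𝒰 : Set (Set (EuclideanSpace ℝ (Fin d))))
    (hcount : 𝒰.Countable)
    (hopen : ∀ U ∈ 𝒰, IsOpen U)
    (hdisj : 𝒰.Pairwise Disjoint)
    (hconv : Convex ℝ (⋃ U ∈ 𝒰, closure U))
    (hdim : ∀ U ∈ 𝒰, ∀ y ∈ U, ∀ ε : ℝ, 0 < ε →
      dimH ((⋃ U' ∈ 𝒰, closure U') ∩ Metric.closedBall y ε) =
        dimH (⋃ U' ∈ 𝒰, closure U'))
    (hA : dimH (⋃ U ∈ 𝒰, ⋃ V ∈ 𝒰, ⋃ W ∈ 𝒰,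
        ⋃ (_ : U ≠ V), ⋃ (_ : V ≠ W), ⋃ (_ : U ≠ W),
          closure U ∩ closure V ∩ closure W) + 1 <
      dimH (⋃ U ∈ 𝒰, closure U))
    (hfin : ∀ W : Set (EuclideanSpace ℝ (Fin d)), IsCompact W →
      {U ∈ 𝒰 | (U ∩ W).Nonempty}.Finite)
    (U V : Set (EuclideanSpace ℝ (Fin d))) (hU : U ∈ 𝒰) (hV : V ∈ 𝒰)
    (x y : EuclideanSpace ℝ (Fin d)) (hx : x ∈ closure U) (hy : y ∈ closure V) :
    ∃ (k : ℕ) (f : Fin (k + 1) → Set (EuclideanSpace ℝ (Fin d))),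
      f 0 = U ∧ f (Fin.last k) = V ∧ (∀ i, f i ∈ 𝒰) ∧
      (∀ i : Fin k,
        ((closure (f i.castSucc) ∩ closure (f i.succ)) \
          (⋃ U' ∈ 𝒰, ⋃ V' ∈ 𝒰, ⋃ W' ∈ 𝒰,
            ⋃ (_ : U' ≠ V'), ⋃ (_ : V' ≠ W'), ⋃ (_ : U' ≠ W'),
              closure U' ∩ closure V' ∩ closure W')).Nonempty) ∧
      (∀ i, (closure (f i) ∩ segment ℝ x y).Nonempty) := by
  classical
  set K : Set (EuclideanSpace ℝ (Fin d)) := ⋃ U' ∈ 𝒰, closure U' with hKdef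
  set A : Set (EuclideanSpace ℝ (Fin d)) := ⋃ U' ∈ 𝒰, ⋃ V' ∈ 𝒰, ⋃ W' ∈ 𝒰,
      ⋃ (_ : U' ≠ V'), ⋃ (_ : V' ≠ W'), ⋃ (_ : U' ≠ W'),
        closure U' ∩ closure V' ∩ closure W' with hAdef
  -- dimension bookkeeping
  have hKle : dimH K ≤ (d : ℝ≥0∞) := by
    refine (dimH_mono (subset_univ K)).trans ?_
    rw [Real.dimH_univ_eq_finrank (EuclideanSpace ℝ (Fin d))]
    simp [finrank_euclideanSpace_fin]
  have hAK : dimH A + 1 < dimH K := hA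
  have hAd : dimH A < (d : ℝ≥0∞) := lt_of_lt_of_le (lt_of_le_of_lt le_self_add hAK) hKle
  obtain ⟨r, hr1, hr2⟩ := ENNReal.lt_iff_exists_nnreal_btwn.mp hAK
  have hr1' : (1 : ℝ≥0) ≤ r := by
    have h1 : (1 : ℝ≥0∞) ≤ (r : ℝ≥0∞) := le_trans le_add_self hr1.le
    exact_mod_cast h1
  set σ : ℝ≥0 := r - 1 with hσdef
  have hσ1 : σ + 1 = r := tsub_add_cancel_of_le hr1'
  have hσK : (σ : ℝ≥0∞) + 1 < dimH K := by
    have : ((σ + 1 : ℝ≥0) : ℝ≥0∞) < dimH K := by rw [hσ1]; exact hr2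
    rwa [ENNReal.coe_add, ENNReal.coe_one] at this
  have hσA : dimH A < (σ : ℝ≥0∞) := by
    have h1 : dimH A + 1 < (σ : ℝ≥0∞) + 1 := by
      have : ((σ + 1 : ℝ≥0) : ℝ≥0∞) = (σ : ℝ≥0∞) + 1 := by
        rw [ENNReal.coe_add, ENNReal.coe_one]
      rw [← this, hσ1]
      exact hr1
    exact (ENNReal.add_lt_add_iff_right ENNReal.one_ne_top).mp h1
  -- the compact tube
  set T : Set (EuclideanSpace ℝ (Fin d)) := cthickening 2 (segment ℝ x y) with hTdef
  have hTc : IsCompact T :=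
    isCompact_of_isClosed_isBounded isClosed_cthickening
      ((isCompact_segment'' x y).isBounded.cthickening)
  set Fs : Set (Set (EuclideanSpace ℝ (Fin d))) := {U' ∈ 𝒰 | (U' ∩ T).Nonempty} with hFsdef
  have hFsfin : Fs.Finite := hfin T hTc
  have hFsmem : ∀ W' ∈ 𝒰, ∀ q ∈ closure W',
      q ∈ cthickening 1 (segment ℝ x y) → W' ∈ Fs := by
    intro W' hW' q hq hq1
    refine ⟨hW', ?_⟩
    obtain ⟨w, hwW, hwq⟩ := Metric.mem_closure_iff.mp hq 1 one_pos
    refine ⟨w, hwW, ?_⟩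
    rw [hTdef, mem_cthickening_iff]
    rw [mem_cthickening_iff] at hq1
    calc EMetric.infEdist w (segment ℝ x y)
        ≤ edist w q + EMetric.infEdist q (segment ℝ x y) :=
          EMetric.infEdist_le_edist_add_infEdist
      _ ≤ ENNReal.ofReal 1 + ENNReal.ofReal 1 := by
          refine add_le_add ?_ hq1
          rw [edist_dist]
          exact ENNReal.ofReal_le_ofReal (by rw [dist_comm]; exact hwq.le)
      _ = ENNReal.ofReal 2 := by
          rw [← ENNReal.ofReal_add] <;> norm_num
  have hUF : U ∈ Fs :=
    hFsmem U hU x hx (self_subset_cthickening _ (left_mem_segment ℝ x y))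
  have hVF : V ∈ Fs :=
    hFsmem V hV y hy (self_subset_cthickening _ (right_mem_segment ℝ x y))
  haveI : Finite ↥Fs := hFsfin.to_subtype
  haveI : Fintype ↥Fs := Fintype.ofFinite _
  haveI : DecidableEq ↥Fs := Classical.decEq _
  set G : SimpleGraph ↥Fs :=
    { Adj := fun W W' => W ≠ W' ∧
        ((closure (W : Set (EuclideanSpace ℝ (Fin d))) ∩ closure (W' : Set (EuclideanSpace ℝ (Fin d)))) \ A).Nonempty,
      symm := by
        constructor
        rintro W W' ⟨h1, z, hz1, hz2⟩
        exact ⟨h1.symm, z, ⟨hz1.2, hz1.1⟩, hz2⟩,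
      loopless := ⟨fun W h => h.1 rfl⟩ } with hGdef
  haveI : DecidableRel G.Adj := Classical.decRel _
  set Uv : ↥Fs := ⟨U, hUF⟩ with hUvdef
  set Vv : ↥Fs := ⟨V, hVF⟩ with hVvdef
  -- key step : approximate chains
  have key : ∀ ε : ℝ, 0 < ε → ε ≤ 1 → ∃ (p : G.Path Uv Vv) (a b : EuclideanSpace ℝ (Fin d)),
      dist a x ≤ ε ∧ dist b y ≤ ε ∧
      ∀ W' ∈ (p.1 : G.Walk Uv Vv).support,
        (closure (W' : Set (EuclideanSpace ℝ (Fin d))) ∩ segment ℝ a b).Nonempty := by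
    intro ε hε hε1
    -- pick a ∈ U near x avoiding A
    obtain ⟨x₀, hx₀U, hxx₀⟩ := Metric.mem_closure_iff.mp hx (ε/2) (by positivity)
    obtain ⟨r₁, hr₁pos, hr₁sub⟩ := Metric.isOpen_iff.mp (hopen U hU) x₀ hx₀U
    set ρ₁ : ℝ := min r₁ (ε/2) with hρ₁def
    have hρ₁pos : 0 < ρ₁ := lt_min hr₁pos (by positivity)
    have hball₁U : ball x₀ ρ₁ ⊆ U := (ball_subset_ball (min_le_left _ _)).trans hr₁sub
    have hball₁x : ∀ w ∈ ball x₀ ρ₁, dist w x ≤ ε := by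
      intro w hw
      rw [mem_ball] at hw
      have h1 : dist w x₀ < ε/2 := lt_of_lt_of_le hw (min_le_right _ _)
      have h2 : dist x₀ x < ε/2 := by rw [dist_comm]; exact hxx₀
      calc dist w x ≤ dist w x₀ + dist x₀ x := dist_triangle _ _ _
        _ ≤ ε := by linarith
    obtain ⟨a, haB, haA⟩ : ∃ a ∈ ball x₀ ρ₁, a ∉ A := by
      by_contra h
      push_neg at h
      have h1 : dimH (ball x₀ ρ₁) ≤ dimH A := dimH_mono h
      rw [Real.dimH_of_mem_nhds (ball_mem_nhds x₀ hρ₁pos)] at h1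
      simp only [finrank_euclideanSpace_fin] at h1
      exact absurd (h1.trans_lt hAd) (lt_irrefl _)
    have haU : a ∈ U := hball₁U haB
    have hax : dist a x ≤ ε := hball₁x a haB
    -- pick b ∈ V near y avoiding the bad cone
    obtain ⟨y₀, hy₀V, hyy₀⟩ := Metric.mem_closure_iff.mp hy (ε/2) (by positivity)
    obtain ⟨r₂, hr₂pos, hr₂sub⟩ := Metric.isOpen_iff.mp (hopen V hV) y₀ hy₀V
    set ρ₂ : ℝ := min r₂ (ε/2) with hρ₂def
    have hρ₂pos : 0 < ρ₂ := lt_min hr₂pos (by positivity)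
    have hball₂V : ball y₀ ρ₂ ⊆ V := (ball_subset_ball (min_le_left _ _)).trans hr₂sub
    have hball₂y : ∀ w ∈ ball y₀ ρ₂, dist w y ≤ ε := by
      intro w hw
      rw [mem_ball] at hw
      have h1 : dist w y₀ < ε/2 := lt_of_lt_of_le hw (min_le_right _ _)
      have h2 : dist y₀ y < ε/2 := by rw [dist_comm]; exact hyy₀
      calc dist w y ≤ dist w y₀ + dist y₀ y := dist_triangle _ _ _
        _ ≤ ε := by linarith
    set Bad : Set (EuclideanSpace ℝ (Fin d)) := {b : EuclideanSpace ℝ (Fin d) | (segment ℝ a b ∩ A).Nonempty} with hBaddef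
    have hBadle : dimH Bad ≤ (σ : ℝ≥0∞) + 1 := dimH_cone_le A σ hσA a haA
    obtain ⟨b, hbB, hbBad⟩ : ∃ b ∈ ball y₀ ρ₂, b ∉ Bad := by
      by_contra h
      push_neg at h
      have h1 : dimH (ball y₀ ρ₂) ≤ dimH Bad := dimH_mono h
      rw [Real.dimH_of_mem_nhds (ball_mem_nhds y₀ hρ₂pos)] at h1
      simp only [finrank_euclideanSpace_fin] at h1
      exact absurd ((h1.trans hBadle).trans_lt (hσK.trans_le hKle)) (lt_irrefl _)
    have hbV : b ∈ V := hball₂V hbB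
    have hby : dist b y ≤ ε := hball₂y b hbB
    have hsegA : ∀ z ∈ segment ℝ a b, z ∉ A := fun z hz hzA => hbBad ⟨z, hz, hzA⟩
    have hsegK : segment ℝ a b ⊆ K :=
      hconv.segment_subset (mem_iUnion₂.mpr ⟨U, hU, subset_closure haU⟩)
        (mem_iUnion₂.mpr ⟨V, hV, subset_closure hbV⟩)
    have hsegT : ∀ z ∈ segment ℝ a b, z ∈ cthickening 1 (segment ℝ x y) := by
      intro z hz
      obtain ⟨w, hw, hzw⟩ :=
        segment_approx (le_of_lt one_pos) (hax.trans hε1) (hby.trans hε1) z hz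
      exact mem_cthickening_of_dist_le z w 1 _ hw hzw
    have hFsOf : ∀ W' ∈ 𝒰, (closure W' ∩ segment ℝ a b).Nonempty → W' ∈ Fs := by
      rintro W' hW' ⟨q, hq1, hq2⟩
      exact hFsmem W' hW' q hq1 (hsegT q hq2)
    -- reachability predicate
    set P : ↥Fs → Prop := fun Wv => ∃ q : G.Walk Uv Wv,
      ∀ X ∈ q.support, (closure (X : Set (EuclideanSpace ℝ (Fin d))) ∩ segment ℝ a b).Nonempty with hPdef
    have hPU : P Uv := by
      refine ⟨SimpleGraph.Walk.nil, ?_⟩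
      intro X hX
      rw [SimpleGraph.Walk.support_nil, List.mem_singleton] at hX
      subst hX
      exact ⟨a, subset_closure haU, left_mem_segment ℝ a b⟩
    set S₁ : Set (EuclideanSpace ℝ (Fin d)) := ⋃ (Wv : ↥Fs) (_ : P Wv),
      (closure (Wv : Set (EuclideanSpace ℝ (Fin d))) ∩ segment ℝ a b) with hS₁def
    set S₂ : Set (EuclideanSpace ℝ (Fin d)) := ⋃ (Wv : ↥Fs) (_ : ¬ P Wv),
      (closure (Wv : Set (EuclideanSpace ℝ (Fin d))) ∩ segment ℝ a b) with hS₂def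
    have hsegcl : IsClosed (segment ℝ a b) := (isCompact_segment'' a b).isClosed
    have hS₁closed : IsClosed S₁ := by
      refine Set.Finite.isClosed_biUnion (Set.toFinite _) ?_
      exact fun W _ => isClosed_closure.inter hsegcl
    have hS₂closed : IsClosed S₂ := by
      refine Set.Finite.isClosed_biUnion (Set.toFinite _) ?_
      exact fun W _ => isClosed_closure.inter hsegcl
    have hcover : segment ℝ a b ⊆ S₁ ∪ S₂ := by
      intro z hz
      have hzK := hsegK hz
      rw [hKdef] at hzK
      obtain ⟨W', hW', hzW'⟩ := mem_iUnion₂.mp hzK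
      have hWFs : W' ∈ Fs := hFsOf W' hW' ⟨z, hzW', hz⟩
      by_cases hP : P ⟨W', hWFs⟩
      · exact Or.inl (mem_iUnion₂.mpr ⟨⟨W', hWFs⟩, hP, hzW', hz⟩)
      · exact Or.inr (mem_iUnion₂.mpr ⟨⟨W', hWFs⟩, hP, hzW', hz⟩)
    have hdisjS : ∀ z, z ∈ S₁ → z ∈ S₂ → False := by
      intro z hz1 hz2
      obtain ⟨Wv, hPW, hzW, hzseg⟩ := mem_iUnion₂.mp hz1
      obtain ⟨Wv', hPW', hzW', -⟩ := mem_iUnion₂.mp hz2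
      have hzA : z ∉ A := hsegA z hzseg
      have hne : Wv ≠ Wv' := by rintro rfl; exact hPW' hPW
      have hadj : G.Adj Wv Wv' := ⟨hne, ⟨z, ⟨hzW, hzW'⟩, hzA⟩⟩
      obtain ⟨q, hq⟩ := hPW
      refine hPW' ⟨q.concat hadj, ?_⟩
      intro X hX
      rw [SimpleGraph.Walk.support_concat,
        List.mem_append, List.mem_singleton] at hX
      rcases hX with h | h
      · exact hq X h
      · subst h
        exact ⟨z, hzW', hzseg⟩
    -- identify the element containing a point of U (resp. V)
    have hident : ∀ (Wv : ↥Fs) (W'' : Set (EuclideanSpace ℝ (Fin d))), W'' ∈ 𝒰 → ∀ z, z ∈ W'' →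
        z ∈ closure (Wv : Set (EuclideanSpace ℝ (Fin d))) → Wv.1 = W'' := by
      intro Wv W'' hW'' z hzW hzcl
      by_contra hne
      obtain ⟨w, hw1, hw2⟩ :=
        (_root_.mem_closure_iff.mp hzcl W'' (hopen W'' hW'') hzW)
      exact Set.disjoint_left.mp (hdisj Wv.2.1 hW'' hne) hw2 hw1
    have hVP : P Vv := by
      by_cases hbS1 : b ∈ S₁
      · obtain ⟨Wv, hPW, hbW, -⟩ := mem_iUnion₂.mp hbS1
        have heq : Wv = Vv := Subtype.ext (hident Wv V hV b hbV hbW)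
        rwa [heq] at hPW
      · exfalso
        have haS2 : a ∉ S₂ := by
          intro hmem
          obtain ⟨Wv, hnP, haW, -⟩ := mem_iUnion₂.mp hmem
          have heq : Wv = Uv := Subtype.ext (hident Wv U hU a haU haW)
          rw [heq] at hnP
          exact hnP hPU
        have hsub : segment ℝ a b ⊆ S₂ᶜ ∪ S₁ᶜ := by
          intro z hz
          by_cases h2 : z ∈ S₂
          · exact Or.inr (fun h1 => hdisjS z h1 h2)
          · exact Or.inl h2
        obtain ⟨z, hzseg, hz2, hz1⟩ := (convex_segment a b).isPreconnected S₂ᶜ S₁ᶜ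
          hS₂closed.isOpen_compl hS₁closed.isOpen_compl hsub
          ⟨a, left_mem_segment ℝ a b, haS2⟩ ⟨b, right_mem_segment ℝ a b, hbS1⟩
        exact (hcover hzseg).elim hz1 hz2
    obtain ⟨q, hq⟩ := hVP
    exact ⟨q.toPath, a, b, hax, hby,
      fun W' hW' => hq W' (SimpleGraph.Walk.support_bypass_subset _ hW')⟩
  -- pigeonhole over shrinking scales
  have hex : ∀ n : ℕ, ∃ (p : G.Path Uv Vv) (a b : EuclideanSpace ℝ (Fin d)),
      dist a x ≤ 1/(n+1) ∧ dist b y ≤ 1/(n+1) ∧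
      ∀ W' ∈ (p.1 : G.Walk Uv Vv).support,
        (closure (W' : Set (EuclideanSpace ℝ (Fin d))) ∩ segment ℝ a b).Nonempty := by
    intro n
    refine key (1/(n+1)) (by positivity) ?_
    rw [div_le_one (by positivity)]
    simp
  choose F Fa Fb hFa hFb hFsupp using hex
  obtain ⟨p₀, hp₀⟩ := Finite.exists_infinite_fiber F
  have hI : (F ⁻¹' {p₀}).Infinite := Set.infinite_coe_iff.mp hp₀
  have hsegmeet : ∀ W' ∈ (p₀.1 : G.Walk Uv Vv).support,
      (closure (W' : Set (EuclideanSpace ℝ (Fin d))) ∩ segment ℝ x y).Nonempty := by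
    intro W' hW'
    apply closure_meets_segment_of_approx
    intro δ hδ
    obtain ⟨m, hm⟩ := exists_nat_one_div_lt hδ
    obtain ⟨n, hnI, hmn⟩ := hI.exists_gt m
    have hle : 1/(n+1:ℝ) ≤ δ := by
      have h1 : 1/(n+1:ℝ) ≤ 1/(m+1:ℝ) := by
        apply one_div_le_one_div_of_le (by positivity)
        have : (m:ℝ) < n := by exact_mod_cast hmn
        linarith
      linarith
    have hFn : F n = p₀ := hnI
    refine ⟨Fa n, Fb n, (hFa n).trans hle, (hFb n).trans hle, ?_⟩
    refine hFsupp n W' ?_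
    rw [hFn]
    exact hW'
  refine ⟨(p₀.1 : G.Walk Uv Vv).length,
    fun i => ((p₀.1 : G.Walk Uv Vv).getVert (i : ℕ) : Set (EuclideanSpace ℝ (Fin d))),
    ?_, ?_, ?_, ?_, ?_⟩
  · simp only [Fin.val_zero, SimpleGraph.Walk.getVert_zero]
    rfl
  · simp only [Fin.val_last, SimpleGraph.Walk.getVert_length]
    rfl
  · intro i
    exact ((p₀.1 : G.Walk Uv Vv).getVert (i : ℕ)).2.1
  · intro i
    have hadj := (p₀.1 : G.Walk Uv Vv).adj_getVert_succ (i := (i : ℕ)) i.isLt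
    have h2 := hadj.2
    simpa [Fin.coe_castSucc, Fin.val_succ] using h2
  · intro i
    apply hsegmeet
    rw [SimpleGraph.Walk.mem_support_iff_exists_getVert]
    exact ⟨(i : ℕ), rfl, Nat.lt_succ_iff.mp i.isLt⟩
end
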